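/- arXiv:1504.07411 — 7 statements merged into one kernel-verified Lean document; each statement's English description precedes it below -/
import Mathlib

section
/- For any subsets A, B of the nonnegative integers enumerated increasingly as A = {a_1 < a_2 < ...} and B = {b_1 < b_2 < ...}, and any x, we have s_B(x) ≤ s_A(x + 2·d_{A,B}(x)) · (4·d_{A,B}(x) + 1), where R_A(n) = #{(i,j) : i ≤ j, a_i + a_j = n}, s_A(x) = max_{n ≤ x} R_A(n), and d_{A,B}(x) = max over indices t with a_t ≤ x or b_t ≤ x of |a_t − b_t|. -/
open Filter

/-- Number of representations of `n` as `a i + a j`, `i ≤ j` (indices into the sequence `a`).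
Since `a` is strictly increasing in all uses, `a i ≥ i`, so indices are bounded by `n`. -/
def Rf (a : ℕ → ℕ) (n : ℕ) : ℕ :=
  ((Finset.range (n+1) ×ˢ Finset.range (n+1)).filter
    (fun p => p.1 ≤ p.2 ∧ a p.1 + a p.2 = n)).card

/-- `s_A(x) = max_{n ≤ x} R_A(n)`. -/
def sf (a : ℕ → ℕ) (x : ℕ) : ℕ := (Finset.range (x+1)).sup (Rf a)

/-- `d_{A,B}(x) = max_{t : a_t ≤ x ∨ b_t ≤ x} |a_t - b_t|`. For strictly increasing
sequences any such index `t` satisfies `t ≤ x`. -/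
def df (a b : ℕ → ℕ) (x : ℕ) : ℕ :=
  (Finset.range (x+1)).sup (fun t => if a t ≤ x ∨ b t ≤ x then Nat.dist (a t) (b t) else 0)

/-- Number of representations of `n` as `p + q` with `p ≤ q`, `p, q ∈ A`. -/
noncomputable def RS (A : Set ℕ) (n : ℕ) : ℕ :=
  Nat.card {p : ℕ × ℕ // p.1 ∈ A ∧ p.2 ∈ A ∧ p.1 ≤ p.2 ∧ p.1 + p.2 = n}

/-- `s_A(x) = max_{n ≤ x} R_A(n)` for a set `A`. -/
noncomputable def sS (A : Set ℕ) (x : ℕ) : ℕ := (Finset.range (x+1)).sup (RS A)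

theorem stmt0 (a b : ℕ → ℕ) (ha : StrictMono a) (hb : StrictMono b) (x : ℕ) :
    sf b x ≤ sf a (x + 2 * df a b x) * (4 * df a b x + 1) := by
  set d := df a b x with hd
  have hdist : ∀ i, b i ≤ x → Nat.dist (a i) (b i) ≤ d := by
    intro i hbi
    have hi : i ≤ x := le_trans hb.le_apply hbi
    have h := Finset.le_sup (f := fun t => if a t ≤ x ∨ b t ≤ x then Nat.dist (a t) (b t) else 0)
      (Finset.mem_range.mpr (Nat.lt_succ_of_le hi))
    simp only [hbi, or_true, if_true] at h
    exact le_trans h (le_of_eq rfl)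
  unfold sf
  apply Finset.sup_le
  intro n hn
  rw [Finset.mem_range, Nat.lt_succ_iff] at hn
  set S := (Finset.range (n+1) ×ˢ Finset.range (n+1)).filter
    (fun p => p.1 ≤ p.2 ∧ b p.1 + b p.2 = n) with hS
  have key : ∀ p ∈ S, a p.1 + a p.2 ∈ Finset.Icc (n - 2*d) (n + 2*d) := by
    intro p hp
    rw [hS, Finset.mem_filter] at hp
    obtain ⟨_, hle, hsum⟩ := hp
    have h1 : b p.1 ≤ x := le_trans (le_trans (Nat.le_add_right _ _) hsum.le) hn
    have h2 : b p.2 ≤ x := le_trans (le_trans (Nat.le_add_left _ _) hsum.le) hn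
    have d1 := hdist p.1 h1
    have d2 := hdist p.2 h2
    have e1 : Nat.dist (a p.1) (b p.1) = (a p.1 - b p.1) + (b p.1 - a p.1) := rfl
    have e2 : Nat.dist (a p.2) (b p.2) = (a p.2 - b p.2) + (b p.2 - a p.2) := rfl
    rw [Finset.mem_Icc]
    omega
  have hcard : Rf b n = ∑ m ∈ Finset.Icc (n - 2*d) (n + 2*d),
      (S.filter (fun p => a p.1 + a p.2 = m)).card := by
    rw [Rf, ← hS]
    exact Finset.card_eq_sum_card_fiberwise key
  have hbound : ∀ m ∈ Finset.Icc (n - 2*d) (n + 2*d),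
      (S.filter (fun p => a p.1 + a p.2 = m)).card ≤ sf a (x + 2*d) := by
    intro m hm
    rw [Finset.mem_Icc] at hm
    have hsub : (S.filter (fun p => a p.1 + a p.2 = m)) ⊆
        (Finset.range (m+1) ×ˢ Finset.range (m+1)).filter
          (fun p => p.1 ≤ p.2 ∧ a p.1 + a p.2 = m) := by
      intro p hp
      rw [Finset.mem_filter, hS, Finset.mem_filter] at hp
      obtain ⟨⟨_, hle, _⟩, hm'⟩ := hp
      have g1 : p.1 ≤ m := le_trans ha.le_apply (le_trans (Nat.le_add_right _ _) hm'.le)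
      have g2 : p.2 ≤ m := le_trans ha.le_apply (le_trans (Nat.le_add_left _ _) hm'.le)
      rw [Finset.mem_filter, Finset.mem_product, Finset.mem_range, Finset.mem_range]
      exact ⟨⟨Nat.lt_succ_of_le g1, Nat.lt_succ_of_le g2⟩, hle, hm'⟩
    have h1 : (S.filter (fun p => a p.1 + a p.2 = m)).card ≤ Rf a m :=
      Finset.card_le_card hsub
    have h2 : Rf a m ≤ sf a (x + 2*d) :=
      Finset.le_sup (Finset.mem_range.mpr (Nat.lt_succ_of_le (le_trans hm.2 (by omega))))
    exact le_trans h1 h2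
  calc Rf b n = _ := hcard
    _ ≤ (Finset.Icc (n - 2*d) (n + 2*d)).card * sf a (x + 2*d) := by
        have := Finset.sum_le_card_nsmul _ _ _ hbound
        simpa using this
    _ ≤ (4*d+1) * sf a (x + 2*d) := by
        rw [Nat.card_Icc]
        apply Nat.mul_le_mul_right
        omega
    _ = sf a (x + 2*d) * (4*d+1) := Nat.mul_comm _ _
end

section
/- If A, B ⊆ ℕ satisfy s_A = lim_{x→∞} s_A(x) < ∞ and d_{A,B} = lim_{x→∞} d_{A,B}(x) < ∞, then s_A/(4·d_{A,B}+1) ≤ s_B ≤ (4·d_{A,B}+1)·s_A. -/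
open Filter

lemma Rf_le_of_sf (a : ℕ → ℕ) (sA : ℕ) (hsA : ∀ᶠ x in atTop, sf a x = sA) :
    ∀ n, Rf a n ≤ sA := by
  obtain ⟨N, hN⟩ := eventually_atTop.mp hsA
  intro n
  have hx : sf a (max n N) = sA := hN _ (le_max_right _ _)
  calc Rf a n ≤ sf a (max n N) :=
        Finset.le_sup (Finset.mem_range.mpr (Nat.lt_succ_of_le (le_max_left n N)))
    _ = sA := hx

lemma exists_Rf_eq (a : ℕ → ℕ) (sA : ℕ) (hsA : ∀ᶠ x in atTop, sf a x = sA) :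
    ∃ n, Rf a n = sA := by
  obtain ⟨N, hN⟩ := eventually_atTop.mp hsA
  have hx : sf a N = sA := hN N le_rfl
  obtain ⟨n, -, hn⟩ := Finset.exists_mem_eq_sup (Finset.range (N+1))
    (Finset.nonempty_range_add_one) (Rf a)
  exact ⟨n, by rw [← hn, ← sf, hx]⟩

lemma dist_le_of_df (a b : ℕ → ℕ) (dAB : ℕ) (hd : ∀ᶠ x in atTop, df a b x = dAB) :
    ∀ t, Nat.dist (a t) (b t) ≤ dAB := by
  obtain ⟨N, hN⟩ := eventually_atTop.mp hd
  intro t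
  set x := max N (max t (a t)) with hxdef
  have hdf : df a b x = dAB := hN x (le_max_left _ _)
  have hmem : t ∈ Finset.range (x+1) := by
    apply Finset.mem_range.mpr
    have : t ≤ x := le_trans (le_max_left t (a t)) (le_max_right _ _)
    omega
  have hax : a t ≤ x := le_trans (le_max_right t (a t)) (le_max_right _ _)
  have hle := Finset.le_sup (f := fun t => if a t ≤ x ∨ b t ≤ x then Nat.dist (a t) (b t) else 0)
    hmem
  rw [← hdf]
  simp [hax] at hle
  exact hle

lemma key_lemma (a b : ℕ → ℕ) (hb : StrictMono b) (d sB : ℕ)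
    (hdist : ∀ t, Nat.dist (a t) (b t) ≤ d)
    (hRb : ∀ m, Rf b m ≤ sB) (n : ℕ) : Rf a n ≤ (4 * d + 1) * sB := by
  classical
  set S := ((Finset.range (n+1) ×ˢ Finset.range (n+1)).filter
    (fun p => p.1 ≤ p.2 ∧ a p.1 + a p.2 = n)) with hS
  have hmap : ∀ p ∈ S, b p.1 + b p.2 ∈ Finset.Icc (n - 2*d) (n + 2*d) := by
    intro p hp
    simp only [hS, Finset.mem_filter] at hp
    obtain ⟨-, hle, heq⟩ := hp
    have h1 := hdist p.1
    have h2 := hdist p.2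
    simp only [Nat.dist] at h1 h2
    simp only [Finset.mem_Icc]
    omega
  have hcard : S.card = ∑ m ∈ Finset.Icc (n - 2*d) (n + 2*d),
      (S.filter (fun p => b p.1 + b p.2 = m)).card :=
    Finset.card_eq_sum_card_fiberwise hmap
  have hfib : ∀ m, (S.filter (fun p => b p.1 + b p.2 = m)).card ≤ Rf b m := by
    intro m
    apply Finset.card_le_card
    intro p hp
    simp only [hS, Finset.mem_filter, Finset.mem_product, Finset.mem_range] at hp ⊢
    obtain ⟨⟨-, hle, -⟩, heq⟩ := hp
    have h1 : p.1 ≤ b p.1 := hb.le_apply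
    have h2 : p.2 ≤ b p.2 := hb.le_apply
    exact ⟨⟨by omega, by omega⟩, hle, heq⟩
  calc Rf a n = S.card := rfl
    _ = _ := hcard
    _ ≤ ∑ _m ∈ Finset.Icc (n - 2*d) (n + 2*d), sB :=
        Finset.sum_le_sum (fun m _ => (hfib m).trans (hRb m))
    _ = (Finset.Icc (n - 2*d) (n + 2*d)).card * sB := by
        rw [Finset.sum_const, smul_eq_mul]
    _ ≤ (4 * d + 1) * sB := by
        apply Nat.mul_le_mul_right
        rw [Nat.card_Icc]
        omega

theorem stmt2 (a b : ℕ → ℕ) (ha : StrictMono a) (hb : StrictMono b)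
    (sA sB dAB : ℕ)
    (hsA : ∀ᶠ x in atTop, sf a x = sA)
    (hsB : ∀ᶠ x in atTop, sf b x = sB)
    (hd : ∀ᶠ x in atTop, df a b x = dAB) :
    sA ≤ (4 * dAB + 1) * sB ∧ sB ≤ (4 * dAB + 1) * sA := by
  have hdist := dist_le_of_df a b dAB hd
  have hdist' : ∀ t, Nat.dist (b t) (a t) ≤ dAB := fun t => by
    rw [Nat.dist_comm]; exact hdist t
  have hRa := Rf_le_of_sf a sA hsA
  have hRb := Rf_le_of_sf b sB hsB
  obtain ⟨n, hn⟩ := exists_Rf_eq a sA hsA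
  obtain ⟨m, hm⟩ := exists_Rf_eq b sB hsB
  constructor
  · rw [← hn]; exact key_lemma a b hb dAB sB hdist hRb n
  · rw [← hm]; exact key_lemma b a ha dAB sA hdist' hRa m
end

section
/- For all positive integers a, b, d with a/(4d+1) ≤ b ≤ (4d+1)·a, there exist sets A, B ⊆ ℕ such that s_A = a, s_B = b, and d_{A,B} = d. -/
open Filter


namespace Stmt3Aux


def KC (d : ℕ) : ℕ := 100 * (d + 1)
def KL (b d : ℕ) : ℕ := KC d * 5 ^ b
def KN (b d : ℕ) : ℕ := 100 * KL b d
def KT (b d : ℕ) : ℕ := 25 * KN b d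

def seqF (b d : ℕ) (u v : ℕ → ℕ) (w : ℕ) (t : ℕ) : ℕ :=
  if t < b then KC d * 5 ^ t + u t
  else if t < 2 * b then (KN b d - KC d * 5 ^ (2 * b - 1 - t)) + v (2 * b - 1 - t)
  else KT b d * 25 ^ (t - 2 * b) + (if t = 2 * b then w else 0)

lemma one_le_pow5 (n : ℕ) : 1 ≤ 5 ^ n := Nat.one_le_pow _ _ (by norm_num)

lemma pow5_le {x y : ℕ} (h : x ≤ y) : (5:ℕ) ^ x ≤ 5 ^ y :=
  Nat.pow_le_pow_right (by norm_num) h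

lemma pow5_succ_le {x y : ℕ} (h : x < y) : (5:ℕ) ^ x * 5 ≤ 5 ^ y := by
  have := pow5_le (Nat.succ_le_of_lt h)
  rwa [pow_succ] at this

lemma sort5 (x y : ℕ) : (5:ℕ) ^ x + 5 ^ y = 5 ^ min x y + 5 ^ max x y := by
  rcases le_total x y with h | h
  · rw [min_eq_left h, max_eq_right h]
  · rw [min_eq_right h, max_eq_left h, Nat.add_comm]

lemma gap_sorted {x y x' y' : ℕ} (h1 : x ≤ y) (h2 : x' ≤ y')
    (h : (5:ℕ) ^ x + 5 ^ y < 5 ^ x' + 5 ^ y') : 5 ^ x + 5 ^ y + 4 ≤ 5 ^ x' + 5 ^ y' := by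
  rcases lt_trichotomy y y' with hy | hy | hy
  · have p1 : (5:ℕ) ^ x ≤ 5 ^ y := pow5_le h1
    have p2 : (5:ℕ) ^ y * 5 ≤ 5 ^ y' := pow5_succ_le hy
    have p3 : 1 ≤ (5:ℕ) ^ x' := one_le_pow5 _
    have p4 : 1 ≤ (5:ℕ) ^ y := one_le_pow5 _
    linarith
  · subst hy
    have hx : x < x' := by
      by_contra hc
      push_neg at hc
      have := pow5_le hc
      linarith
    have p2 : (5:ℕ) ^ x * 5 ≤ 5 ^ x' := pow5_succ_le hx
    have p4 : 1 ≤ (5:ℕ) ^ x := one_le_pow5 _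
    linarith
  · exfalso
    have p1 : (5:ℕ) ^ x' ≤ 5 ^ y' := pow5_le h2
    have p2 : (5:ℕ) ^ y' * 5 ≤ 5 ^ y := pow5_succ_le hy
    have p4 : 1 ≤ (5:ℕ) ^ y' := one_le_pow5 _
    have p5 : 1 ≤ (5:ℕ) ^ x := one_le_pow5 _
    linarith

lemma eq_sorted {x y x' y' : ℕ} (h1 : x ≤ y) (h2 : x' ≤ y')
    (h : (5:ℕ) ^ x + 5 ^ y = 5 ^ x' + 5 ^ y') : x = x' ∧ y = y' := by
  rcases lt_trichotomy y y' with hy | hy | hy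
  · exfalso
    have p1 : (5:ℕ) ^ x ≤ 5 ^ y := pow5_le h1
    have p2 : (5:ℕ) ^ y * 5 ≤ 5 ^ y' := pow5_succ_le hy
    have p3 : 1 ≤ (5:ℕ) ^ x' := one_le_pow5 _
    have p4 : 1 ≤ (5:ℕ) ^ y := one_le_pow5 _
    linarith
  · subst hy
    have hxx : (5:ℕ) ^ x = 5 ^ x' := by linarith
    exact ⟨Nat.pow_right_injective (by norm_num) hxx, rfl⟩
  · exfalso
    have p1 : (5:ℕ) ^ x' ≤ 5 ^ y' := pow5_le h2
    have p2 : (5:ℕ) ^ y' * 5 ≤ 5 ^ y := pow5_succ_le hy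
    have p4 : 1 ≤ (5:ℕ) ^ y' := one_le_pow5 _
    have p5 : 1 ≤ (5:ℕ) ^ x := one_le_pow5 _
    linarith

lemma pow_eq_cases {x y x' y' : ℕ} (h : (5:ℕ) ^ x + 5 ^ y = 5 ^ x' + 5 ^ y') :
    (x = x' ∧ y = y') ∨ (x = y' ∧ y = x') := by
  rcases le_total x y with h1 | h1 <;> rcases le_total x' y' with h2 | h2
  · exact Or.inl (eq_sorted h1 h2 h)
  · have h' : (5:ℕ) ^ x + 5 ^ y = 5 ^ y' + 5 ^ x' := by linarith
    obtain ⟨e1, e2⟩ := eq_sorted h1 h2 h'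
    exact Or.inr ⟨e1, e2⟩
  · have h' : (5:ℕ) ^ y + 5 ^ x = 5 ^ x' + 5 ^ y' := by linarith
    obtain ⟨e1, e2⟩ := eq_sorted h1 h2 h'
    exact Or.inr ⟨e2, e1⟩
  · have h' : (5:ℕ) ^ y + 5 ^ x = 5 ^ y' + 5 ^ x' := by linarith
    obtain ⟨e1, e2⟩ := eq_sorted h1 h2 h'
    exact Or.inl ⟨e2, e1⟩

lemma key_eq {d x y x' y' e e' : ℕ} (he : e ≤ 4 * d) (he' : e' ≤ 4 * d)
    (h : KC d * 5 ^ x + KC d * 5 ^ y + e = KC d * 5 ^ x' + KC d * 5 ^ y' + e') :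
    (5:ℕ) ^ x + 5 ^ y = 5 ^ x' + 5 ^ y' := by
  by_contra hne
  have hKC : KC d = 100 * d + 100 := by unfold KC; ring
  have hK4 : KC d * 4 = 400 * d + 400 := by rw [hKC]; ring
  have hd1 : KC d * (5 ^ x + 5 ^ y) = KC d * 5 ^ x + KC d * 5 ^ y := by ring
  have hd2 : KC d * (5 ^ x' + 5 ^ y') = KC d * 5 ^ x' + KC d * 5 ^ y' := by ring
  have hmul : ∀ s s' : ℕ, s + 4 ≤ s' → KC d * s + KC d * 4 ≤ KC d * s' := by
    intro s s' hss
    calc KC d * s + KC d * 4 = KC d * (s + 4) := by ring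
      _ ≤ KC d * s' := Nat.mul_le_mul le_rfl hss
  rcases Nat.lt_or_ge (5 ^ x + 5 ^ y) ((5:ℕ) ^ x' + 5 ^ y') with hlt | hge
  · have hg : (5:ℕ) ^ x + 5 ^ y + 4 ≤ 5 ^ x' + 5 ^ y' := by
      rw [sort5 x y, sort5 x' y'] at hlt ⊢
      exact gap_sorted min_le_max min_le_max hlt
    have := hmul _ _ hg
    linarith
  · have hlt' : (5:ℕ) ^ x' + 5 ^ y' < 5 ^ x + 5 ^ y :=
      lt_of_le_of_ne hge (fun hc => hne hc.symm)
    have hg : (5:ℕ) ^ x' + 5 ^ y' + 4 ≤ 5 ^ x + 5 ^ y := by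
      rw [sort5 x y, sort5 x' y'] at hlt' ⊢
      exact gap_sorted min_le_max min_le_max hlt'
    have := hmul _ _ hg
    linarith


lemma two_b_le_KL (b d : ℕ) : 2 * b ≤ KL b d := by
  have hKC : KC d = 100 * d + 100 := by unfold KC; ring
  have hb5 : b < 5 ^ b := Nat.lt_pow_self (by norm_num)
  have h2 : 2 * 5 ^ b ≤ KC d * 5 ^ b := Nat.mul_le_mul (by omega) le_rfl
  have h3 : KL b d = KC d * 5 ^ b := rfl
  generalize (5:ℕ) ^ b = P at hb5 h2 h3
  omega

section

variable {b d : ℕ} {u v : ℕ → ℕ} {w : ℕ}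

lemma hKC_eq : KC d = 100 * d + 100 := by unfold KC; ring

lemma cpow_ge {p : ℕ} : KC d ≤ KC d * 5 ^ p := by
  calc KC d = KC d * 1 := (mul_one _).symm
    _ ≤ KC d * 5 ^ p := Nat.mul_le_mul le_rfl (one_le_pow5 p)

lemma hKCL : KC d ≤ KL b d := by
  unfold KL; exact cpow_ge

lemma cpow_le {p : ℕ} (hp : p < b) : KC d * 5 ^ p * 5 ≤ KL b d := by
  unfold KL
  calc KC d * 5 ^ p * 5 = KC d * (5 ^ p * 5) := by ring
    _ ≤ KC d * 5 ^ b := Nat.mul_le_mul le_rfl (pow5_succ_le hp)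

lemma cpow_le' {p : ℕ} (hp : p < b) : KC d * 5 ^ p ≤ KL b d := by
  calc KC d * 5 ^ p = KC d * 5 ^ p * 1 := (mul_one _).symm
    _ ≤ KC d * 5 ^ p * 5 := Nat.mul_le_mul le_rfl (by norm_num)
    _ ≤ KL b d := cpow_le hp

lemma hdKL : d ≤ KL b d := le_trans (by have := hKC_eq (d := d); omega) hKCL

lemma hKLN : KL b d ≤ KN b d := by
  have : KN b d = 100 * KL b d := rfl
  omega

lemma hKNT : KN b d ≤ KT b d := by
  have : KT b d = 25 * KN b d := rfl
  omega

lemma seq_low_eq {t : ℕ} (ht : t < b) : seqF b d u v w t = KC d * 5 ^ t + u t := by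
  unfold seqF; rw [if_pos ht]

lemma seq_high_eq {t : ℕ} (ht1 : b ≤ t) (ht2 : t < 2 * b) :
    seqF b d u v w t = (KN b d - KC d * 5 ^ (2 * b - 1 - t)) + v (2 * b - 1 - t) := by
  unfold seqF; rw [if_neg (by omega), if_pos ht2]

lemma seq_tail_eq {t : ℕ} (ht : 2 * b ≤ t) :
    seqF b d u v w t = KT b d * 25 ^ (t - 2 * b) + (if t = 2 * b then w else 0) := by
  unfold seqF; rw [if_neg (by omega), if_neg (by omega)]

lemma seq_low_le (hu : ∀ p, u p ≤ 2 * d) {t : ℕ} (ht : t < b) :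
    seqF b d u v w t ≤ KL b d := by
  rw [seq_low_eq ht]
  have h1 := cpow_le (b := b) (d := d) ht
  have h2 := cpow_ge (d := d) (p := t)
  have h3 := hu t
  have h4 : KC d = 100 * d + 100 := hKC_eq
  generalize hX : KC d * 5 ^ t = X at h1 h2 ⊢
  omega

lemma seq_high_le (hv : ∀ p, v p ≤ 2 * d) {t : ℕ} (ht1 : b ≤ t) (ht2 : t < 2 * b) :
    seqF b d u v w t ≤ KN b d + 2 * d := by
  rw [seq_high_eq ht1 ht2]
  have h3 := hv (2 * b - 1 - t)
  generalize hX : KC d * 5 ^ (2 * b - 1 - t) = X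
  omega

lemma seq_high_ge {t : ℕ} (ht1 : b ≤ t) (ht2 : t < 2 * b) :
    KN b d ≤ seqF b d u v w t + KL b d := by
  rw [seq_high_eq ht1 ht2]
  have h1 := cpow_le' (b := b) (d := d) (show 2 * b - 1 - t < b by omega)
  generalize hX : KC d * 5 ^ (2 * b - 1 - t) = X at h1 ⊢
  omega

lemma seq_nontail_le (hu : ∀ p, u p ≤ 2 * d) (hv : ∀ p, v p ≤ 2 * d) {t : ℕ}
    (ht : t < 2 * b) : seqF b d u v w t ≤ KN b d + 2 * d := by
  rcases Nat.lt_or_ge t b with h | h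
  · have := seq_low_le (v := v) (w := w) hu h
    have := hKLN (b := b) (d := d)
    omega
  · exact seq_high_le hv h ht

lemma seq_tail_ge' {t : ℕ} (ht : 2 * b ≤ t) :
    KT b d * 25 ^ (t - 2 * b) ≤ seqF b d u v w t := by
  rw [seq_tail_eq ht]; exact Nat.le_add_right _ _

lemma seq_tail_ge {t : ℕ} (ht : 2 * b ≤ t) : KT b d ≤ seqF b d u v w t := by
  refine le_trans ?_ (seq_tail_ge' ht)
  calc KT b d = KT b d * 1 := (mul_one _).symm
    _ ≤ KT b d * 25 ^ (t - 2 * b) := Nat.mul_le_mul le_rfl (Nat.one_le_pow _ _ (by norm_num))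

lemma seq_tail_le (hw : w ≤ d) {t : ℕ} (ht : 2 * b ≤ t) :
    seqF b d u v w t ≤ KT b d * 25 ^ (t - 2 * b) + d := by
  rw [seq_tail_eq ht]
  have hwle : (if t = 2 * b then w else 0) ≤ d := by
    split_ifs
    exacts [hw, Nat.zero_le _]
  generalize KT b d * 25 ^ (t - 2 * b) = X at hwle ⊢
  omega

lemma seq_mono (hb : 0 < b) (hu : ∀ p, u p ≤ 2 * d) (hv : ∀ p, v p ≤ 2 * d) (hw : w ≤ d) :
    StrictMono (seqF b d u v w) := by
  apply strictMono_nat_of_lt_succ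
  intro t
  have hKC : KC d = 100 * d + 100 := hKC_eq
  have hLN : KL b d ≤ KN b d := hKLN
  have hNT : KN b d ≤ KT b d := hKNT
  have hdL : d ≤ KL b d := hdKL
  have hNL : KN b d = 100 * KL b d := rfl
  have hTN : KT b d = 25 * KN b d := rfl
  have hCL : KC d ≤ KL b d := hKCL
  rcases Nat.lt_or_ge (t + 1) b with h1 | h1
  · rw [seq_low_eq (show t < b by omega), seq_low_eq h1]
    have hX : KC d * 5 ^ t * 5 = KC d * 5 ^ (t + 1) := by rw [pow_succ]; ring
    have hX1 := cpow_ge (d := d) (p := t)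
    have hut := hu t
    have hut1 := hu (t + 1)
    rw [← hX]
    generalize KC d * 5 ^ t = X at hX1 ⊢
    omega
  · rcases Nat.lt_or_ge t b with h2 | h2
    · have hlow := seq_low_le (v := v) (w := w) hu h2
      have hhigh := seq_high_ge (b := b) (d := d) (u := u) (v := v) (w := w) (show b ≤ t + 1 by omega)
        (show t + 1 < 2 * b by omega)
      omega
    · rcases Nat.lt_or_ge t (2 * b) with h3 | h3
      · rcases Nat.lt_or_ge (t + 1) (2 * b) with h4 | h4
        · rw [seq_high_eq h2 h3, seq_high_eq (by omega) h4]
          have e1 : 2 * b - 1 - t = (2 * b - 1 - (t + 1)) + 1 := by omega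
          rw [e1]
          have hX : KC d * 5 ^ (2 * b - 1 - (t + 1)) * 5
              = KC d * 5 ^ ((2 * b - 1 - (t + 1)) + 1) := by rw [pow_succ]; ring
          have hle : KC d * 5 ^ ((2 * b - 1 - (t + 1)) + 1) ≤ KL b d := cpow_le' (by omega)
          have hX1 := cpow_ge (d := d) (p := 2 * b - 1 - (t + 1))
          have hv1 := hv (2 * b - 1 - (t + 1))
          have hv2 := hv ((2 * b - 1 - (t + 1)) + 1)
          rw [← hX] at hle ⊢
          generalize KC d * 5 ^ (2 * b - 1 - (t + 1)) = X at hle hX1 ⊢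
          omega
        · have ht1 : t + 1 = 2 * b := by omega
          have hhl := seq_high_le (u := u) (w := w) hv h2 h3
          rw [ht1, seq_tail_eq (le_refl (2 * b))]
          rw [Nat.sub_self, pow_zero, mul_one, if_pos rfl]
          omega
      · rw [seq_tail_eq h3, seq_tail_eq (by omega)]
        have e1 : t + 1 - 2 * b = (t - 2 * b) + 1 := by omega
        rw [e1, pow_succ, if_neg (show ¬ t + 1 = 2 * b by omega)]
        have hsp : KT b d * (25 ^ (t - 2 * b) * 25) = KT b d * 25 ^ (t - 2 * b) * 25 := by
          ring
        rw [hsp]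
        have h0 : KT b d ≤ KT b d * 25 ^ (t - 2 * b) := by
          calc KT b d = KT b d * 1 := (mul_one _).symm
            _ ≤ KT b d * 25 ^ (t - 2 * b) :=
                Nat.mul_le_mul le_rfl (Nat.one_le_pow _ _ (by norm_num))
        have hwle : (if t = 2 * b then w else 0) ≤ d := by
          split_ifs
          exacts [hw, Nat.zero_le _]
        generalize KT b d * 25 ^ (t - 2 * b) = Z at h0 hwle ⊢
        omega

lemma crux (hb : 0 < b) (hu : ∀ p, u p ≤ 2 * d) (hv : ∀ p, v p ≤ 2 * d) (hw : w ≤ d)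
    {i j i' j' : ℕ} (hij : i ≤ j) (hij' : i' ≤ j')
    (hs : seqF b d u v w i + seqF b d u v w j = seqF b d u v w i' + seqF b d u v w j') :
    (i = i' ∧ j = j') ∨
      (i < b ∧ i' < b ∧ j = 2 * b - 1 - i ∧ j' = 2 * b - 1 - i' ∧
        u i + v i = u i' + v i') := by
  have hKC : KC d = 100 * d + 100 := hKC_eq
  have hLN : KL b d ≤ KN b d := hKLN
  have hNT : KN b d ≤ KT b d := hKNT
  have hdL : d ≤ KL b d := hdKL
  have hNL : KN b d = 100 * KL b d := rfl
  have hTN : KT b d = 25 * KN b d := rfl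
  have hCL : KC d ≤ KL b d := hKCL
  rcases Nat.lt_or_ge j (2 * b) with hj2 | hj2
  · rcases Nat.lt_or_ge j' (2 * b) with hj2' | hj2'
    · rcases Nat.lt_or_ge j b with hjb | hjb <;> rcases Nat.lt_or_ge j' b with hjb' | hjb'
      · -- low-low vs low-low
        left
        have hib : i < b := by omega
        have hib' : i' < b := by omega
        rw [seq_low_eq hib, seq_low_eq hjb, seq_low_eq hib', seq_low_eq hjb'] at hs
        have hkeyeq : KC d * 5 ^ i + KC d * 5 ^ j + (u i + u j)
            = KC d * 5 ^ i' + KC d * 5 ^ j' + (u i' + u j') := by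
          generalize KC d * 5 ^ i = X1 at hs ⊢
          generalize KC d * 5 ^ j = X2 at hs ⊢
          generalize KC d * 5 ^ i' = X3 at hs ⊢
          generalize KC d * 5 ^ j' = X4 at hs ⊢
          omega
        have hpow := key_eq (by have := hu i; have := hu j; omega)
          (by have := hu i'; have := hu j'; omega) hkeyeq
        exact eq_sorted hij hij' hpow
      · -- low-low vs low-high : impossible
        exfalso
        have hib : i < b := by omega
        have b1 := seq_low_le (v := v) (w := w) hu hib
        have b2 := seq_low_le (v := v) (w := w) hu hjb
        have b3 := seq_high_ge (b := b) (d := d) (u := u) (v := v) (w := w) hjb' hj2'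
        have b4 := Nat.zero_le (seqF b d u v w i')
        omega
      · -- low-high vs low-low : impossible
        exfalso
        have hib' : i' < b := by omega
        have b1 := seq_low_le (v := v) (w := w) hu hib'
        have b2 := seq_low_le (v := v) (w := w) hu hjb'
        have b3 := seq_high_ge (b := b) (d := d) (u := u) (v := v) (w := w) hjb hj2
        have b4 := Nat.zero_le (seqF b d u v w i)
        omega
      · -- both j, j' high
        rcases Nat.lt_or_ge i b with hib | hib <;> rcases Nat.lt_or_ge i' b with hib' | hib'
        · -- low-high vs low-high : main designed case
          rw [seq_low_eq hib, seq_low_eq hib', seq_high_eq hjb hj2,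
            seq_high_eq hjb' hj2'] at hs
          have hp : 2 * b - 1 - j < b := by omega
          have hp' : 2 * b - 1 - j' < b := by omega
          have hXp : KC d * 5 ^ (2 * b - 1 - j) ≤ KN b d := le_trans (cpow_le' hp) hLN
          have hXp' : KC d * 5 ^ (2 * b - 1 - j') ≤ KN b d := le_trans (cpow_le' hp') hLN
          have hkeyeq : KC d * 5 ^ i + KC d * 5 ^ (2 * b - 1 - j')
                + (u i + v (2 * b - 1 - j))
              = KC d * 5 ^ i' + KC d * 5 ^ (2 * b - 1 - j)
                + (u i' + v (2 * b - 1 - j')) := by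
            generalize KC d * 5 ^ i = X1 at hs ⊢
            generalize KC d * 5 ^ i' = X2 at hs ⊢
            generalize KC d * 5 ^ (2 * b - 1 - j) = X3 at hs hXp ⊢
            generalize KC d * 5 ^ (2 * b - 1 - j') = X4 at hs hXp' ⊢
            omega
          have hpow := key_eq (by have := hu i; have := hv (2 * b - 1 - j); omega)
            (by have := hu i'; have := hv (2 * b - 1 - j'); omega) hkeyeq
          rcases pow_eq_cases hpow with ⟨e1, e2⟩ | ⟨e1, e2⟩
          · left
            exact ⟨e1, by omega⟩
          · right
            refine ⟨hib, hib', by omega, by omega, ?_⟩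
            have hv1 : v (2 * b - 1 - j) = v i := by rw [← e1]
            have hv2 : v (2 * b - 1 - j') = v i' := by rw [e2]
            have hP1 : KC d * 5 ^ (2 * b - 1 - j) = KC d * 5 ^ i := by rw [← e1]
            have hP2 : KC d * 5 ^ (2 * b - 1 - j') = KC d * 5 ^ i' := by rw [e2]
            rw [hP1, hP2, hv1, hv2] at hkeyeq
            generalize KC d * 5 ^ i = X1 at hkeyeq
            generalize KC d * 5 ^ i' = X2 at hkeyeq
            omega
        · -- low-high vs high-high : impossible
          exfalso
          have b1 := seq_low_le (v := v) (w := w) hu hib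
          have b2 := seq_high_le (u := u) (w := w) hv hjb hj2
          have b3 := seq_high_ge (b := b) (d := d) (u := u) (v := v) (w := w) hib' (by omega)
          have b4 := seq_high_ge (b := b) (d := d) (u := u) (v := v) (w := w) hjb' hj2'
          omega
        · -- high-high vs low-high : impossible
          exfalso
          have b1 := seq_low_le (v := v) (w := w) hu hib'
          have b2 := seq_high_le (u := u) (w := w) hv hjb' hj2'
          have b3 := seq_high_ge (b := b) (d := d) (u := u) (v := v) (w := w) hib (by omega)
          have b4 := seq_high_ge (b := b) (d := d) (u := u) (v := v) (w := w) hjb hj2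
          omega
        · -- high-high vs high-high
          left
          have hi2 : i < 2 * b := by omega
          have hi2' : i' < 2 * b := by omega
          rw [seq_high_eq hib hi2, seq_high_eq hjb hj2, seq_high_eq hib' hi2',
            seq_high_eq hjb' hj2'] at hs
          have hq : 2 * b - 1 - i < b := by omega
          have hp : 2 * b - 1 - j < b := by omega
          have hq' : 2 * b - 1 - i' < b := by omega
          have hp' : 2 * b - 1 - j' < b := by omega
          have hXq : KC d * 5 ^ (2 * b - 1 - i) ≤ KN b d := le_trans (cpow_le' hq) hLN
          have hXp : KC d * 5 ^ (2 * b - 1 - j) ≤ KN b d := le_trans (cpow_le' hp) hLN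
          have hXq' : KC d * 5 ^ (2 * b - 1 - i') ≤ KN b d := le_trans (cpow_le' hq') hLN
          have hXp' : KC d * 5 ^ (2 * b - 1 - j') ≤ KN b d := le_trans (cpow_le' hp') hLN
          have hkeyeq : KC d * 5 ^ (2 * b - 1 - i') + KC d * 5 ^ (2 * b - 1 - j')
                + (v (2 * b - 1 - i) + v (2 * b - 1 - j))
              = KC d * 5 ^ (2 * b - 1 - i) + KC d * 5 ^ (2 * b - 1 - j)
                + (v (2 * b - 1 - i') + v (2 * b - 1 - j')) := by
            generalize KC d * 5 ^ (2 * b - 1 - i) = X1 at hs hXq ⊢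
            generalize KC d * 5 ^ (2 * b - 1 - j) = X2 at hs hXp ⊢
            generalize KC d * 5 ^ (2 * b - 1 - i') = X3 at hs hXq' ⊢
            generalize KC d * 5 ^ (2 * b - 1 - j') = X4 at hs hXp' ⊢
            omega
          have hpow := key_eq (by have := hv (2 * b - 1 - i); have := hv (2 * b - 1 - j); omega)
            (by have := hv (2 * b - 1 - i'); have := hv (2 * b - 1 - j'); omega) hkeyeq
          have hpow' : (5:ℕ) ^ (2 * b - 1 - j') + 5 ^ (2 * b - 1 - i')
              = 5 ^ (2 * b - 1 - j) + 5 ^ (2 * b - 1 - i) := by linarith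
          obtain ⟨f1, f2⟩ := eq_sorted (show 2 * b - 1 - j' ≤ 2 * b - 1 - i' by omega)
            (show 2 * b - 1 - j ≤ 2 * b - 1 - i by omega) hpow'
          constructor <;> omega
    · -- j nontail, j' tail : impossible
      exfalso
      have b1 := seq_nontail_le (w := w) hu hv (show i < 2 * b by omega)
      have b2 := seq_nontail_le (w := w) hu hv hj2
      have b3 := seq_tail_ge (b := b) (d := d) (u := u) (v := v) (w := w) hj2'
      have b4 := Nat.zero_le (seqF b d u v w i')
      omega
  · rcases Nat.lt_or_ge j' (2 * b) with hj2' | hj2'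
    · -- j tail, j' nontail : impossible
      exfalso
      have b1 := seq_nontail_le (w := w) hu hv (show i' < 2 * b by omega)
      have b2 := seq_nontail_le (w := w) hu hv hj2'
      have b3 := seq_tail_ge (b := b) (d := d) (u := u) (v := v) (w := w) hj2
      have b4 := Nat.zero_le (seqF b d u v w i)
      omega
    · -- both tails
      rcases lt_trichotomy j j' with hjj | hjj | hjj
      · exfalso
        have h1 := seq_tail_le (u := u) (v := v) (hw := hw) hj2
        have hmono := (seq_mono hb hu hv hw).monotone hij
        have h2 : KT b d * 25 ^ (j - 2 * b) * 25 ≤ KT b d * 25 ^ (j' - 2 * b) := by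
          calc KT b d * 25 ^ (j - 2 * b) * 25 = KT b d * (25 ^ (j - 2 * b) * 25) := by ring
            _ = KT b d * 25 ^ ((j - 2 * b) + 1) := by rw [pow_succ]
            _ ≤ KT b d * 25 ^ (j' - 2 * b) :=
                Nat.mul_le_mul le_rfl (Nat.pow_le_pow_right (by norm_num) (by omega))
        have h3 := seq_tail_ge' (d := d) (u := u) (v := v) (w := w) hj2'
        have h4 : KT b d ≤ KT b d * 25 ^ (j - 2 * b) := by
          calc KT b d = KT b d * 1 := (mul_one _).symm
            _ ≤ KT b d * 25 ^ (j - 2 * b) :=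
                Nat.mul_le_mul le_rfl (Nat.one_le_pow _ _ (by norm_num))
        have h5 := Nat.zero_le (seqF b d u v w i')
        generalize KT b d * 25 ^ (j - 2 * b) = Z at h1 h2 h4
        generalize KT b d * 25 ^ (j' - 2 * b) = Z' at h2 h3
        omega
      · subst hjj
        have hii : seqF b d u v w i = seqF b d u v w i' := by omega
        left
        exact ⟨(seq_mono hb hu hv hw).injective hii, rfl⟩
      · exfalso
        have h1 := seq_tail_le (u := u) (v := v) (hw := hw) hj2'
        have hmono := (seq_mono hb hu hv hw).monotone hij'
        have h2 : KT b d * 25 ^ (j' - 2 * b) * 25 ≤ KT b d * 25 ^ (j - 2 * b) := by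
          calc KT b d * 25 ^ (j' - 2 * b) * 25 = KT b d * (25 ^ (j' - 2 * b) * 25) := by ring
            _ = KT b d * 25 ^ ((j' - 2 * b) + 1) := by rw [pow_succ]
            _ ≤ KT b d * 25 ^ (j - 2 * b) :=
                Nat.mul_le_mul le_rfl (Nat.pow_le_pow_right (by norm_num) (by omega))
        have h3 := seq_tail_ge' (d := d) (u := u) (v := v) (w := w) hj2
        have h4 : KT b d ≤ KT b d * 25 ^ (j' - 2 * b) := by
          calc KT b d = KT b d * 1 := (mul_one _).symm
            _ ≤ KT b d * 25 ^ (j' - 2 * b) :=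
                Nat.mul_le_mul le_rfl (Nat.one_le_pow _ _ (by norm_num))
        have h5 := Nat.zero_le (seqF b d u v w i)
        generalize KT b d * 25 ^ (j' - 2 * b) = Z at h1 h2 h4
        generalize KT b d * 25 ^ (j - 2 * b) = Z' at h2 h3
        omega


lemma Rf_le (hb : 0 < b) (hu : ∀ p, u p ≤ 2 * d) (hv : ∀ p, v p ≤ 2 * d) (hw : w ≤ d)
    (m : ℕ) (hm : 0 < m)
    (hsep : ∀ i i', i < b → i' < b → u i + v i = u i' + v i' → i % m = i' % m → i = i')
    (n : ℕ) : Rf (seqF b d u v w) n ≤ m := by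
  unfold Rf
  have hcard : ((Finset.range (n+1) ×ˢ Finset.range (n+1)).filter
      (fun p => p.1 ≤ p.2 ∧ seqF b d u v w p.1 + seqF b d u v w p.2 = n)).card
      ≤ (Finset.range m).card := by
    apply Finset.card_le_card_of_injOn (fun p => p.1 % m)
    · intro p _
      exact Finset.mem_range.2 (Nat.mod_lt _ hm)
    · rintro ⟨i, j⟩ h1 ⟨i', j'⟩ h2 hmod
      simp only [Finset.mem_coe, Finset.mem_filter, Finset.mem_product,
        Finset.mem_range] at h1 h2
      obtain ⟨-, hij, hsum⟩ := h1
      obtain ⟨-, hij', hsum'⟩ := h2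
      have hmod' : i % m = i' % m := hmod
      rcases crux hb hu hv hw hij hij' (by omega) with ⟨e1, e2⟩ | ⟨hib, hib', hj, hj', htar⟩
      · subst e1; subst e2; rfl
      · have hii : i = i' := hsep i i' hib hib' htar hmod'
        subst hii
        have hjj : j = j' := by omega
        subst hjj
        rfl
  simpa [Finset.card_range] using hcard

lemma Rf_eq (hb : 0 < b) (hu : ∀ p, u p ≤ 2 * d) (hv : ∀ p, v p ≤ 2 * d) (hw : w ≤ d)
    (m : ℕ) (hm : 0 < m) (hmb : m ≤ b)
    (htar : ∀ p, p < b → (u p + v p = u 0 + v 0 ↔ p < m)) :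
    Rf (seqF b d u v w) (KN b d + u 0 + v 0) = m := by
  have hKC : KC d = 100 * d + 100 := hKC_eq
  have hCL : KC d ≤ KL b d := hKCL
  have hLN : KL b d ≤ KN b d := hKLN
  have h2b : 2 * b ≤ KL b d := two_b_le_KL b d
  have himg : Rf (seqF b d u v w) (KN b d + u 0 + v 0)
      = ((Finset.range m).image (fun p => (p, 2 * b - 1 - p))).card := by
    unfold Rf
    congr 1
    ext ⟨i, j⟩
    simp only [Finset.mem_filter, Finset.mem_product, Finset.mem_range, Finset.mem_image]
    constructor
    · rintro ⟨⟨hi, hj⟩, hij, hsum⟩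
      have h0 : seqF b d u v w 0 + seqF b d u v w (2 * b - 1) = KN b d + u 0 + v 0 := by
        rw [seq_low_eq hb, seq_high_eq (by omega) (by omega)]
        rw [show 2 * b - 1 - (2 * b - 1) = 0 from by omega]
        rw [pow_zero, mul_one]
        omega
      rcases crux hb hu hv hw hij (show (0:ℕ) ≤ 2 * b - 1 from Nat.zero_le _) (by omega)
        with ⟨e1, e2⟩ | ⟨hib, hib0, hjd, hj0, htar'⟩
      · refine ⟨0, (htar 0 hb).1 rfl, ?_⟩
        rw [e1, e2]
        rw [show 2 * b - 1 - 0 = 2 * b - 1 from by omega]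
      · refine ⟨i, (htar i hib).1 htar', ?_⟩
        rw [hjd]
    · rintro ⟨p, hpm, hpe⟩
      have hpb : p < b := lt_of_lt_of_le hpm hmb
      obtain ⟨rfl, rfl⟩ : p = i ∧ 2 * b - 1 - p = j :=
        ⟨congrArg Prod.fst hpe, congrArg Prod.snd hpe⟩
      have hsum : seqF b d u v w p + seqF b d u v w (2 * b - 1 - p)
          = KN b d + u 0 + v 0 := by
        rw [seq_low_eq hpb, seq_high_eq (by omega) (by omega)]
        rw [show 2 * b - 1 - (2 * b - 1 - p) = p from by omega]
        have hXN : KC d * 5 ^ p ≤ KN b d := le_trans (cpow_le' hpb) hLN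
        have htp : u p + v p = u 0 + v 0 := (htar p hpb).2 hpm
        generalize KC d * 5 ^ p = X at hXN ⊢
        omega
      exact ⟨⟨by omega, by omega⟩, by omega, hsum⟩
  rw [himg, Finset.card_image_of_injOn, Finset.card_range]
  intro x _ y _ hxy
  exact congrArg Prod.fst hxy

end

lemma sf_const {A : ℕ → ℕ} {m n0 : ℕ} (hle : ∀ n, Rf A n ≤ m) (he : Rf A n0 = m)
    {x : ℕ} (hx : n0 ≤ x) : sf A x = m := by
  unfold sf
  apply le_antisymm
  · exact Finset.sup_le fun n _ => hle n
  · calc m = Rf A n0 := he.symm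
      _ ≤ _ := Finset.le_sup (Finset.mem_range.2 (by omega))



def cA (a d p : ℕ) : ℕ := min (p / a) (4 * d)
def uAf (a d : ℕ) : ℕ → ℕ := fun p => min (cA a d p) (2 * d)
def vAf (a d : ℕ) : ℕ → ℕ := fun p => cA a d p - min (cA a d p) (2 * d)

lemma uA_le (a d p : ℕ) : uAf a d p ≤ 2 * d := min_le_right _ _

lemma vA_le (a d p : ℕ) : vAf a d p ≤ 2 * d := by
  have h1 : cA a d p ≤ 4 * d := min_le_right _ _
  have h2 := min_le_left (cA a d p) (2 * d)
  have h3 := min_le_right (cA a d p) (2 * d)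
  rcases min_choice (cA a d p) (2 * d) with h | h <;> · unfold vAf; omega

lemma uv_sum (a d p : ℕ) : uAf a d p + vAf a d p = cA a d p := by
  have := min_le_left (cA a d p) (2 * d)
  unfold uAf vAf
  omega

lemma cA_lt {a b d p : ℕ} (ha : 0 < a) (hba : b ≤ (4 * d + 1) * a) (hp : p < b) :
    cA a d p = p / a := by
  have h1 : p / a < 4 * d + 1 := (Nat.div_lt_iff_lt_mul ha).2 (by omega)
  exact min_eq_left (by omega)

lemma df_comm (A B : ℕ → ℕ) (x : ℕ) : df A B x = df B A x := by
  unfold df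
  apply Finset.sup_congr rfl
  intro t _
  by_cases h : A t ≤ x ∨ B t ≤ x
  · rw [if_pos h, if_pos (Or.symm h), Nat.dist_comm]
  · rw [if_neg h, if_neg (fun hc => h (Or.symm hc))]

lemma main (a b d : ℕ) (ha : 0 < a) (hb : 0 < b) (hd : 0 < d) (hab : a ≤ b)
    (hba : b ≤ (4 * d + 1) * a) :
    ∃ A B : ℕ → ℕ, StrictMono A ∧ StrictMono B ∧
      (∀ᶠ x in atTop, sf A x = a) ∧
      (∀ᶠ x in atTop, sf B x = b) ∧
      (∀ᶠ x in atTop, df A B x = d) := by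
  have huA : ∀ p, uAf a d p ≤ 2 * d := fun p => uA_le a d p
  have hvA : ∀ p, vAf a d p ≤ 2 * d := fun p => vA_le a d p
  have hw0 : (0:ℕ) ≤ d := Nat.zero_le _
  have huB : ∀ p : ℕ, (fun _ : ℕ => d) p ≤ 2 * d := fun _ => by show d ≤ 2 * d; omega
  have hvB : ∀ p : ℕ, (fun _ : ℕ => d) p ≤ 2 * d := fun _ => by show d ≤ 2 * d; omega
  refine ⟨seqF b d (uAf a d) (vAf a d) 0, seqF b d (fun _ => d) (fun _ => d) d,
    seq_mono hb huA hvA hw0, seq_mono hb huB hvB le_rfl, ?_, ?_, ?_⟩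
  · -- sf A = a eventually
    have hsepA : ∀ i i', i < b → i' < b →
        uAf a d i + vAf a d i = uAf a d i' + vAf a d i' → i % a = i' % a → i = i' := by
      intro i i' hib hib' hsum hmod
      rw [uv_sum, uv_sum, cA_lt ha hba hib, cA_lt ha hba hib'] at hsum
      have h1 := Nat.div_add_mod i a
      have h2 := Nat.div_add_mod i' a
      rw [hsum, hmod] at h1
      omega
    have htarA : ∀ p, p < b →
        (uAf a d p + vAf a d p = uAf a d 0 + vAf a d 0 ↔ p < a) := by
      intro p hpb
      rw [uv_sum, uv_sum, cA_lt ha hba hpb, cA_lt ha hba hb, Nat.zero_div]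
      constructor
      · intro h
        have h1 := Nat.div_add_mod p a
        have h2 := Nat.mod_lt p ha
        rw [h] at h1
        omega
      · intro h
        rw [Nat.div_eq_of_lt h]
    have hle := Rf_le hb huA hvA hw0 a ha hsepA
    have heq := Rf_eq hb huA hvA hw0 a ha hab htarA
    exact Filter.eventually_atTop.2
      ⟨KN b d + uAf a d 0 + vAf a d 0, fun x hx => sf_const hle heq hx⟩
  · -- sf B = b eventually
    have hsepB : ∀ i i', i < b → i' < b →
        (fun _ : ℕ => d) i + (fun _ : ℕ => d) i = (fun _ : ℕ => d) i' + (fun _ : ℕ => d) i' →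
        i % b = i' % b → i = i' := by
      intro i i' hib hib' _ hmod
      rw [Nat.mod_eq_of_lt hib, Nat.mod_eq_of_lt hib'] at hmod
      exact hmod
    have htarB : ∀ p, p < b →
        ((fun _ : ℕ => d) p + (fun _ : ℕ => d) p
          = (fun _ : ℕ => d) 0 + (fun _ : ℕ => d) 0 ↔ p < b) := by
      intro p hpb
      exact ⟨fun _ => hpb, fun _ => rfl⟩
    have hle := Rf_le hb huB hvB le_rfl b hb hsepB
    have heq := Rf_eq hb huB hvB le_rfl b hb le_rfl htarB
    exact Filter.eventually_atTop.2
      ⟨KN b d + d + d, fun x hx => sf_const hle heq hx⟩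
  · -- df = d eventually
    have hdist : ∀ t, Nat.dist (seqF b d (uAf a d) (vAf a d) 0 t)
        (seqF b d (fun _ => d) (fun _ => d) d t) ≤ d := by
      intro t
      rcases Nat.lt_or_ge t b with h | h
      · rw [seq_low_eq h, seq_low_eq h]
        have h1 := uA_le a d t
        generalize KC d * 5 ^ t = X
        simp only [Nat.dist]
        omega
      · rcases Nat.lt_or_ge t (2 * b) with h2 | h2
        · rw [seq_high_eq h h2, seq_high_eq h h2]
          have h1 := vA_le a d (2 * b - 1 - t)
          generalize KC d * 5 ^ (2 * b - 1 - t) = X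
          simp only [Nat.dist]
          omega
        · rw [seq_tail_eq h2, seq_tail_eq h2]
          generalize KT b d * 25 ^ (t - 2 * b) = X
          split_ifs with hcase <;> · simp only [Nat.dist]; omega
    have hA2b : seqF b d (uAf a d) (vAf a d) 0 (2 * b) = KT b d := by
      rw [seq_tail_eq (le_refl _), Nat.sub_self, pow_zero, mul_one, if_pos rfl, Nat.add_zero]
    have hB2b : seqF b d (fun _ => d) (fun _ => d) d (2 * b) = KT b d + d := by
      rw [seq_tail_eq (le_refl _), Nat.sub_self, pow_zero, mul_one, if_pos rfl]
    refine Filter.eventually_atTop.2 ⟨KT b d, fun x hx => ?_⟩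
    unfold df
    apply le_antisymm
    · apply Finset.sup_le
      intro t _
      split_ifs with hcond
      · exact hdist t
      · exact Nat.zero_le d
    · have hmem : 2 * b ∈ Finset.range (x + 1) := by
        refine Finset.mem_range.2 ?_
        have h1 := two_b_le_KL b d
        have h2 := hKLN (b := b) (d := d)
        have h3 := hKNT (b := b) (d := d)
        omega
      have hsup := Finset.le_sup (f := fun t =>
        if seqF b d (uAf a d) (vAf a d) 0 t ≤ x ∨ seqF b d (fun _ => d) (fun _ => d) d t ≤ x
        then Nat.dist (seqF b d (uAf a d) (vAf a d) 0 t) (seqF b d (fun _ => d) (fun _ => d) d t)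
        else 0) hmem
      simp only [hA2b, hB2b] at hsup
      rw [if_pos (Or.inl hx)] at hsup
      have hdd : Nat.dist (KT b d) (KT b d + d) = d := by
        simp only [Nat.dist]
        omega
      rwa [hdd] at hsup

end Stmt3Aux



theorem stmt3 (a b d : ℕ) (ha : 0 < a) (hb : 0 < b) (hd : 0 < d)
    (h1 : a ≤ (4 * d + 1) * b) (h2 : b ≤ (4 * d + 1) * a) :
    ∃ A B : ℕ → ℕ, StrictMono A ∧ StrictMono B ∧
      (∀ᶠ x in atTop, sf A x = a) ∧
      (∀ᶠ x in atTop, sf B x = b) ∧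
      (∀ᶠ x in atTop, df A B x = d) := by
  rcases le_total a b with hab | hab
  · exact Stmt3Aux.main a b d ha hb hd hab h2
  · obtain ⟨A, B, m1, m2, m3, m4, m5⟩ := Stmt3Aux.main b a d hb ha hd hab h1
    exact ⟨B, A, m2, m1, m4, m3, m5.mono fun x hx => (Stmt3Aux.df_comm B A x).trans hx⟩
end

section
/- Suppose A, B ⊆ ℕ satisfy s_A = +∞ and d := d_{A,B} < +∞. Then limsup_{x→∞} s_B(x)/s_A(x + 2d) ≤ 4d + 1 and liminf_{x→∞} s_B(x)/s_A(x − 2d) ≥ 1/(4d+1). -/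
open Filter

lemma sf_mono (a : ℕ → ℕ) : Monotone (sf a) := fun x y hxy =>
  Finset.sup_mono (Finset.range_subset_range.2 (by omega))

lemma Rf_le_key (a b : ℕ → ℕ) (ha : StrictMono a) (d : ℕ)
    (hdist : ∀ t, Nat.dist (a t) (b t) ≤ d) (n : ℕ) :
    Rf b n ≤ (4 * d + 1) * sf a (n + 2 * d) := by
  have hsub : ((Finset.range (n+1) ×ˢ Finset.range (n+1)).filter
      (fun p => p.1 ≤ p.2 ∧ b p.1 + b p.2 = n)) ⊆
      (Finset.Icc (n - 2*d) (n + 2*d)).biUnion (fun m =>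
        (Finset.range (m+1) ×ˢ Finset.range (m+1)).filter
          (fun p => p.1 ≤ p.2 ∧ a p.1 + a p.2 = m)) := by
    intro p hp
    simp only [Finset.mem_filter, Finset.mem_product, Finset.mem_range] at hp
    obtain ⟨⟨h1, h2⟩, hle, hsum⟩ := hp
    set m := a p.1 + a p.2 with hm
    have d1 := hdist p.1
    have d2 := hdist p.2
    simp only [Nat.dist] at d1 d2
    have hmIcc : m ∈ Finset.Icc (n - 2*d) (n + 2*d) := by
      rw [Finset.mem_Icc]; omega
    refine Finset.mem_biUnion.2 ⟨m, hmIcc, ?_⟩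
    have hp1 : p.1 ≤ a p.1 := ha.le_apply
    have hp2 : p.2 ≤ a p.2 := ha.le_apply
    simp only [Finset.mem_filter, Finset.mem_product, Finset.mem_range]
    exact ⟨⟨by omega, by omega⟩, hle, hm.symm⟩
  calc Rf b n ≤ ((Finset.Icc (n - 2*d) (n + 2*d)).biUnion (fun m =>
        (Finset.range (m+1) ×ˢ Finset.range (m+1)).filter
          (fun p => p.1 ≤ p.2 ∧ a p.1 + a p.2 = m))).card :=
        Finset.card_le_card hsub
    _ ≤ ∑ m ∈ Finset.Icc (n - 2*d) (n + 2*d), Rf a m := Finset.card_biUnion_le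
    _ ≤ (Finset.Icc (n - 2*d) (n + 2*d)).card * sf a (n + 2*d) := by
        rw [← smul_eq_mul]
        apply Finset.sum_le_card_nsmul
        intro m hm
        rw [Finset.mem_Icc] at hm
        exact Finset.le_sup (Finset.mem_range.2 (by omega))
    _ ≤ (4 * d + 1) * sf a (n + 2*d) := by
        apply Nat.mul_le_mul_right
        rw [Nat.card_Icc]; omega

lemma sf_le_key (a b : ℕ → ℕ) (ha : StrictMono a) (d : ℕ)
    (hdist : ∀ t, Nat.dist (a t) (b t) ≤ d) (x : ℕ) :
    sf b x ≤ (4 * d + 1) * sf a (x + 2 * d) := by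
  apply Finset.sup_le
  intro n hn
  rw [Finset.mem_range] at hn
  calc Rf b n ≤ (4 * d + 1) * sf a (n + 2 * d) := Rf_le_key a b ha d hdist n
    _ ≤ (4 * d + 1) * sf a (x + 2 * d) :=
        Nat.mul_le_mul_left _ (sf_mono a (by omega))

lemma Rf_le_lin (a : ℕ → ℕ) (ha : Function.Injective a) (n : ℕ) : Rf a n ≤ n + 1 := by
  have h := Finset.card_le_card_of_injOn (f := Prod.fst)
    (s := (Finset.range (n+1) ×ˢ Finset.range (n+1)).filter
      (fun p => p.1 ≤ p.2 ∧ a p.1 + a p.2 = n)) (t := Finset.range (n+1))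
    (fun p hp => by
      simp only [Finset.mem_coe, Finset.mem_filter, Finset.mem_product] at hp
      exact hp.1.1)
    (fun p hp q hq hpq => by
      simp only [Finset.coe_filter, Set.mem_setOf_eq, Finset.mem_product] at hp hq
      have h2 : a p.2 = a q.2 := by
        have := hp.2.2
        have := hq.2.2
        have : a p.1 = a q.1 := by rw [hpq]
        omega
      exact Prod.ext hpq (ha h2))
  simpa [Rf] using h

lemma sf_le_lin (a : ℕ → ℕ) (ha : Function.Injective a) (x : ℕ) : sf a x ≤ x + 1 := by
  apply Finset.sup_le
  intro n hn
  rw [Finset.mem_range] at hn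
  exact le_trans (Rf_le_lin a ha n) (by omega)

lemma lin_lt_pow (m c : ℕ) : ∃ k, m * k + c < 2 ^ k := by
  refine ⟨4 * (m + c + 2), ?_⟩
  set t := m + c + 2 with ht
  have h1 : t + 1 ≤ 2 ^ t := Nat.lt_two_pow_self
  have h2 : (t + 1) ^ 4 ≤ (2 ^ t) ^ 4 := Nat.pow_le_pow_left h1 4
  have h3 : (2 : ℕ) ^ (4 * t) = (2 ^ t) ^ 4 := by rw [← pow_mul, mul_comm]
  have h4 : m * (4 * t) + c < (t + 1) ^ 4 := by nlinarith [sq_nonneg t]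
  omega

lemma sf_freq (a : ℕ → ℕ) (ha : StrictMono a) (e : ℕ)
    (hsA : Tendsto (sf a) atTop atTop) :
    ∃ᶠ y in atTop, sf a (y + e) ≤ 2 * sf a y := by
  by_contra h
  rw [Filter.not_frequently] at h
  simp only [not_le] at h
  obtain ⟨N₁, hN₁⟩ := eventually_atTop.1 (h.and (hsA.eventually_ge_atTop 1))
  have hstep : ∀ y, N₁ ≤ y → 2 * sf a y < sf a (y + e) := fun y hy => (hN₁ y hy).1
  have hone : 1 ≤ sf a N₁ := (hN₁ N₁ le_rfl).2
  have hpow : ∀ k, 2 ^ k ≤ sf a (N₁ + e * k) := by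
    intro k
    induction k with
    | zero => simpa using hone
    | succ k ih =>
        have h1 := hstep (N₁ + e * k) (by omega)
        have h2 : N₁ + e * k + e = N₁ + e * (k + 1) := by ring
        rw [h2] at h1
        calc 2 ^ (k + 1) = 2 * 2 ^ k := by ring
          _ ≤ 2 * sf a (N₁ + e * k) := by omega
          _ ≤ sf a (N₁ + e * (k + 1)) := by omega
  obtain ⟨k, hk⟩ := lin_lt_pow e (N₁ + 1)
  have := hpow k
  have := sf_le_lin a ha.injective (N₁ + e * k)
  omega

theorem stmt4 (a b : ℕ → ℕ) (ha : StrictMono a) (hb : StrictMono b) (d : ℕ)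
    (hsA : Tendsto (sf a) atTop atTop)
    (hd : ∀ᶠ x in atTop, df a b x = d) :
    limsup (fun x : ℕ => (sf b x : ℝ) / (sf a (x + 2 * d) : ℝ)) atTop ≤ 4 * d + 1 ∧
    (1 : ℝ) / (4 * d + 1) ≤
      liminf (fun x : ℕ => (sf b x : ℝ) / (sf a (x - 2 * d) : ℝ)) atTop := by
  -- From `hd`, the distance bound holds for every index.
  have hdist : ∀ t, Nat.dist (a t) (b t) ≤ d := by
    intro t
    obtain ⟨N, hN⟩ := eventually_atTop.1 hd
    set x := max N (max t (a t)) with hx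
    have hdf : df a b x = d := hN x (le_max_left _ _)
    have hmem : t ∈ Finset.range (x + 1) := Finset.mem_range.2 (by omega)
    have : (if a t ≤ x ∨ b t ≤ x then Nat.dist (a t) (b t) else 0) ≤ df a b x :=
      Finset.le_sup (f := fun t => if a t ≤ x ∨ b t ≤ x then Nat.dist (a t) (b t) else 0) hmem
    rw [if_pos (Or.inl (by omega))] at this
    omega
  have hdist' : ∀ t, Nat.dist (b t) (a t) ≤ d := fun t => by
    rw [Nat.dist_comm]; exact hdist t
  have hpos : (0:ℝ) < 4 * d + 1 := by positivity
  constructor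
  · -- limsup part
    have hle : ∀ x : ℕ, (sf b x : ℝ) / (sf a (x + 2 * d) : ℝ) ≤ 4 * d + 1 := by
      intro x
      rcases Nat.eq_zero_or_pos (sf a (x + 2 * d)) with h0 | hp
      · rw [h0]; simp; positivity
      · rw [div_le_iff₀ (by exact_mod_cast hp)]
        have := sf_le_key a b ha d hdist x
        calc (sf b x : ℝ) ≤ ((4 * d + 1) * sf a (x + 2 * d) : ℕ) := by exact_mod_cast this
          _ = (4 * d + 1) * (sf a (x + 2 * d) : ℝ) := by push_cast; ring
    exact limsup_le_of_le
      (IsCoboundedUnder.of_frequently_ge (Frequently.of_forall (fun x => by positivity)))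
      (Eventually.of_forall hle)
  · -- liminf part
    have hev : ∀ᶠ x : ℕ in atTop,
        (1 : ℝ) / (4 * d + 1) ≤ (sf b x : ℝ) / (sf a (x - 2 * d) : ℝ) := by
      have h1 : Tendsto (fun x : ℕ => sf a (x - 2 * d)) atTop atTop :=
        hsA.comp (tendsto_sub_atTop_nat (2 * d))
      filter_upwards [h1.eventually_ge_atTop 1, eventually_ge_atTop (2 * d)] with x hx1 hx2
      have hq : (0:ℝ) < (sf a (x - 2 * d) : ℝ) := by exact_mod_cast hx1
      rw [div_le_div_iff₀ hpos hq]
      have key : sf a (x - 2 * d) ≤ (4 * d + 1) * sf b ((x - 2 * d) + 2 * d) :=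
        sf_le_key b a hb d hdist' (x - 2 * d)
      have hx' : (x - 2 * d) + 2 * d = x := by omega
      rw [hx'] at key
      calc (1:ℝ) * (sf a (x - 2 * d) : ℝ) = ((sf a (x - 2 * d) : ℕ) : ℝ) := by ring
        _ ≤ (((4 * d + 1) * sf b x : ℕ) : ℝ) := by exact_mod_cast key
        _ = (sf b x : ℝ) * (4 * d + 1) := by push_cast; ring
    have hcob : IsCoboundedUnder (· ≥ ·) atTop
        (fun x : ℕ => (sf b x : ℝ) / (sf a (x - 2 * d) : ℝ)) := by
      apply IsCoboundedUnder.of_frequently_le (a := (2 * (4 * (d:ℝ) + 1) : ℝ))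
      have hfreq := sf_freq a ha (4 * d) hsA
      have hev2 : ∀ᶠ y : ℕ in atTop, 1 ≤ sf a y := hsA.eventually_ge_atTop 1
      rw [frequently_atTop]
      intro M
      obtain ⟨y, hy, hy2, hy1⟩ := frequently_atTop.1 (hfreq.and_eventually hev2) M
      refine ⟨y + 2 * d, by omega, ?_⟩
      have harg : y + 2 * d - 2 * d = y := by omega
      rw [harg]
      have hq : (0:ℝ) < (sf a y : ℝ) := by exact_mod_cast hy1
      rw [div_le_iff₀ hq]
      have h1 : sf b (y + 2 * d) ≤ (4 * d + 1) * sf a (y + 2 * d + 2 * d) :=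
        sf_le_key a b ha d hdist (y + 2 * d)
      have h2 : y + 2 * d + 2 * d = y + 4 * d := by ring
      rw [h2] at h1
      have h3 : sf b (y + 2 * d) ≤ (4 * d + 1) * (2 * sf a y) :=
        le_trans h1 (Nat.mul_le_mul_left _ hy2)
      calc (sf b (y + 2 * d) : ℝ) ≤ (((4 * d + 1) * (2 * sf a y) : ℕ) : ℝ) := by
            exact_mod_cast h3
        _ = 2 * (4 * d + 1) * (sf a y : ℝ) := by push_cast; ring
    exact le_liminf_of_le hcob hev
end

section
/- Suppose A, B ⊆ ℕ satisfy s_A(x) → ∞ and d := d_{A,B} < ∞. Then liminf_{x→∞} s_B(x)/s_A(x − 2d) ≤ limsup_{x→∞} s_B(x)/s_A(x + 2d). (Equivalently, it is impossible that the liminf with the shifted-down argument strictly exceeds the limsup with the shifted-up argument.) -/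
open Filter

lemma Rf_le (a : ℕ → ℕ) (ha : StrictMono a) (n : ℕ) : Rf a n ≤ n + 1 := by
  have : ((Finset.range (n+1) ×ˢ Finset.range (n+1)).filter
      (fun p => p.1 ≤ p.2 ∧ a p.1 + a p.2 = n)).card ≤ (Finset.range (n+1)).card := by
    apply Finset.card_le_card_of_injOn (fun p => p.1)
    · intro p hp
      simp only [Finset.mem_coe, Finset.mem_filter, Finset.mem_product] at hp
      exact hp.1.1
    · intro p hp q hq hpq
      simp only [Finset.coe_filter, Set.mem_setOf_eq, Finset.mem_product, Finset.mem_coe] at hp hq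
      have hpq' : p.1 = q.1 := hpq
      rw [hpq'] at hp
      have h2 : a p.2 = a q.2 := by omega
      have h3 := ha.injective h2
      exact Prod.ext hpq' h3
  simpa [Rf] using this

lemma sf_le (a : ℕ → ℕ) (ha : StrictMono a) (x : ℕ) : sf a x ≤ x + 1 := by
  apply Finset.sup_le
  intro n hn
  simp only [Finset.mem_range] at hn
  exact (Rf_le a ha n).trans (by omega)

lemma dist_le (a b : ℕ → ℕ) (ha : StrictMono a) (hb : StrictMono b) (d : ℕ)
    (hd : ∀ᶠ x in atTop, df a b x = d) (t : ℕ) : Nat.dist (a t) (b t) ≤ d := by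
  obtain ⟨N, hN⟩ := eventually_atTop.mp hd
  set x := max N (a t)
  have hx : df a b x = d := hN x (le_max_left _ _)
  have hat : a t ≤ x := le_max_right _ _
  have htx : t ≤ x := (ha.le_apply).trans hat
  have h1 : (if a t ≤ x ∨ b t ≤ x then Nat.dist (a t) (b t) else 0) ≤ df a b x :=
    Finset.le_sup (f := fun t => if a t ≤ x ∨ b t ≤ x then Nat.dist (a t) (b t) else 0)
      (Finset.mem_range.mpr (Nat.lt_succ_of_le htx))
  rw [if_pos (Or.inl hat)] at h1
  omega

lemma transfer (a b : ℕ → ℕ) (ha : StrictMono a) (hb : StrictMono b) (d : ℕ)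
    (hab : ∀ t, Nat.dist (a t) (b t) ≤ d) (n : ℕ) :
    Rf b n ≤ (4*d+1) * sf a (n + 2*d) := by
  classical
  set S := (Finset.range (n+1) ×ˢ Finset.range (n+1)).filter
    (fun p => p.1 ≤ p.2 ∧ b p.1 + b p.2 = n) with hS
  set M := Finset.Icc (n - 2*d) (n + 2*d) with hM
  have hdist : ∀ t, a t ≤ b t + d ∧ b t ≤ a t + d := by
    intro t
    have := hab t
    unfold Nat.dist at this
    omega
  have hmem : ∀ p ∈ S, a p.1 + a p.2 ∈ M := by
    intro p hp
    simp only [hS, Finset.mem_filter, Finset.mem_product, Finset.mem_range] at hp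
    have h1 := hdist p.1
    have h2 := hdist p.2
    simp only [hM, Finset.mem_Icc]
    omega
  have hcard : S.card = ∑ m ∈ M, (S.filter (fun p => a p.1 + a p.2 = m)).card :=
    Finset.card_eq_sum_card_fiberwise hmem
  have hfiber : ∀ m ∈ M, (S.filter (fun p => a p.1 + a p.2 = m)).card ≤ sf a (n + 2*d) := by
    intro m hm
    simp only [hM, Finset.mem_Icc] at hm
    have hsub : S.filter (fun p => a p.1 + a p.2 = m) ⊆
        (Finset.range (m+1) ×ˢ Finset.range (m+1)).filter
          (fun p => p.1 ≤ p.2 ∧ a p.1 + a p.2 = m) := by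
      intro p hp
      simp only [hS, Finset.mem_filter, Finset.mem_product, Finset.mem_range] at hp ⊢
      have h1 : p.1 ≤ a p.1 := ha.le_apply
      have h2 : p.2 ≤ a p.2 := ha.le_apply
      omega
    calc (S.filter (fun p => a p.1 + a p.2 = m)).card
        ≤ Rf a m := Finset.card_le_card hsub
      _ ≤ sf a (n + 2*d) :=
          Finset.le_sup (Finset.mem_range.mpr (Nat.lt_succ_of_le hm.2))
  have : Rf b n = S.card := rfl
  rw [this, hcard]
  calc ∑ m ∈ M, (S.filter (fun p => a p.1 + a p.2 = m)).card
      ≤ ∑ _m ∈ M, sf a (n + 2*d) := Finset.sum_le_sum hfiber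
    _ = M.card * sf a (n + 2*d) := by rw [Finset.sum_const, smul_eq_mul]
    _ ≤ (4*d+1) * sf a (n + 2*d) := by
        apply Nat.mul_le_mul_right
        simp only [hM, Nat.card_Icc]
        omega

lemma sfb_le (a b : ℕ → ℕ) (ha : StrictMono a) (hb : StrictMono b) (d : ℕ)
    (hab : ∀ t, Nat.dist (a t) (b t) ≤ d) (x : ℕ) :
    sf b x ≤ (4*d+1) * sf a (x + 2*d) := by
  apply Finset.sup_le
  intro n hn
  simp only [Finset.mem_range] at hn
  calc Rf b n ≤ (4*d+1) * sf a (n + 2*d) := transfer a b ha hb d hab n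
    _ ≤ (4*d+1) * sf a (x + 2*d) :=
        Nat.mul_le_mul_left _ (sf_mono a (by omega))

lemma window (a : ℕ → ℕ) (ha : StrictMono a) (d : ℕ)
    (hsA : Tendsto (sf a) atTop atTop) (ε : ℝ) (hε : 0 < ε) (N₀ : ℕ) :
    ∃ x, N₀ ≤ x ∧ (sf a (x + 2*d) : ℝ) ≤ (1+ε) * (sf a (x - 2*d) : ℝ) := by
  rcases Nat.eq_zero_or_pos d with hd0 | hdpos
  · refine ⟨N₀, le_refl _, ?_⟩
    subst hd0
    simp only [Nat.mul_zero, Nat.add_zero, Nat.sub_zero]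
    nlinarith [Nat.cast_nonneg (α := ℝ) (sf a N₀)]
  by_contra hcon
  push_neg at hcon
  obtain ⟨N, hNN₀, hN1⟩ : ∃ N, N₀ ≤ N ∧ 1 ≤ sf a N := by
    obtain ⟨N', hN'⟩ := eventually_atTop.mp (hsA.eventually_ge_atTop 1)
    exact ⟨max N₀ N', le_max_left _ _, hN' _ (le_max_right _ _)⟩
  have key : ∀ k : ℕ, ((1+ε)^k : ℝ) ≤ (sf a (N + 4*d*k) : ℝ) := by
    intro k
    induction k with
    | zero =>
      simpa using (by exact_mod_cast hN1 : (1:ℝ) ≤ (sf a N : ℝ))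
    | succ k ih =>
      set x := N + 4*d*k + 2*d with hx
      have h1 := hcon x (by omega)
      have h2 : x - 2*d = N + 4*d*k := by omega
      have h3 : x + 2*d = N + 4*d*(k+1) := by rw [hx]; ring
      rw [h2, h3] at h1
      calc ((1+ε)^(k+1) : ℝ) = (1+ε) * (1+ε)^k := by ring
        _ ≤ (1+ε) * (sf a (N + 4*d*k) : ℝ) := by
            apply mul_le_mul_of_nonneg_left ih (by linarith)
        _ ≤ (sf a (N + 4*d*(k+1)) : ℝ) := h1.le
  set k := ⌈((N:ℝ) + 8*d + 2)/ε^2⌉₊ + 1 with hk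
  have hkge : ((N:ℝ) + 8*d + 2)/ε^2 ≤ (k:ℝ) := by
    push_cast
    exact (Nat.le_ceil _).trans (by rw [hk]; push_cast; linarith)
  have hk1 : (1:ℝ) ≤ (k:ℝ) := by
    have : (1:ℕ) ≤ k := by omega
    exact_mod_cast this
  have hεk : (N:ℝ) + 8*d + 2 ≤ ε^2 * k := by
    rw [div_le_iff₀ (by positivity)] at hkge
    linarith
  have hquad : (N:ℝ) + 8*d*k + 2 ≤ ε^2 * k^2 := by
    have h1 : ((N:ℝ) + 8*d + 2) * k ≤ (ε^2 * k) * k := by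
      apply mul_le_mul_of_nonneg_right hεk (by linarith)
    have hd1 : (1:ℝ) ≤ d := by exact_mod_cast hdpos
    nlinarith
  have hbern : (1:ℝ) + k*ε ≤ (1+ε)^k := by
    have := one_add_mul_le_pow (a := ε) (by linarith) k
    linarith
  have hpow : (ε*k)^2 ≤ ((1+ε)^(2*k) : ℝ) := by
    have h1 : ((1+ε)^(2*k) : ℝ) = ((1+ε)^k)^2 := by
      rw [← pow_mul, mul_comm]
    rw [h1]
    have h2 : (0:ℝ) ≤ ε*k := by positivity
    nlinarith
  have hup : ((1+ε)^(2*k) : ℝ) ≤ (N:ℝ) + 4*d*(2*k) + 1 := by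
    calc ((1+ε)^(2*k) : ℝ) ≤ (sf a (N + 4*d*(2*k)) : ℝ) := key (2*k)
      _ ≤ ((N + 4*d*(2*k) : ℕ) : ℝ) + 1 := by
          exact_mod_cast Nat.cast_le.mpr (sf_le a ha (N + 4*d*(2*k)))
      _ = (N:ℝ) + 4*d*(2*k) + 1 := by push_cast; ring
  nlinarith [hpow, hup, hquad]

theorem stmt5 (a b : ℕ → ℕ) (ha : StrictMono a) (hb : StrictMono b) (d : ℕ)
    (hsA : Tendsto (sf a) atTop atTop)
    (hd : ∀ᶠ x in atTop, df a b x = d) :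
    liminf (fun x : ℕ => (sf b x : ℝ) / (sf a (x - 2 * d) : ℝ)) atTop ≤
      limsup (fun x : ℕ => (sf b x : ℝ) / (sf a (x + 2 * d) : ℝ)) atTop := by

  have hab : ∀ t, Nat.dist (a t) (b t) ≤ d := dist_le a b ha hb d hd
  set f := fun x : ℕ => (sf b x : ℝ) / (sf a (x - 2 * d) : ℝ) with hf
  set g := fun x : ℕ => (sf b x : ℝ) / (sf a (x + 2 * d) : ℝ) with hg
  have hf0 : ∀ x, 0 ≤ f x := fun x => div_nonneg (Nat.cast_nonneg _) (Nat.cast_nonneg _)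
  have hg0 : ∀ x, 0 ≤ g x := fun x => div_nonneg (Nat.cast_nonneg _) (Nat.cast_nonneg _)
  have hgB : ∀ x, g x ≤ (4*d+1 : ℝ) := by
    intro x
    rcases Nat.eq_zero_or_pos (sf a (x + 2*d)) with h0 | h0
    · have : g x = 0 := by simp [hg, h0]
      rw [this]; positivity
    · have hpos : (0:ℝ) < (sf a (x + 2*d) : ℝ) := by exact_mod_cast h0
      rw [hg, div_le_iff₀ hpos]
      have h1 := sfb_le a b ha hb d hab x
      have h2 : (sf b x : ℝ) ≤ ((4*d+1 : ℕ) : ℝ) * (sf a (x + 2*d) : ℝ) := by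
        exact_mod_cast h1
      push_cast at h2
      linarith
  have hBdd : IsBoundedUnder (· ≤ ·) atTop g := ⟨(4*(d:ℝ)+1), Filter.eventually_map.mpr
    (Filter.Eventually.of_forall hgB)⟩
  have hfBdd : IsBoundedUnder (· ≥ ·) atTop f := ⟨(0:ℝ), Filter.eventually_map.mpr
    (Filter.Eventually.of_forall hf0)⟩
  set L := liminf f atTop with hL
  set U := limsup g atTop with hU
  have hU0 : (0:ℝ) ≤ U :=
    le_limsup_of_frequently_le (Filter.Frequently.of_forall hg0) hBdd
  have main : ∀ c < L, c ≤ U := by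
    intro c hc
    suffices h : ∀ ε : ℝ, 0 < ε → c ≤ (1+ε) * U by
      by_contra hcU
      push_neg at hcU
      have hU1 : (0:ℝ) < U + 1 := by linarith
      have hε : (0:ℝ) < (c - U)/(2*(U+1)) := div_pos (by linarith) (by linarith)
      have h2 := h _ hε
      have h3 : (c - U)/(2*(U+1)) * (2*(U+1)) = c - U :=
        div_mul_cancel₀ _ (by linarith)
      nlinarith [h2, h3, hU0, hcU]
    intro ε hε
    have hev : ∀ᶠ x in atTop, c < f x := eventually_lt_of_lt_liminf hc hfBdd
    obtain ⟨N₁, hN₁⟩ := eventually_atTop.mp hev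
    have hfreq : ∃ᶠ x in atTop, c/(1+ε) ≤ g x := by
      rw [frequently_atTop]
      intro N
      obtain ⟨x, hx1, hx2⟩ := window a ha d hsA ε hε (max N N₁)
      refine ⟨x, le_trans (le_max_left _ _) hx1, ?_⟩
      have hcf : c < f x := hN₁ x (le_trans (le_max_right _ _) hx1)
      rcases le_or_gt c 0 with hc0 | hc0
      · exact le_trans (div_nonpos_iff.mpr (Or.inr ⟨hc0, by linarith⟩)) (hg0 x)
      · have hfa : (0:ℝ) < (sf a (x - 2*d) : ℝ) := by
          by_contra hz
          push_neg at hz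
          have : (sf a (x - 2*d) : ℝ) = 0 := le_antisymm hz (Nat.cast_nonneg _)
          rw [hf] at hcf
          simp only [this, div_zero] at hcf
          linarith
        have hfa2 : (0:ℝ) < (sf a (x + 2*d) : ℝ) := by
          have := sf_mono a (show x - 2*d ≤ x + 2*d by omega)
          have : (sf a (x - 2*d) : ℝ) ≤ (sf a (x + 2*d) : ℝ) := by exact_mod_cast this
          linarith
        have key : f x / (1+ε) ≤ g x := by
          rw [hf, hg, div_div]
          apply div_le_div_of_nonneg_left (Nat.cast_nonneg _) hfa2
          calc (sf a (x + 2*d) : ℝ) ≤ (1+ε) * (sf a (x - 2*d) : ℝ) := hx2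
            _ = (sf a (x - 2*d) : ℝ) * (1+ε) := by ring
        calc c / (1+ε) ≤ f x / (1+ε) := (div_le_div_iff_of_pos_right (by linarith)).mpr hcf.le
          _ ≤ g x := key
    have hle : c/(1+ε) ≤ U := le_limsup_of_frequently_le hfreq hBdd
    rw [div_le_iff₀ (by linarith)] at hle
    linarith [hle]
  by_contra hLU
  push_neg at hLU
  have := main ((U+L)/2) (by linarith)
  linarith
end

section
/- Let ε > 0 and let A = {a_1 < a_2 < ...} ⊆ ℕ satisfy |a_n − n²| = O(exp((log 2 − ε)·(log n)/(log log n))). Then the representation function R_A(n) is unbounded, i.e., limsup_{n→∞} R_A(n) = ∞. -/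
open Filter

namespace Stmt9Aux

local notation "ℤi" => GaussianInt

/-- Units of `ℤ[i]`. -/
lemma units_cases {u : ℤi} (hu : IsUnit u) :
    u = 1 ∨ u = -1 ∨ u = ⟨0, 1⟩ ∨ u = ⟨0, -1⟩ := by
  have hn : u.norm = 1 := (Zsqrtd.norm_eq_one_iff' (by norm_num) u).mpr hu
  rw [Zsqrtd.norm_def] at hn
  have h : u.re * u.re + u.im * u.im = 1 := by linarith
  rcases eq_or_ne u.re 0 with h0 | h0
  · have him : u.im * u.im = 1 := by rw [h0] at h; linarith
    rcases mul_self_eq_one_iff.mp him with h1 | h1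
    · right; right; left; ext <;> simp [h0, h1]
    · right; right; right; ext <;> simp [h0, h1]
  · have h1 : 1 ≤ u.re * u.re := by
      have := Int.one_le_abs (by simpa using h0)
      nlinarith [abs_nonneg u.re, sq_abs u.re]
    have h2 : u.im * u.im = 0 := by nlinarith [mul_self_nonneg u.im]
    have h3 : u.im = 0 := by
      rcases mul_self_eq_zero.mp h2 with h; exact h
    have h4 : u.re * u.re = 1 := by rw [h3] at h; linarith
    rcases mul_self_eq_one_iff.mp h4 with h5 | h5
    · left; ext <;> simp [h3, h5]
    · right; left; ext <;> simp [h3, h5]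

lemma prime_not_sq (p m : ℕ) (hp : p.Prime) : m * m ≠ p := by
  intro h
  rcases (Nat.dvd_prime hp).mp ⟨m, h.symm⟩ with h1 | h1
  · subst h1; simp at h; exact absurd h.symm hp.one_lt.ne'
  · subst h1; nlinarith [hp.two_le]

/-- A Gaussian integer with odd prime norm does not divide its own conjugate. -/
lemma not_dvd_star {z : ℤi} {p : ℕ} (hp : p.Prime) (hodd : p % 2 = 1)
    (hn : z.norm = (p : ℤ)) : ¬ z ∣ star z := by
  rintro ⟨v, hv⟩
  have hnormv : v.norm = 1 := by
    have h1 : (star z).norm = z.norm * v.norm := by rw [hv, Zsqrtd.norm_mul]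
    rw [Zsqrtd.norm_conj, hn] at h1
    have hp0 : (p : ℤ) ≠ 0 := by exact_mod_cast hp.pos.ne'
    have h1 : v.norm = 1 := mul_left_cancel₀ hp0 (by linarith [h1])
    linarith [h1]
  have hu : IsUnit v := (Zsqrtd.norm_eq_one_iff' (by norm_num) v).mp hnormv
  have hre : (star z).re = z.re := Zsqrtd.re_star z
  have him : (star z).im = -z.im := Zsqrtd.im_star z
  have hnz : z.re * z.re + z.im * z.im = (p : ℤ) := by
    rw [Zsqrtd.norm_def] at hn; linarith
  rcases units_cases hu with h | h | h | h <;> subst h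
  · -- star z = z : z.im = 0, p = re², contradiction
    rw [mul_one] at hv
    have : z.im = 0 := by
      have := congrArg Zsqrtd.im hv
      simp at this; linarith
    rw [this] at hnz
    have hcast : (↑(z.re.natAbs * z.re.natAbs) : ℤ) = (p : ℤ) := by
      rw [Int.natAbs_mul_self]; linarith
    exact prime_not_sq p _ hp (by exact_mod_cast hcast)
  · have : z.re = 0 := by
      have := congrArg Zsqrtd.re hv
      simp at this; linarith
    rw [this] at hnz
    have hcast : (↑(z.im.natAbs * z.im.natAbs) : ℤ) = (p : ℤ) := by
      rw [Int.natAbs_mul_self]; linarith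
    exact prime_not_sq p _ hp (by exact_mod_cast hcast)
  · -- star z = z * i = ⟨-im, re⟩ : re = -im
    have h1 := congrArg Zsqrtd.re hv
    simp [Zsqrtd.re_mul] at h1
    rw [h1] at hnz
    have h2 : (p : ℤ) = 2 * (z.im * z.im) := by linear_combination -hnz
    have : (2 : ℕ) ∣ p := by
      have : (2 : ℤ) ∣ (p : ℤ) := ⟨z.im * z.im, h2⟩
      exact_mod_cast this
    omega
  · have h1 := congrArg Zsqrtd.re hv
    simp [Zsqrtd.re_mul] at h1
    rw [h1] at hnz
    have h2 : (p : ℤ) = 2 * (z.re * z.re) := by rw [h1]; linear_combination -hnz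
    have : (2 : ℕ) ∣ p := by
      have : (2 : ℤ) ∣ (p : ℤ) := ⟨z.re * z.re, h2⟩
      exact_mod_cast this
    omega

set_option synthInstance.maxHeartbeats 1000000 in
/-- A Gaussian integer whose norm is a natural prime is prime. -/
lemma prime_of_norm_prime {z : ℤi} {p : ℕ} (hp : p.Prime) (hn : z.norm = (p : ℤ)) :
    Prime z := by
  rw [← irreducible_iff_prime]
  constructor
  · intro hu
    have := (Zsqrtd.norm_eq_one_iff' (by norm_num) z).mpr hu
    rw [hn] at this
    have : p = 1 := by exact_mod_cast this
    exact hp.one_lt.ne' this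
  · intro x y hxy
    have hnm : (p : ℤ) = x.norm * y.norm := by rw [← Zsqrtd.norm_mul, ← hxy, hn]
    have hpZ : Irreducible (p : ℤ) := by
      rw [irreducible_iff_prime, Int.prime_iff_natAbs_prime]
      simpa using hp
    rcases hpZ.isUnit_or_isUnit hnm with h | h
    · exact Or.inl ((Zsqrtd.isUnit_iff_norm_isUnit x).mpr h)
    · exact Or.inr ((Zsqrtd.isUnit_iff_norm_isUnit y).mpr h)

end Stmt9Aux

namespace Stmt9Aux

local notation "ℤi" => GaussianInt

section Products

variable (π : ℕ → ℤi) (P : Finset ℕ)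

/-- The product `∏__{p ∈ S} π p * ∏_{p ∈ P \ S} conj (π p)`. -/
def w (S : Finset ℕ) : ℤi := (∏ p ∈ S, π p) * ∏ p ∈ P \ S, star (π p)

variable {π P}
variable (hP : ∀ p ∈ P, p.Prime ∧ p % 4 = 1) (hπ : ∀ p ∈ P, (π p).norm = (p : ℤ))

include hP hπ

lemma eq_of_dvd {i j : ℕ} (hi : i ∈ P) (hj : j ∈ P)
    (h : π i ∣ π j ∨ π i ∣ star (π j)) : i = j := by
  have hdvd : (π i).norm ∣ (π j).norm := by
    rcases h with ⟨c, hc⟩ | ⟨c, hc⟩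
    · exact ⟨c.norm, by rw [hc, Zsqrtd.norm_mul]⟩
    · exact ⟨c.norm, by rw [← Zsqrtd.norm_conj (π j), hc, Zsqrtd.norm_mul]⟩
  rw [hπ i hi, hπ j hj] at hdvd
  have : i ∣ j := by exact_mod_cast hdvd
  exact ((Nat.prime_dvd_prime_iff_eq (hP i hi).1 (hP j hj).1).mp this)

lemma prime_pi {i : ℕ} (hi : i ∈ P) : Prime (π i) :=
  prime_of_norm_prime (hP i hi).1 (hπ i hi)

lemma dvd_w_iff {S : Finset ℕ} (hS : S ⊆ P) {i : ℕ} (hi : i ∈ P) :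
    π i ∣ w π P S ↔ i ∈ S := by
  constructor
  · intro hdvd
    by_contra hmem
    have hprime := prime_pi hP hπ hi
    rcases (hprime.2.2 _ _ hdvd) with h | h
    · obtain ⟨j, hj, hjd⟩ := hprime.exists_mem_finset_dvd h
      have : i = j := eq_of_dvd hP hπ hi (hS hj) (Or.inl hjd)
      exact hmem (this ▸ hj)
    · obtain ⟨j, hj, hjd⟩ := hprime.exists_mem_finset_dvd h
      have hjP : j ∈ P := (Finset.mem_sdiff.mp hj).1
      have hij : i = j := eq_of_dvd hP hπ hi hjP (Or.inr hjd)
      subst hij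
      exact not_dvd_star (hP i hi).1 (by have := (hP i hi).2; omega) (hπ i hi) hjd
  · intro hmem
    exact Dvd.dvd.mul_right (Finset.dvd_prod_of_mem π hmem) _

lemma star_w {S : Finset ℕ} (hS : S ⊆ P) : star (w π P S) = w π P (P \ S) := by
  have h1 : star (w π P S) = (∏ p ∈ S, star (π p)) * ∏ p ∈ P \ S, π p := by
    rw [w, star_mul]
    rw [show star (∏ p ∈ S, π p) = ∏ p ∈ S, star (π p) by
      simpa using map_prod (starRingEnd ℤi) π S]
    rw [show star (∏ p ∈ P \ S, star (π p)) = ∏ p ∈ P \ S, π p by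
      rw [show (∏ p ∈ P \ S, star (π p)) = ∏ p ∈ P \ S, (starRingEnd ℤi) (π p) from rfl,
        ← map_prod (starRingEnd ℤi)]
      exact star_star _]
    rw [mul_comm]
  rw [h1, w, Finset.sdiff_sdiff_eq_self hS, mul_comm]

lemma norm_w {S : Finset ℕ} (hS : S ⊆ P) : (w π P S).norm = ∏ p ∈ P, (p : ℤ) := by
  rw [w, Zsqrtd.norm_mul,
    show Zsqrtd.norm (∏ p ∈ S, π p) = ∏ p ∈ S, (π p).norm from map_prod Zsqrtd.normMonoidHom _ _,
    show Zsqrtd.norm (∏ p ∈ P \ S, star (π p)) = ∏ p ∈ P \ S, (star (π p)).norm from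
      map_prod Zsqrtd.normMonoidHom _ _]
  have h1 : ∏ p ∈ S, (π p).norm = ∏ p ∈ S, (p : ℤ) :=
    Finset.prod_congr rfl fun p hp => hπ p (hS hp)
  have h2 : ∏ p ∈ P \ S, (star (π p)).norm = ∏ p ∈ P \ S, (p : ℤ) :=
    Finset.prod_congr rfl fun p hp => by
      rw [Zsqrtd.norm_conj]; exact hπ p (Finset.mem_sdiff.mp hp).1
  rw [h1, h2, mul_comm, Finset.prod_sdiff hS]

lemma w_unit_eq {S T : Finset ℕ} (hS : S ⊆ P) (hT : T ⊆ P) {u : ℤi} (hu : IsUnit u)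
    (h : w π P T = u * w π P S) : T = S := by
  ext i
  by_cases hiP : i ∈ P
  · rw [← dvd_w_iff hP hπ hS hiP, ← dvd_w_iff hP hπ hT hiP, h]
    exact IsUnit.dvd_mul_left hu
  · constructor
    · intro hi; exact absurd (hT hi) hiP
    · intro hi; exact absurd (hS hi) hiP

end Products

end Stmt9Aux

namespace Stmt9Aux

local notation "ℤi" => GaussianInt

/-- The unordered pair of absolute values of coordinates. -/
def key (z : ℤi) : ℕ × ℕ := (min z.re.natAbs z.im.natAbs, max z.re.natAbs z.im.natAbs)

lemma key_eq {z₁ z₂ : ℤi} (h : key z₂ = key z₁) :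
    ∃ u : ℤi, IsUnit u ∧ (z₂ = u * z₁ ∨ z₂ = u * star z₁) := by
  have hI : IsUnit (⟨0, 1⟩ : ℤi) :=
    (Zsqrtd.norm_eq_one_iff' (by norm_num) _).mp (by rw [Zsqrtd.norm_def]; ring)
  have hI' : IsUnit (⟨0, -1⟩ : ℤi) :=
    (Zsqrtd.norm_eq_one_iff' (by norm_num) _).mp (by rw [Zsqrtd.norm_def]; ring)
  obtain ⟨h1, h2⟩ := Prod.mk.injEq .. ▸ h
  have habs : (z₂.re.natAbs = z₁.re.natAbs ∧ z₂.im.natAbs = z₁.im.natAbs) ∨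
      (z₂.re.natAbs = z₁.im.natAbs ∧ z₂.im.natAbs = z₁.re.natAbs) := by
    unfold key at h
    have h1 : min z₂.re.natAbs z₂.im.natAbs = min z₁.re.natAbs z₁.im.natAbs :=
      congrArg Prod.fst h
    have h2 : max z₂.re.natAbs z₂.im.natAbs = max z₁.re.natAbs z₁.im.natAbs :=
      congrArg Prod.snd h
    omega
  set a := z₁.re; set b := z₁.im
  rcases habs with ⟨hre, him⟩ | ⟨hre, him⟩
  · rcases Int.natAbs_eq_natAbs_iff.mp hre with hc | hc <;>
      rcases Int.natAbs_eq_natAbs_iff.mp him with hd | hd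
    · exact ⟨1, isUnit_one, Or.inl (by ext <;> simp [a, b, hc, hd])⟩
    · exact ⟨1, isUnit_one, Or.inr (by ext <;>
        simp [a, b, hc, hd, Zsqrtd.re_mul, Zsqrtd.im_mul, Zsqrtd.re_star, Zsqrtd.im_star])⟩
    · exact ⟨-1, isUnit_one.neg, Or.inr (by ext <;>
        simp [a, b, hc, hd, Zsqrtd.re_mul, Zsqrtd.im_mul, Zsqrtd.re_star, Zsqrtd.im_star])⟩
    · exact ⟨-1, isUnit_one.neg, Or.inl (by ext <;>
        simp [a, b, hc, hd, Zsqrtd.re_mul, Zsqrtd.im_mul])⟩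
  · rcases Int.natAbs_eq_natAbs_iff.mp hre with hc | hc <;>
      rcases Int.natAbs_eq_natAbs_iff.mp him with hd | hd
    · -- z₂ = ⟨b, a⟩ = i * star z₁
      refine ⟨⟨0, 1⟩, hI, Or.inr ?_⟩
      ext <;> simp [a, b, hc, hd, Zsqrtd.re_mul, Zsqrtd.im_mul, Zsqrtd.re_star, Zsqrtd.im_star]
    · -- z₂ = ⟨b, -a⟩ = -i * z₁
      refine ⟨⟨0, -1⟩, hI', Or.inl ?_⟩
      ext <;> simp [a, b, hc, hd, Zsqrtd.re_mul, Zsqrtd.im_mul]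
    · -- z₂ = ⟨-b, a⟩ = i * z₁
      refine ⟨⟨0, 1⟩, hI, Or.inl ?_⟩
      ext <;> simp [a, b, hc, hd, Zsqrtd.re_mul, Zsqrtd.im_mul]
    · -- z₂ = ⟨-b, -a⟩ = -i * star z₁
      refine ⟨⟨0, -1⟩, hI', Or.inr ?_⟩
      ext <;> simp [a, b, hc, hd, Zsqrtd.re_mul, Zsqrtd.im_mul, Zsqrtd.re_star, Zsqrtd.im_star]

end Stmt9Aux

namespace Stmt9Aux

local notation "ℤi" => GaussianInt

/-- n = ∏ of distinct primes ≡ 1 mod 4 has at least 2^(k-1) representations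
as x²+y², 1 ≤ x ≤ y. -/
lemma sq_reps (P : Finset ℕ) (hP : ∀ p ∈ P, p.Prime ∧ p % 4 = 1) (hne : P.Nonempty) :
    ∃ F : Finset (ℕ × ℕ), 2 ^ P.card ≤ 2 * F.card ∧
      ∀ q ∈ F, 1 ≤ q.1 ∧ q.1 ≤ q.2 ∧ q.1 ^ 2 + q.2 ^ 2 = ∏ p ∈ P, p := by
  classical
  set n := ∏ p ∈ P, p with hn
  -- n is not a perfect square
  have hnsq : ∀ m : ℕ, m * m ≠ n := by
    intro m hm
    obtain ⟨p₀, hp₀⟩ := hne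
    have hprime := (hP p₀ hp₀).1
    have hrest : ¬ p₀ ∣ ∏ p ∈ P.erase p₀, p := by
      intro hdvd
      obtain ⟨j, hj, hjd⟩ := hprime.prime.exists_mem_finset_dvd hdvd
      have : p₀ = j := (Nat.prime_dvd_prime_iff_eq hprime (hP j (P.erase_subset _ hj)).1).mp hjd
      exact (Finset.ne_of_mem_erase hj) this.symm
    have hfact : n = p₀ * ∏ p ∈ P.erase p₀, p := (Finset.mul_prod_erase P _ hp₀).symm
    have hdvdm : p₀ ∣ m := by
      have : p₀ ∣ m * m := by rw [hm, hfact]; exact Dvd.intro _ rfl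
      rcases (Nat.Prime.dvd_mul hprime).mp this with h | h <;> exact h
    obtain ⟨m', rfl⟩ := hdvdm
    have : p₀ ∣ ∏ p ∈ P.erase p₀, p := by
      have h1 : p₀ * (p₀ * (m' * m')) = p₀ * ∏ p ∈ P.erase p₀, p := by
        rw [← hfact, ← hm]; ring
      have h2 : p₀ * (m' * m') = ∏ p ∈ P.erase p₀, p :=
        Nat.eq_of_mul_eq_mul_left hprime.pos h1
      exact ⟨m' * m', h2.symm⟩
    exact hrest this
  -- choose Gaussian integers above each prime
  have hex : ∀ p, p ∈ P → ∃ z : ℤi, z.norm = (p : ℤ) := by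
    intro p hp
    haveI : Fact p.Prime := ⟨(hP p hp).1⟩
    obtain ⟨A, B, hab⟩ := Nat.Prime.sq_add_sq (p := p) (by have := (hP p hp).2; omega)
    exact ⟨⟨(A : ℤ), (B : ℤ)⟩, by rw [Zsqrtd.norm_def]; push_cast [← hab]; ring⟩
  set π : ℕ → ℤi := fun p => if h : ∃ z : ℤi, z.norm = (p : ℤ) then h.choose else 0 with hπdef
  have hπ : ∀ p ∈ P, (π p).norm = (p : ℤ) := by
    intro p hp
    simp only [hπdef, dif_pos (hex p hp)]
    exact (hex p hp).choose_spec
  refine ⟨(P.powerset).image (fun S => key (w π P S)), ?_, ?_⟩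
  · -- cardinality bound
    rw [← Finset.card_powerset]
    refine Finset.card_le_mul_card_image _ 2 ?_
    intro v hv
    obtain ⟨S₀, hS₀mem, hS₀⟩ := Finset.mem_image.mp hv
    have hS₀sub : S₀ ⊆ P := Finset.mem_powerset.mp hS₀mem
    have hsub : (P.powerset.filter (fun S => key (w π P S) = v)) ⊆ {S₀, P \ S₀} := by
      intro T hT
      obtain ⟨hTmem, hTkey⟩ := Finset.mem_filter.mp hT
      have hTsub : T ⊆ P := Finset.mem_powerset.mp hTmem
      have : key (w π P T) = key (w π P S₀) := by rw [hTkey, hS₀]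
      obtain ⟨u, hu, h | h⟩ := key_eq this
      · have : T = S₀ := w_unit_eq hP hπ hS₀sub hTsub hu h
        simp [this]
      · rw [star_w hP hπ hS₀sub] at h
        have : T = P \ S₀ := w_unit_eq hP hπ (Finset.sdiff_subset) hTsub hu h
        simp [this]
    calc (P.powerset.filter (fun S => key (w π P S) = v)).card
        ≤ ({S₀, P \ S₀} : Finset (Finset ℕ)).card := Finset.card_le_card hsub
      _ ≤ 2 := Finset.card_insert_le _ _ |>.trans (by simp)
  · -- properties of each pair
    intro q hq
    obtain ⟨S, hSmem, hSkey⟩ := Finset.mem_image.mp hq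
    have hSsub : S ⊆ P := Finset.mem_powerset.mp hSmem
    set z := w π P S with hz
    have hnorm : z.norm = (n : ℤ) := by
      rw [norm_w hP hπ hSsub, hn]; push_cast; rfl
    have hnormdef : z.re * z.re + z.im * z.im = (n : ℤ) := by
      rw [← hnorm, Zsqrtd.norm_def]; ring
    have hsum : z.re.natAbs ^ 2 + z.im.natAbs ^ 2 = n := by
      have : (↑(z.re.natAbs * z.re.natAbs + z.im.natAbs * z.im.natAbs) : ℤ) = (n : ℤ) := by
        rw [Nat.cast_add, Int.natAbs_mul_self, Int.natAbs_mul_self]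
        exact hnormdef
      have h2 : z.re.natAbs * z.re.natAbs + z.im.natAbs * z.im.natAbs = n := by
        exact_mod_cast this
      nlinarith [h2]
    have hre0 : z.re.natAbs ≠ 0 := by
      intro h0
      rw [h0] at hsum
      exact hnsq z.im.natAbs (by nlinarith [hsum])
    have him0 : z.im.natAbs ≠ 0 := by
      intro h0
      rw [h0] at hsum
      exact hnsq z.re.natAbs (by nlinarith [hsum])
    rw [← hSkey]
    refine ⟨?_, ?_, ?_⟩
    · unfold key; simp only [ge_iff_le, le_min_iff]; omega
    · exact min_le_max
    · unfold key
      rcases le_total z.re.natAbs z.im.natAbs with h | h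
      · rw [min_eq_left h, max_eq_right h]; exact hsum
      · rw [min_eq_right h, max_eq_left h]; linarith [hsum]

end Stmt9Aux



namespace Stmt9Aux

/-- Core inequality: for `e ≤ x ≤ y`, `x * log y ≤ y * log x`. -/
lemma mul_log_le {x y : ℝ} (hx : Real.exp 1 ≤ x) (hxy : x ≤ y) :
    x * Real.log y ≤ y * Real.log x := by
  have hx0 : (0 : ℝ) < x := lt_of_lt_of_le (Real.exp_pos 1) hx
  have hy0 : (0 : ℝ) < y := lt_of_lt_of_le hx0 hxy
  have hlx : 1 ≤ Real.log x := by
    have := Real.log_le_log (Real.exp_pos 1) hx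
    rwa [Real.log_exp] at this
  have hdiv : Real.log y - Real.log x ≤ y / x - 1 := by
    rw [← Real.log_div hy0.ne' hx0.ne']
    exact Real.log_le_sub_one_of_pos (div_pos hy0 hx0)
  have h1 : x * (Real.log y - Real.log x) ≤ y - x := by
    have := mul_le_mul_of_nonneg_left hdiv hx0.le
    calc x * (Real.log y - Real.log x) ≤ x * (y / x - 1) := this
      _ = y - x := by field_simp
  nlinarith [mul_le_mul_of_nonneg_left hlx (sub_nonneg.mpr hxy)]

lemma div_log_mono {x y : ℝ} (hx : Real.exp 1 ≤ x) (hxy : x ≤ y) :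
    x / Real.log x ≤ y / Real.log y := by
  have hx0 : (0 : ℝ) < x := lt_of_lt_of_le (Real.exp_pos 1) hx
  have hy0 : (0 : ℝ) < y := lt_of_lt_of_le hx0 hxy
  have hlx : 1 ≤ Real.log x := by
    have := Real.log_le_log (Real.exp_pos 1) hx
    rwa [Real.log_exp] at this
  have hly : 1 ≤ Real.log y := by
    have := Real.log_le_log (Real.exp_pos 1) (hx.trans hxy)
    rwa [Real.log_exp] at this
  rw [div_le_div_iff₀ (by linarith) (by linarith)]
  exact mul_log_le hx hxy

lemma log_div_anti {x y : ℝ} (hx : Real.exp 1 ≤ x) (hxy : x ≤ y) :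
    Real.log y / y ≤ Real.log x / x := by
  have hx0 : (0 : ℝ) < x := lt_of_lt_of_le (Real.exp_pos 1) hx
  have hy0 : (0 : ℝ) < y := lt_of_lt_of_le hx0 hxy
  rw [div_le_div_iff₀ hy0 hx0]
  have := mul_log_le hx hxy
  linarith [this]

/-- The predicate: primes congruent to 1 mod 4. -/
def pr (n : ℕ) : Prop := n.Prime ∧ (n : ZMod 4) = 1

lemma pr_infinite : (setOf pr).Infinite :=
  Nat.infinite_setOfPred_prime_and_eq_mod (q := 4) isUnit_one

lemma pr_mod {p : ℕ} (hp : pr p) : p % 4 = 1 := by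
  have h : ((p : ℕ) : ZMod 4) = ((1 : ℕ) : ZMod 4) := by
    rw [hp.2]; norm_num
  have := (ZMod.natCast_eq_natCast_iff _ _ _).mp h
  simpa [Nat.ModEq] using this

lemma pr_five_le {p : ℕ} (hp : pr p) : 5 ≤ p := by
  have h4 := pr_mod hp
  have h2 := hp.1.two_le
  rcases Nat.lt_or_ge p 5 with h | h
  · interval_cases p <;> simp_all
  · exact h

open ArithmeticFunction vonMangoldt in
/-- Key density fact from Dirichlet: frequently, the K-th prime ≡ 1 mod 4
is below (K+1)^(1+c). -/
lemma nth_freq (c : ℝ) (hc : 0 < c) :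
    ∃ᶠ K in atTop, (Nat.nth pr K : ℝ) < ((K : ℝ) + 1) ^ (1 + c) := by
  by_contra hcon
  rw [Filter.not_frequently] at hcon
  simp only [not_lt] at hcon
  obtain ⟨K₀, hK₀⟩ := eventually_atTop.mp hcon
  set g : ℕ → ℝ := fun n => (if n.Prime then residueClass (1 : ZMod 4) n else 0) / n with hg
  apply not_summable_residueClass_prime_div (q := 4) (a := 1) isUnit_one
  rw [← hg]
  have hg0 : ∀ n, 0 ≤ g n := by
    intro n
    apply div_nonneg _ (Nat.cast_nonneg n)
    split
    · exact residueClass_nonneg _ n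
    · exact le_refl 0
  have hK₂ : ∀ K, max K₀ 2 ≤ K → ((K : ℝ) + 1) ^ (1 + c) ≤ (Nat.nth pr K : ℝ) :=
    fun K hK => hK₀ K (le_trans (le_max_left _ _) hK)
  -- value of g at nth pr K
  have hgnth : ∀ K : ℕ, g (Nat.nth pr K) = Real.log (Nat.nth pr K) / (Nat.nth pr K) := by
    intro K
    have hp : pr (Nat.nth pr K) := Nat.nth_mem_of_infinite pr_infinite K
    simp only [hg, if_pos hp.1]
    congr 1
    have : residueClass (1 : ZMod 4) (Nat.nth pr K)
        = vonMangoldt (Nat.nth pr K) := by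
      apply Set.indicator_of_mem
      exact hp.2
    rw [this, vonMangoldt_apply_prime hp.1]
  -- the comparison function
  set h' : ℕ → ℝ := fun K => ((1 + c) * (2 / c)) * (1 / ((K : ℝ) + 1) ^ (1 + c / 2))
    with hh'
  have hsumh' : Summable h' := by
    apply Summable.mul_left
    have h1 : Summable (fun n : ℕ => 1 / (n : ℝ) ^ (1 + c / 2)) :=
      Real.summable_one_div_nat_rpow.mpr (by linarith)
    have h2 := (summable_nat_add_iff 1).mpr h1
    refine h2.congr fun K => ?_
    push_cast
    ring_nf
  have hcomp : ∀ K : ℕ, max K₀ 2 ≤ K → g (Nat.nth pr K) ≤ h' K := by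
    intro K hK
    have hp : pr (Nat.nth pr K) := Nat.nth_mem_of_infinite pr_infinite K
    have hK2 : (2 : ℕ) ≤ K := le_trans (le_max_right _ _) hK
    have hx1 : Real.exp 1 ≤ ((K : ℝ) + 1) ^ (1 + c) := by
      have h3 : (3 : ℝ) ≤ ((K : ℝ) + 1) := by
        have : (2 : ℝ) ≤ (K : ℝ) := by exact_mod_cast hK2
        linarith
      have h4 : ((K : ℝ) + 1) ^ (1 : ℝ) ≤ ((K : ℝ) + 1) ^ (1 + c) :=
        Real.rpow_le_rpow_of_exponent_le (by linarith) (by linarith)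
      rw [Real.rpow_one] at h4
      have he : Real.exp 1 ≤ 3 := by
        have := Real.exp_one_lt_d9
        linarith
      linarith
    have hb := hK₂ K hK
    rw [hgnth K]
    have hanti := log_div_anti hx1 hb
    rw [Real.log_rpow (by positivity)] at hanti
    calc Real.log (Nat.nth pr K) / (Nat.nth pr K)
        ≤ (1 + c) * Real.log ((K : ℝ) + 1) / ((K : ℝ) + 1) ^ (1 + c) := hanti
      _ ≤ h' K := by
          have hlog : Real.log ((K : ℝ) + 1) ≤ ((K : ℝ) + 1) ^ (c / 2) / (c / 2) :=
            Real.log_le_rpow_div (by positivity) (by linarith)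
          have hsplit : ((K : ℝ) + 1) ^ (1 + c)
              = ((K : ℝ) + 1) ^ (1 + c / 2) * ((K : ℝ) + 1) ^ (c / 2) := by
            rw [← Real.rpow_add (by positivity)]
            ring_nf
          rw [hh']
          have hpos1 : (0:ℝ) < ((K : ℝ) + 1) ^ (1 + c / 2) := by positivity
          have hpos2 : (0:ℝ) < ((K : ℝ) + 1) ^ (c / 2) := by positivity
          rw [div_le_iff₀ (by positivity), hsplit]
          have : (1 + c) * Real.log ((K : ℝ) + 1)
              ≤ (1 + c) * (((K : ℝ) + 1) ^ (c / 2) / (c / 2)) := by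
            apply mul_le_mul_of_nonneg_left hlog (by linarith)
          calc (1 + c) * Real.log ((K : ℝ) + 1)
              ≤ (1 + c) * (((K : ℝ) + 1) ^ (c / 2) / (c / 2)) := this
            _ = (1 + c) * (2 / c) * (1 / (((K : ℝ) + 1) ^ (1 + c / 2)))
                * (((K : ℝ) + 1) ^ (1 + c / 2) * ((K : ℝ) + 1) ^ (c / 2)) := by
                field_simp
  -- summability along nth
  have hsumnth : Summable (fun K => g (Nat.nth pr K)) := by
    set K₂ := max K₀ 2 with hK₂def
    rw [← summable_nat_add_iff K₂]
    apply Summable.of_nonneg_of_le (fun K => hg0 _)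
      (fun K => hcomp (K + K₂) (by omega))
    exact (summable_nat_add_iff K₂).mpr hsumh'
  -- transfer along the injection
  have hinj : Function.Injective (Nat.nth pr) := Nat.nth_injective pr_infinite
  have hvanish : ∀ n, n ∉ Set.range (Nat.nth pr) → g n = 0 := by
    intro n hn
    by_cases hprime : n.Prime
    · by_cases hmod : ((n : ℕ) : ZMod 4) = 1
      · exfalso
        apply hn
        rw [Nat.range_nth_of_infinite pr_infinite]
        exact ⟨hprime, hmod⟩
      · have hz : residueClass (1 : ZMod 4) n = 0 := by
          simp only [residueClass, Set.indicator_apply, Set.mem_setOf_eq]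
          rw [if_neg hmod]
        simp [hg, if_pos hprime, hz]
    · simp [hg, if_neg hprime]
  exact (Function.Injective.summable_iff hinj hvanish).mp hsumnth

end Stmt9Aux

set_option maxHeartbeats 2000000 in
open Stmt9Aux in
theorem stmt9 (ε : ℝ) (hε : 0 < ε) (a : ℕ → ℕ)
    (ha : ∀ m n, 1 ≤ m → m < n → a m < a n)
    (C : ℝ)
    (hC : ∀ᶠ n : ℕ in atTop,
      |(a n : ℝ) - (n : ℝ) ^ 2| ≤
        C * Real.exp ((Real.log 2 - ε) * Real.log n / Real.log (Real.log n))) :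
    ∀ M : ℕ, ∃ n : ℕ, M < RS (a '' Set.Ici 1) n := by
  intro M
  classical
  set A := a '' Set.Ici 1 with hAdef
  -- basic facts about a
  have hamono : ∀ s t : ℕ, 1 ≤ s → s ≤ t → a s ≤ a t := by
    intro s t hs hst
    rcases eq_or_lt_of_le hst with rfl | h
    · exact le_rfl
    · exact (ha s t hs h).le
  have hainj : ∀ s t : ℕ, 1 ≤ s → 1 ≤ t → a s = a t → s = t := by
    intro s t hs ht h
    rcases lt_trichotomy s t with hlt | heq | hgt
    · exact absurd h (ha s t hs hlt).ne
    · exact heq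
    · exact absurd h.symm (ha t s ht hgt).ne
  -- constants
  have hl2 : (0 : ℝ) < Real.log 2 := Real.log_pos (by norm_num)
  set ε' : ℝ := min ε (Real.log 2) / 2 with hε'def
  have hε'pos : 0 < ε' := by
    have := lt_min hε hl2
    rw [hε'def]; linarith
  have hε'le : ε' ≤ Real.log 2 / 2 := by
    have := min_le_right ε (Real.log 2)
    rw [hε'def]; linarith
  set cplus : ℝ := max (Real.log 2 - ε) 0 with hcplusdef
  have hcplus0 : 0 ≤ cplus := le_max_right _ _
  have hcplusle : cplus ≤ Real.log 2 - 2 * ε' := by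
    rcases le_total ε (Real.log 2) with h | h
    · have h1 : cplus = Real.log 2 - ε := max_eq_left (by linarith)
      have h2 : ε' = ε / 2 := by rw [hε'def, min_eq_left h]
      rw [h1, h2]; linarith
    · have h1 : cplus = 0 := max_eq_right (by linarith)
      have h2 : ε' = Real.log 2 / 2 := by rw [hε'def, min_eq_right h]
      rw [h1, h2]; linarith
  set c : ℝ := ε' / (6 * Real.log 2) with hcdef
  have hcpos : 0 < c := by rw [hcdef]; positivity
  have hkey : cplus * (1 + c) ≤ Real.log 2 - ε' := by
    have h1 : cplus ≤ Real.log 2 := by linarith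
    have h2 : cplus * c ≤ Real.log 2 * c := mul_le_mul_of_nonneg_right h1 hcpos.le
    have h3 : Real.log 2 * c = ε' / 6 := by
      rw [hcdef]; field_simp
    nlinarith
  -- error bound data
  obtain ⟨T₀, hT₀⟩ := eventually_atTop.mp hC
  have hC0 : 0 ≤ C := by
    by_contra h
    push_neg at h
    have h1 := hT₀ T₀ le_rfl
    have h2 : C * Real.exp ((Real.log 2 - ε) * Real.log T₀ / Real.log (Real.log T₀)) < 0 :=
      mul_neg_of_neg_of_pos h (Real.exp_pos _)
    have := abs_nonneg ((a T₀ : ℝ) - (T₀ : ℝ) ^ 2)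
    linarith
  set T₁ : ℕ := max T₀ 16 with hT₁def
  set D₀ : ℝ := ∑ t ∈ Finset.range T₁, |(a t : ℝ) - (t : ℝ) ^ 2| with hD₀def
  have hD₀0 : 0 ≤ D₀ := Finset.sum_nonneg fun t _ => abs_nonneg _
  have hexp16 : Real.exp 1 ≤ Real.log 16 := by
    have h1 : Real.exp 1 < 2.7182818286 := Real.exp_one_lt_d9
    have h2 : (0.6931471803 : ℝ) < Real.log 2 := Real.log_two_gt_d9
    have h3 : Real.log 16 = 4 * Real.log 2 := by
      rw [show (16 : ℝ) = 2 ^ (4 : ℕ) by norm_num, Real.log_pow]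
      push_cast; ring
    linarith
  -- choose K frequently
  have hev : ∀ᶠ K : ℕ in atTop, 1 ≤ K ∧
      2 * ((M : ℝ) + 1) * (4 * D₀ + 3 + 4 * C) ≤ Real.exp (ε' * ((K : ℝ) + 1)) := by
    have h0 : Tendsto (fun K : ℕ => ((K : ℝ) + 1)) atTop atTop :=
      tendsto_atTop_add_const_right _ 1 tendsto_natCast_atTop_atTop
    have h1 : Tendsto (fun K : ℕ => ε' * ((K : ℝ) + 1)) atTop atTop :=
      Tendsto.const_mul_atTop hε'pos h0
    have h2 : Tendsto (fun K : ℕ => Real.exp (ε' * ((K : ℝ) + 1))) atTop atTop :=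
      Real.tendsto_exp_atTop.comp h1
    filter_upwards [eventually_ge_atTop 1,
      h2.eventually_ge_atTop (2 * ((M : ℝ) + 1) * (4 * D₀ + 3 + 4 * C))] with K hK1 hK2
    exact ⟨hK1, hK2⟩
  obtain ⟨K, hKfreq, hK1, hKexp⟩ := ((nth_freq c hcpos).and_eventually hev).exists
  -- the prime set
  set k : ℕ := K + 1 with hkdef
  have hk2 : 2 ≤ k := by omega
  set P : Finset ℕ := (Finset.range k).image (Nat.nth pr) with hPdef
  have hPcard : P.card = k := by
    rw [hPdef, Finset.card_image_of_injective _ (Nat.nth_injective pr_infinite),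
      Finset.card_range]
  have hPpr : ∀ p ∈ P, pr p := by
    intro p hp
    obtain ⟨i, _, rfl⟩ := Finset.mem_image.mp hp
    exact Nat.nth_mem_of_infinite pr_infinite i
  have hPprime : ∀ p ∈ P, p.Prime ∧ p % 4 = 1 :=
    fun p hp => ⟨(hPpr p hp).1, pr_mod (hPpr p hp)⟩
  have hne : P.Nonempty := Finset.card_pos.mp (by omega)
  set n : ℕ := ∏ p ∈ P, p with hndef
  have hP5 : ∀ p ∈ P, 5 ≤ p := fun p hp => pr_five_le (hPpr p hp)
  have hcastk : ((K : ℝ) + 1) = (k : ℝ) := by rw [hkdef]; push_cast; ring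
  have hq_lt : ∀ p ∈ P, (p : ℝ) < (k : ℝ) ^ (1 + c) := by
    intro p hp
    obtain ⟨i, hi, rfl⟩ := Finset.mem_image.mp hp
    have h1 : Nat.nth pr i ≤ Nat.nth pr K := by
      apply (Nat.nth_monotone pr_infinite)
      have := Finset.mem_range.mp hi
      omega
    calc (Nat.nth pr i : ℝ) ≤ (Nat.nth pr K : ℝ) := by exact_mod_cast h1
      _ < ((K : ℝ) + 1) ^ (1 + c) := hKfreq
      _ = (k : ℝ) ^ (1 + c) := by rw [hcastk]
  -- size bounds on n
  have hn5k : 5 ^ k ≤ n := by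
    rw [hndef, ← hPcard, ← Finset.prod_const]
    exact Finset.prod_le_prod' hP5
  have hn16 : 16 ≤ n := le_trans (by nlinarith [pow_le_pow_right₀ (by norm_num : 1 ≤ 5) hk2]) hn5k
  have hnpos : 0 < n := by omega
  have hlogn_ge : (k : ℝ) ≤ Real.log n := by
    have h1 : Real.log ((5 : ℝ) ^ (k : ℕ)) ≤ Real.log n := by
      apply Real.log_le_log (by positivity)
      exact_mod_cast hn5k
    rw [Real.log_pow] at h1
    have h3 : (1 : ℝ) ≤ Real.log 5 := by
      have h4 : Real.exp 1 ≤ 5 := by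
        have := Real.exp_one_lt_d9; linarith
      have := Real.log_le_log (Real.exp_pos 1) h4
      rwa [Real.log_exp] at this
    have h5 : (0 : ℝ) ≤ (k : ℝ) := Nat.cast_nonneg k
    nlinarith
  have hlogn_pos : (0 : ℝ) < Real.log n := by
    have : (2 : ℝ) ≤ (k : ℝ) := by exact_mod_cast hk2
    linarith
  have hloglogn_ge : Real.log k ≤ Real.log (Real.log n) :=
    Real.log_le_log (by exact_mod_cast Nat.cast_pos.mpr (show 0 < k by omega)) hlogn_ge
  have hloglogn_pos : (0 : ℝ) < Real.log (Real.log n) := by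
    have h1 : (0:ℝ) < Real.log k := Real.log_pos (by exact_mod_cast hk2)
    linarith
  have hlogn_le : Real.log n ≤ (k : ℝ) * ((1 + c) * Real.log k) := by
    have h1 : (n : ℝ) = ∏ p ∈ P, (p : ℝ) := by rw [hndef]; push_cast; rfl
    have h2 : Real.log n = ∑ p ∈ P, Real.log p := by
      rw [h1, Real.log_prod]
      intro p hp
      have := hP5 p hp
      positivity
    rw [h2]
    have h3 : ∀ p ∈ P, Real.log p ≤ (1 + c) * Real.log k := by
      intro p hp
      have h4 : Real.log p ≤ Real.log ((k : ℝ) ^ (1 + c)) := by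
        apply Real.log_le_log (by have := hP5 p hp; positivity) (hq_lt p hp).le
      rwa [Real.log_rpow (by exact_mod_cast Nat.cast_pos.mpr (show 0 < k by omega))] at h4
    calc ∑ p ∈ P, Real.log p ≤ P.card • ((1 + c) * Real.log k) :=
          Finset.sum_le_card_nsmul _ _ _ h3
      _ = (k : ℝ) * ((1 + c) * Real.log k) := by rw [hPcard]; simp [nsmul_eq_mul]
  have hratio : Real.log n / Real.log (Real.log n) ≤ (1 + c) * k := by
    rw [div_le_iff₀ hloglogn_pos]
    calc Real.log n ≤ (k : ℝ) * ((1 + c) * Real.log k) := hlogn_le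
      _ ≤ (k : ℝ) * ((1 + c) * Real.log (Real.log n)) := by
          apply mul_le_mul_of_nonneg_left _ (Nat.cast_nonneg k)
          apply mul_le_mul_of_nonneg_left hloglogn_ge (by linarith)
      _ = (1 + c) * k * Real.log (Real.log n) := by ring
  have hcmain : cplus * (Real.log n / Real.log (Real.log n)) ≤ (Real.log 2 - ε') * k := by
    calc cplus * (Real.log n / Real.log (Real.log n)) ≤ cplus * ((1 + c) * k) :=
          mul_le_mul_of_nonneg_left hratio hcplus0
      _ = (cplus * (1 + c)) * k := by ring
      _ ≤ (Real.log 2 - ε') * k :=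
          mul_le_mul_of_nonneg_right hkey (Nat.cast_nonneg k)
  -- the uniform error bound
  set E : ℝ := D₀ + C * Real.exp ((Real.log 2 - ε') * k) with hEdef
  have hexpnonneg : (0:ℝ) ≤ C * Real.exp ((Real.log 2 - ε') * k) := by positivity
  have hidx : ∀ t : ℕ, 1 ≤ t → t ≤ n → |(a t : ℝ) - (t : ℝ) ^ 2| ≤ E := by
    intro t ht1 htn
    rcases lt_or_ge t T₁ with h | h
    · have h1 : |(a t : ℝ) - (t : ℝ) ^ 2| ≤ D₀ := by
        rw [hD₀def]
        exact Finset.single_le_sum (f := fun t : ℕ => |(a t : ℝ) - (t : ℝ) ^ 2|)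
          (fun i _ => abs_nonneg _) (Finset.mem_range.mpr h)
      rw [hEdef]; linarith
    · have ht16 : 16 ≤ t := le_trans (le_max_right _ _) h
      have h1 := hT₀ t (le_trans (le_max_left _ _) h)
      have hlt : Real.exp 1 ≤ Real.log t := by
        have : Real.log 16 ≤ Real.log t :=
          Real.log_le_log (by norm_num) (by exact_mod_cast ht16)
        linarith
      have hllt : (0:ℝ) < Real.log (Real.log t) := by
        apply Real.log_pos
        have := Real.exp_pos 1
        nlinarith [Real.add_one_le_exp 1]
      have hratiot : (0:ℝ) ≤ Real.log t / Real.log (Real.log t) := by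
        apply div_nonneg _ hllt.le
        nlinarith [Real.exp_pos 1]
      have hmono : Real.log t / Real.log (Real.log t)
          ≤ Real.log n / Real.log (Real.log n) := by
        apply div_log_mono hlt
        apply Real.log_le_log (by positivity)
        exact_mod_cast htn
      have hchain : (Real.log 2 - ε) * Real.log t / Real.log (Real.log t)
          ≤ (Real.log 2 - ε') * k := by
        rw [mul_div_assoc]
        calc (Real.log 2 - ε) * (Real.log t / Real.log (Real.log t))
            ≤ cplus * (Real.log t / Real.log (Real.log t)) :=
              mul_le_mul_of_nonneg_right (le_max_left _ _) hratiot
          _ ≤ cplus * (Real.log n / Real.log (Real.log n)) :=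
              mul_le_mul_of_nonneg_left hmono hcplus0
          _ ≤ (Real.log 2 - ε') * k := hcmain
      have h2 : C * Real.exp ((Real.log 2 - ε) * Real.log t / Real.log (Real.log t))
          ≤ C * Real.exp ((Real.log 2 - ε') * k) :=
        mul_le_mul_of_nonneg_left (Real.exp_le_exp.mpr hchain) hC0
      rw [hEdef]
      linarith
  -- representations
  obtain ⟨F, hFcard, hFprop⟩ := sq_reps P hPprime hne
  rw [hPcard] at hFcard
  set e : ℕ := ⌈2 * E⌉₊ with hedef
  have hE0 : 0 ≤ E := by rw [hEdef]; linarith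
  have he2E : (e : ℝ) ≤ 2 * E + 1 := by
    rw [hedef]
    have := Nat.ceil_lt_add_one (by linarith : (0:ℝ) ≤ 2 * E)
    linarith
  have hmaps : ∀ q ∈ F, a q.1 + a q.2 ∈ Finset.Icc (n - e) (n + e) := by
    intro q hq
    obtain ⟨hq1, hq12, hqsum⟩ := hFprop q hq
    rw [← hndef] at hqsum
    have hy1 : 1 ≤ q.2 := le_trans hq1 hq12
    have hxn : q.1 ≤ n := by
      have h1 : q.1 ^ 2 ≤ n := by rw [← hqsum]; exact Nat.le_add_right _ _
      exact le_trans (Nat.le_self_pow two_ne_zero _) h1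
    have hyn : q.2 ≤ n := by
      have h1 : q.2 ^ 2 ≤ n := by rw [← hqsum]; exact Nat.le_add_left _ _
      exact le_trans (Nat.le_self_pow two_ne_zero _) h1
    have hax := hidx q.1 hq1 hxn
    have hay := hidx q.2 hy1 hyn
    have hsumR : ((q.1 : ℝ)) ^ 2 + ((q.2 : ℝ)) ^ 2 = (n : ℝ) := by
      exact_mod_cast congrArg (Nat.cast : ℕ → ℝ) hqsum
    have htot : |(a q.1 : ℝ) + (a q.2 : ℝ) - (n : ℝ)| ≤ 2 * E := by
      have h1 : (a q.1 : ℝ) + (a q.2 : ℝ) - (n : ℝ)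
          = ((a q.1 : ℝ) - (q.1 : ℝ) ^ 2) + ((a q.2 : ℝ) - (q.2 : ℝ) ^ 2) := by
        rw [← hsumR]; ring
      rw [h1]
      calc |((a q.1 : ℝ) - (q.1 : ℝ) ^ 2) + ((a q.2 : ℝ) - (q.2 : ℝ) ^ 2)|
          ≤ |(a q.1 : ℝ) - (q.1 : ℝ) ^ 2| + |(a q.2 : ℝ) - (q.2 : ℝ) ^ 2| := abs_add_le _ _
        _ ≤ 2 * E := by linarith
    rw [Finset.mem_Icc]
    have habs := abs_le.mp htot
    constructor
    · have h2 : (n : ℝ) ≤ (a q.1 : ℝ) + (a q.2 : ℝ) + e := by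
        have : 2 * E ≤ (e : ℝ) := Nat.le_ceil _
        linarith [habs.2]
      have h3 : n ≤ a q.1 + a q.2 + e := by exact_mod_cast h2
      omega
    · have h2 : (a q.1 : ℝ) + (a q.2 : ℝ) ≤ (n : ℝ) + e := by
        have : 2 * E ≤ (e : ℝ) := Nat.le_ceil _
        linarith [habs.1]
      exact_mod_cast h2
  -- pigeonhole
  have htcard : (Finset.Icc (n - e) (n + e)).card ≤ 2 * e + 1 := by
    rw [Nat.card_Icc]; omega
  have hcount : (Finset.Icc (n - e) (n + e)).card * (M + 1) ≤ F.card := by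
    have hR1 : ((2 * e + 1 : ℕ) : ℝ) * ((M : ℝ) + 1) ≤ (F.card : ℝ) := by
      have hexp1 : (1:ℝ) ≤ Real.exp ((Real.log 2 - ε') * k) := by
        rw [← Real.exp_zero]
        apply Real.exp_le_exp.mpr
        have h1 : (0:ℝ) ≤ (Real.log 2 - ε') := by linarith
        positivity
      have hsplit : ((2 * e + 1 : ℕ) : ℝ) * ((M : ℝ) + 1)
          ≤ ((M : ℝ) + 1) * (4 * D₀ + 3 + 4 * C) * Real.exp ((Real.log 2 - ε') * k) := by
        have h1 : ((2 * e + 1 : ℕ) : ℝ) ≤ 4 * E + 3 := by push_cast; linarith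
        have h2 : 4 * E + 3 = (4 * D₀ + 3) + 4 * C * Real.exp ((Real.log 2 - ε') * k) := by
          rw [hEdef]; ring
        have hM1 : (0:ℝ) ≤ (M : ℝ) + 1 := by positivity
        have ha1 : ((2 * e + 1 : ℕ) : ℝ) * ((M : ℝ) + 1) ≤ (4 * E + 3) * ((M : ℝ) + 1) :=
          mul_le_mul_of_nonneg_right h1 hM1
        have ha2 : (4 * E + 3)
            ≤ (4 * D₀ + 3 + 4 * C) * Real.exp ((Real.log 2 - ε') * k) := by
          rw [h2]
          have hb : (4 * D₀ + 3) ≤ (4 * D₀ + 3) * Real.exp ((Real.log 2 - ε') * k) := by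
            nlinarith [mul_nonneg (show (0:ℝ) ≤ 4 * D₀ + 3 by linarith)
              (show (0:ℝ) ≤ Real.exp ((Real.log 2 - ε') * k) - 1 by linarith)]
          linarith
        linarith [mul_le_mul_of_nonneg_right ha2 hM1, ha1]
      have hfinal : ((M : ℝ) + 1) * (4 * D₀ + 3 + 4 * C) * Real.exp ((Real.log 2 - ε') * k)
          ≤ (F.card : ℝ) := by
        have h1 : ((M : ℝ) + 1) * (4 * D₀ + 3 + 4 * C)
            ≤ Real.exp (ε' * k) / 2 := by
          rw [← hcastk]
          linarith [hKexp]
        have h2 : Real.exp (ε' * k) * Real.exp ((Real.log 2 - ε') * k)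
            = Real.exp (Real.log 2 * k) := by
          rw [← Real.exp_add]; ring_nf
        have h3 : Real.exp (Real.log 2 * k) = (2 : ℝ) ^ (k : ℕ) := by
          rw [mul_comm, Real.exp_nat_mul, Real.exp_log (by norm_num)]
        have h4 : ((2 : ℝ) ^ (k : ℕ)) ≤ 2 * (F.card : ℝ) := by
          exact_mod_cast hFcard
        have hexppos := Real.exp_pos ((Real.log 2 - ε') * k)
        calc ((M : ℝ) + 1) * (4 * D₀ + 3 + 4 * C) * Real.exp ((Real.log 2 - ε') * k)
            ≤ (Real.exp (ε' * k) / 2) * Real.exp ((Real.log 2 - ε') * k) := by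
              apply mul_le_mul_of_nonneg_right h1 hexppos.le
          _ = Real.exp (Real.log 2 * k) / 2 := by rw [← h2]; ring
          _ = ((2 : ℝ) ^ (k : ℕ)) / 2 := by rw [h3]
          _ ≤ (F.card : ℝ) := by linarith
      linarith
    have hR2 : (2 * e + 1) * (M + 1) ≤ F.card := by
      have := hR1
      exact_mod_cast (by push_cast; exact_mod_cast hR1 : (((2 * e + 1) * (M + 1) : ℕ) : ℝ) ≤ (F.card : ℝ))
    calc (Finset.Icc (n - e) (n + e)).card * (M + 1) ≤ (2 * e + 1) * (M + 1) :=
          Nat.mul_le_mul_right _ htcard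
      _ ≤ F.card := hR2
  have htne : (Finset.Icc (n - e) (n + e)).Nonempty :=
    ⟨n, Finset.mem_Icc.mpr (by omega)⟩
  obtain ⟨m, _, hmcount⟩ :=
    Finset.exists_le_card_fiber_of_mul_le_card_of_maps_to hmaps htne hcount
  -- conclude
  refine ⟨m, ?_⟩
  set G := F.filter (fun q => a q.1 + a q.2 = m) with hGdef
  have hGF : G ⊆ F := Finset.filter_subset _ _
  have hfin : Finite {p : ℕ × ℕ // p.1 ∈ A ∧ p.2 ∈ A ∧ p.1 ≤ p.2 ∧ p.1 + p.2 = m} := by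
    have hsub : {p : ℕ × ℕ | p.1 ∈ A ∧ p.2 ∈ A ∧ p.1 ≤ p.2 ∧ p.1 + p.2 = m}
        ⊆ (Set.Iic m) ×ˢ (Set.Iic m) := by
      rintro ⟨x, y⟩ ⟨_, _, _, hsum⟩
      constructor
      · simp only [Set.mem_Iic]; omega
      · simp only [Set.mem_Iic]; omega
    exact (((Set.finite_Iic m).prod (Set.finite_Iic m)).subset hsub).to_subtype
  have hinj : Function.Injective
      (fun q : {q : ℕ × ℕ // q ∈ G} =>
        (⟨(a q.1.1, a q.1.2), by
          obtain ⟨hqF, hqm⟩ := Finset.mem_filter.mp q.2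
          obtain ⟨hq1, hq12, _⟩ := hFprop _ hqF
          refine ⟨⟨q.1.1, hq1, rfl⟩, ⟨q.1.2, le_trans hq1 hq12, rfl⟩,
            hamono _ _ hq1 hq12, hqm⟩⟩ :
          {p : ℕ × ℕ // p.1 ∈ A ∧ p.2 ∈ A ∧ p.1 ≤ p.2 ∧ p.1 + p.2 = m})) := by
    rintro ⟨⟨x₁, y₁⟩, hq⟩ ⟨⟨x₂, y₂⟩, hq'⟩ heq
    obtain ⟨hqF, _⟩ := Finset.mem_filter.mp hq
    obtain ⟨hqF', _⟩ := Finset.mem_filter.mp hq'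
    obtain ⟨h11, h112, _⟩ := hFprop _ hqF
    obtain ⟨h21, h212, _⟩ := hFprop _ hqF'
    have h1 : a x₁ = a x₂ := congrArg (Prod.fst ∘ Subtype.val) heq
    have h2 : a y₁ = a y₂ := congrArg (Prod.snd ∘ Subtype.val) heq
    have hx : x₁ = x₂ := hainj _ _ h11 h21 h1
    have hy : y₁ = y₂ := hainj _ _ (le_trans h11 h112) (le_trans h21 h212) h2
    exact Subtype.ext (by simp [hx, hy])
  have hcard1 : G.card ≤ RS A m := by
    have h1 := Nat.card_le_card_of_injective _ hinj
    have h2 : Nat.card {q : ℕ × ℕ // q ∈ G} = G.card := Nat.card_eq_finsetCard G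
    rw [RS]
    omega
  have hMG : M + 1 ≤ G.card := hmcount
  omega
end

section
/- There exist sets A, B ⊆ ℕ such that A is a Sidon set (s_A = 1), d_{A,B}(n) ≪ n^{1/3}, and s_B(n) ≫ n^{1/3}. -/
open Filter

namespace S10
open Finset

def L (k : ℕ) : ℕ := 4 ^ k
def NN (k : ℕ) : ℕ := 8000 * (L k)^3
def V (k : ℕ) : ℕ := 1000 * (L k)^3
def DD (k : ℕ) : ℕ := 750 * (L k)^3

lemma L_pos (k : ℕ) : 0 < L k := Nat.pow_pos (by norm_num)

def P : ℕ → ℕ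
  | 0 => 0
  | k + 1 => P k + L k

lemma lt_P (s : ℕ) : s < P (s + 1) := by
  induction s with
  | zero => simp [P, L]
  | succ n ih =>
      have h : P (n+1) ≤ P (n+2) - L (n+1) := by simp [P]
      have : L (n+1) ≥ 1 := L_pos _
      have := L_pos (n+1)
      simp only [P] at *
      omega

lemma exists_blk (s : ℕ) : ∃ k, s < P (k + 1) := ⟨s, lt_P s⟩

def blk (s : ℕ) : ℕ := Nat.find (exists_blk s)

lemma blk_lt (s : ℕ) : s < P (blk s + 1) := Nat.find_spec (exists_blk s)

lemma P_blk_le (s : ℕ) : P (blk s) ≤ s := by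
  rcases h : blk s with _ | k
  · simp [P]
  · have hk : k < blk s := by omega
    have h2 := Nat.find_min (exists_blk s) hk
    push_neg at h2
    exact h2

lemma blk_mono : Monotone blk := by
  intro s t hst
  have := blk_lt t
  have h2 : s < P (blk t + 1) := lt_of_le_of_lt hst this
  exact Nat.find_min' (exists_blk s) h2

def B1 (F : Finset ℕ) : Finset ℕ := ((F ×ˢ F) ×ˢ F).image (fun p => p.1.1 + p.1.2 - p.2)
def B2 (F : Finset ℕ) : Finset ℕ := (F ×ˢ F).image (fun p => (p.1 + p.2) / 2)
def Gp (k : ℕ) (F : Finset ℕ) : Finset ℕ :=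
  F.biUnion (fun x => Finset.Icc (x - 50 * L k) (x + 50 * L k))

def M1 (k : ℕ) (F : Finset ℕ) : Finset ℕ :=
  (range (V k + DD k)).filter (fun ξ => 10 * L k ≤
    (((F ×ˢ F) ×ˢ F).filter
      (fun p => p.1.1 + p.1.2 + ξ ∈ Finset.Icc (p.2 + NN k) (p.2 + NN k + 20 * L k))).card)
def M2 (k : ℕ) (F : Finset ℕ) : Finset ℕ :=
  (range (V k + DD k)).filter (fun ξ => 4 * L k ≤
    ((F ×ˢ F).filter
      (fun p => 2*ξ + p.2 ∈ Finset.Icc (NN k + p.1) (NN k + p.1 + 20 * L k))).card)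
def M3 (k : ℕ) (F : Finset ℕ) : Finset ℕ :=
  (range (V k + DD k)).filter (fun ξ => 2 * L k ≤
    ((F ×ˢ F).filter
      (fun p => p.1 + p.2 + 2*ξ ∈ Finset.Icc (2 * NN k) (2 * NN k + 40 * L k + 1))).card)
def M4 (k : ℕ) (F : Finset ℕ) : Finset ℕ :=
  (range (V k + DD k)).filter (fun ξ => 2 * L k ≤
    (F.filter (fun y => 3*ξ + y ∈ Finset.Icc (2 * NN k) (2 * NN k + 40 * L k + 1))).card)

def CBad (k : ℕ) (F : Finset ℕ) : Finset ℕ :=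
  B1 F ∪ B2 F ∪ Gp k F ∪ M1 k F ∪ M2 k F ∪ M3 k F ∪ M4 k F

def WBad (k c : ℕ) (F : Finset ℕ) : Finset ℕ := B1 (insert c F) ∪ B2 (insert c F)

def csSet (k : ℕ) (F : Finset ℕ) : Finset ℕ :=
  (Finset.Ico (V k) (V k + DD k)) \ CBad k F
def wsSet (k c : ℕ) (F : Finset ℕ) : Finset ℕ :=
  (Finset.Icc (NN k - c) (NN k - c + 20 * L k)) \ WBad k c F

def cpick (k : ℕ) (F : Finset ℕ) : ℕ :=
  if h : (csSet k F).Nonempty then (csSet k F).min' h else 0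
def wpick (k : ℕ) (F : Finset ℕ) : ℕ :=
  if h : (wsSet k (cpick k F) F).Nonempty then (wsSet k (cpick k F) F).min' h else 0

def SS : ℕ → Finset ℕ
  | 0 => ∅
  | s + 1 => insert (wpick (blk s) (SS s)) (insert (cpick (blk s) (SS s)) (SS s))

def cc (s : ℕ) : ℕ := cpick (blk s) (SS s)
def ww (s : ℕ) : ℕ := wpick (blk s) (SS s)

lemma SS_succ (s : ℕ) : SS (s+1) = insert (ww s) (insert (cc s) (SS s)) := rfl

lemma SS_mono : Monotone SS := by
  refine monotone_nat_of_le_succ ?_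
  intro s
  rw [SS_succ]
  exact subset_trans (subset_insert _ _) (subset_insert _ _)

lemma mem_SS {x s : ℕ} : x ∈ SS s ↔ ∃ s' < s, x = cc s' ∨ x = ww s' := by
  induction s with
  | zero => simp [SS]
  | succ n ih =>
      rw [SS_succ]
      simp only [mem_insert, ih]
      constructor
      · rintro (h | h | ⟨s', hs', h⟩)
        · exact ⟨n, by omega, Or.inr h⟩
        · exact ⟨n, by omega, Or.inl h⟩
        · exact ⟨s', by omega, h⟩
      · rintro ⟨s', hs', h⟩
        rcases Nat.lt_succ_iff_lt_or_eq.mp hs' with h' | rfl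
        · exact Or.inr (Or.inr ⟨s', h', h⟩)
        · exact h.elim (fun h => Or.inr (Or.inl h)) (fun h => Or.inl h)

def Sidon (F : Finset ℕ) : Prop :=
  ∀ w ∈ F, ∀ x ∈ F, ∀ y ∈ F, ∀ z ∈ F, w + x = y + z → (w = y ∧ x = z) ∨ (w = z ∧ x = y)

end S10
namespace S10
open Finset

lemma F_subset_B1 (F : Finset ℕ) : F ⊆ B1 F := by
  intro x hx
  simp only [B1, Finset.mem_image]
  exact ⟨((x, x), x), by simp [Finset.mem_product, hx], show x + x - x = x by omega⟩

lemma not_mem_B1' {F : Finset ℕ} {u : ℕ} (h : u ∉ B1 F) :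
    ∀ x ∈ F, ∀ y ∈ F, ∀ z ∈ F, u + x ≠ y + z := by
  intro x hx y hy z hz he
  apply h
  simp only [B1, Finset.mem_image]
  exact ⟨((y, z), x), by simp [Finset.mem_product, hx, hy, hz], show y + z - x = u by omega⟩

lemma not_mem_B2' {F : Finset ℕ} {u : ℕ} (h : u ∉ B2 F) :
    ∀ y ∈ F, ∀ z ∈ F, u + u ≠ y + z := by
  intro y hy z hz he
  apply h
  simp only [B2, Finset.mem_image]
  exact ⟨(y, z), by simp [Finset.mem_product, hy, hz], show (y + z) / 2 = u by omega⟩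

lemma sidon_insert {F : Finset ℕ} {u : ℕ} (hF : Sidon F) (h1 : u ∉ B1 F) (h2 : u ∉ B2 F) :
    Sidon (insert u F) := by
  have hu : u ∉ F := fun hm => h1 (F_subset_B1 F hm)
  have H1 := not_mem_B1' h1
  have H2 := not_mem_B2' h2
  intro w hw x hx y hy z hz he
  simp only [Finset.mem_insert] at hw hx hy hz
  rcases hw with rfl | hw <;> rcases hx with rfl | hx <;>
    rcases hy with rfl | hy <;> rcases hz with rfl | hz
  all_goals first
    | omega
    | exact hF _ hw _ hx _ hy _ hz he
    | exact ((H1 _ hx _ hy _ hz) he).elim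
    | exact ((H1 _ hw _ hy _ hz) (by omega)).elim
    | exact ((H1 _ hz _ hw _ hx) (by omega)).elim
    | exact ((H1 _ hy _ hw _ hx) (by omega)).elim
    | exact ((H2 _ hy _ hz) he).elim
    | exact ((H2 _ hw _ hx) (by omega)).elim
    | (exact absurd (show u ∈ F by
        first
          | (have : z = u := by omega; exact this ▸ hz)
          | (have : y = u := by omega; exact this ▸ hy)
          | (have : x = u := by omega; exact this ▸ hx)
          | (have : w = u := by omega; exact this ▸ hw)) hu)

lemma double_count {α : Type*} [DecidableEq α] (F : Finset α) (Pr : ℕ → α → Prop)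
    [∀ ξ a, Decidable (Pr ξ a)] (M m θ : ℕ)
    (hm : ∀ a ∈ F, ((Finset.range M).filter (fun ξ => Pr ξ a)).card ≤ m) :
    θ * (((Finset.range M).filter (fun ξ => θ ≤ (F.filter (Pr ξ)).card)).card) ≤ F.card * m := by
  set T := (Finset.range M).filter (fun ξ => θ ≤ (F.filter (Pr ξ)).card) with hT
  calc θ * T.card = ∑ ξ ∈ T, θ := by rw [Finset.sum_const, smul_eq_mul, mul_comm]
    _ ≤ ∑ ξ ∈ T, (F.filter (Pr ξ)).card := by
        refine Finset.sum_le_sum ?_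
        intro ξ hξ
        exact (Finset.mem_filter.mp hξ).2
    _ ≤ ∑ ξ ∈ Finset.range M, (F.filter (Pr ξ)).card := by
        refine Finset.sum_le_sum_of_subset ?_
        rw [hT]; exact Finset.filter_subset _ _
    _ = ∑ ξ ∈ Finset.range M, ∑ a ∈ F, if Pr ξ a then 1 else 0 :=
        Finset.sum_congr rfl fun ξ _ => Finset.card_filter _ _
    _ = ∑ a ∈ F, ∑ ξ ∈ Finset.range M, if Pr ξ a then 1 else 0 := Finset.sum_comm
    _ = ∑ a ∈ F, ((Finset.range M).filter (fun ξ => Pr ξ a)).card :=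
        Finset.sum_congr rfl fun a _ => (Finset.card_filter _ _).symm
    _ ≤ ∑ a ∈ F, m := Finset.sum_le_sum hm
    _ = F.card * m := by rw [Finset.sum_const, smul_eq_mul]

lemma count_window (M : ℕ) (pr : ℕ → Prop) [DecidablePred pr] (q r : ℕ)
    (h : ∀ ξ, pr ξ → q ≤ ξ ∧ ξ ≤ r) :
    ((Finset.range M).filter (fun ξ => pr ξ)).card ≤ r + 1 - q := by
  have hsub : (Finset.range M).filter (fun ξ => pr ξ) ⊆ Finset.Icc q r := by
    intro ξ hξ
    have := (Finset.mem_filter.mp hξ).2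
    rcases h ξ this with ⟨h1, h2⟩
    exact Finset.mem_Icc.mpr ⟨h1, h2⟩
  calc _ ≤ (Finset.Icc q r).card := Finset.card_le_card hsub
    _ = r + 1 - q := Nat.card_Icc q r

end S10
namespace S10
open Finset

lemma card_SS_le (s : ℕ) : (SS s).card ≤ 2 * s := by
  induction s with
  | zero => simp [SS]
  | succ n ih =>
      rw [SS_succ]
      calc (insert (ww n) (insert (cc n) (SS n))).card
          ≤ (insert (cc n) (SS n)).card + 1 := Finset.card_insert_le _ _
        _ ≤ (SS n).card + 1 + 1 := by
            have := Finset.card_insert_le (cc n) (SS n); omega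
        _ ≤ 2 * (n + 1) := by omega

lemma threeP (k : ℕ) : 3 * P k + 1 = 4 ^ k := by
  induction k with
  | zero => simp [P]
  | succ n ih =>
      simp only [P, L]
      have : (4:ℕ)^(n+1) = 4 * 4^n := by ring
      omega

lemma card_SS_bound (s : ℕ) : 3 * (SS s).card ≤ 8 * L (blk s) := by
  have h1 := card_SS_le s
  have h2 := blk_lt s
  have h3 := threeP (blk s + 1)
  have h4 : (4:ℕ)^(blk s + 1) = 4 * L (blk s) := by rw [L]; ring
  omega

lemma card_triple (F : Finset ℕ) : ((F ×ˢ F) ×ˢ F).card = F.card ^ 3 := by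
  simp [Finset.card_product]; ring

lemma card_pair (F : Finset ℕ) : (F ×ˢ F).card = F.card ^ 2 := by
  simp [Finset.card_product]; ring

lemma M1_card (k : ℕ) (F : Finset ℕ) : 10 * L k * (M1 k F).card ≤ F.card ^ 3 * (21 * L k) := by
  have hL := L_pos k
  have h := double_count ((F ×ˢ F) ×ˢ F)
    (fun ξ p => p.1.1 + p.1.2 + ξ ∈ Finset.Icc (p.2 + NN k) (p.2 + NN k + 20 * L k))
    (V k + DD k) (21 * L k) (10 * L k) ?_
  · rw [card_triple] at h
    exact h
  · intro p _
    have hcw := count_window (V k + DD k)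
      (fun ξ => p.1.1 + p.1.2 + ξ ∈ Finset.Icc (p.2 + NN k) (p.2 + NN k + 20 * L k))
      ((p.2 + NN k) - (p.1.1 + p.1.2)) ((p.2 + NN k + 20 * L k) - (p.1.1 + p.1.2))
      (by intro ξ hξ; simp only [Finset.mem_Icc] at hξ; omega)
    refine le_trans hcw (by omega)

lemma M2_card (k : ℕ) (F : Finset ℕ) : 4 * L k * (M2 k F).card ≤ F.card ^ 2 * (12 * L k) := by
  have hL := L_pos k
  have h := double_count (F ×ˢ F)
    (fun ξ p => 2*ξ + p.2 ∈ Finset.Icc (NN k + p.1) (NN k + p.1 + 20 * L k))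
    (V k + DD k) (12 * L k) (4 * L k) ?_
  · rw [card_pair] at h
    exact h
  · intro p _
    have hcw := count_window (V k + DD k)
      (fun ξ => 2*ξ + p.2 ∈ Finset.Icc (NN k + p.1) (NN k + p.1 + 20 * L k))
      ((NN k + p.1 - p.2) / 2) ((NN k + p.1 + 20 * L k - p.2) / 2)
      (by intro ξ hξ; simp only [Finset.mem_Icc] at hξ; omega)
    refine le_trans hcw (by omega)

lemma M3_card (k : ℕ) (F : Finset ℕ) : 2 * L k * (M3 k F).card ≤ F.card ^ 2 * (22 * L k) := by
  have hL := L_pos k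
  have h := double_count (F ×ˢ F)
    (fun ξ p => p.1 + p.2 + 2*ξ ∈ Finset.Icc (2 * NN k) (2 * NN k + 40 * L k + 1))
    (V k + DD k) (22 * L k) (2 * L k) ?_
  · rw [card_pair] at h
    exact h
  · intro p _
    have hcw := count_window (V k + DD k)
      (fun ξ => p.1 + p.2 + 2*ξ ∈ Finset.Icc (2 * NN k) (2 * NN k + 40 * L k + 1))
      ((2 * NN k - (p.1 + p.2)) / 2) ((2 * NN k + 40 * L k + 1 - (p.1 + p.2)) / 2)
      (by intro ξ hξ; simp only [Finset.mem_Icc] at hξ; omega)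
    refine le_trans hcw (by omega)

lemma M4_card (k : ℕ) (F : Finset ℕ) : 2 * L k * (M4 k F).card ≤ F.card * (16 * L k) := by
  have hL := L_pos k
  have h := double_count F
    (fun ξ y => 3*ξ + y ∈ Finset.Icc (2 * NN k) (2 * NN k + 40 * L k + 1))
    (V k + DD k) (16 * L k) (2 * L k) ?_
  · exact h
  · intro y _
    have hcw := count_window (V k + DD k)
      (fun ξ => 3*ξ + y ∈ Finset.Icc (2 * NN k) (2 * NN k + 40 * L k + 1))
      ((2 * NN k - y) / 3) ((2 * NN k + 40 * L k + 1 - y) / 3)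
      (by intro ξ hξ; simp only [Finset.mem_Icc] at hξ; omega)
    refine le_trans hcw (by omega)

lemma CBad_card (s : ℕ) : (CBad (blk s) (SS s)).card < DD (blk s) := by
  set k := blk s
  set F := SS s
  set n := F.card with hn
  have hL := L_pos k
  have hbound : 3 * n ≤ 8 * L k := card_SS_bound s
  have hB1 : (B1 F).card ≤ n^3 := by
    refine le_trans (Finset.card_image_le) ?_
    rw [card_triple]
  have hB2 : (B2 F).card ≤ n^2 := by
    refine le_trans (Finset.card_image_le) ?_
    rw [card_pair]
  have hGp : (Gp k F).card ≤ n * (100 * L k + 1) := by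
    refine le_trans (Finset.card_biUnion_le) ?_
    calc ∑ x ∈ F, (Finset.Icc (x - 50 * L k) (x + 50 * L k)).card
        ≤ ∑ _x ∈ F, (100 * L k + 1) :=
          Finset.sum_le_sum (fun x _ => by rw [Nat.card_Icc]; omega)
      _ = n * (100 * L k + 1) := by rw [Finset.sum_const, smul_eq_mul]
  have hM1 : (M1 k F).card ≤ 3 * n^3 := by
    have h := M1_card k F
    have : 10 * L k * (M1 k F).card ≤ 10 * L k * (3 * n^3) := by
      refine le_trans h ?_; ring_nf; nlinarith [hL]
    exact Nat.le_of_mul_le_mul_left this (by omega)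
  have hM2 : (M2 k F).card ≤ 3 * n^2 := by
    have h := M2_card k F
    have : 4 * L k * (M2 k F).card ≤ 4 * L k * (3 * n^2) := by
      refine le_trans h ?_; nlinarith [hL]
    exact Nat.le_of_mul_le_mul_left this (by omega)
  have hM3 : (M3 k F).card ≤ 11 * n^2 := by
    have h := M3_card k F
    have : 2 * L k * (M3 k F).card ≤ 2 * L k * (11 * n^2) := by
      refine le_trans h ?_; nlinarith [hL]
    exact Nat.le_of_mul_le_mul_left this (by omega)
  have hM4 : (M4 k F).card ≤ 8 * n := by
    have h := M4_card k F
    have : 2 * L k * (M4 k F).card ≤ 2 * L k * (8 * n) := by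
      refine le_trans h ?_; nlinarith [hL]
    exact Nat.le_of_mul_le_mul_left this (by omega)
  have htot : (CBad k F).card ≤ 4*n^3 + 15*n^2 + n * (100 * L k + 1) + 8*n := by
    simp only [CBad]
    calc (B1 F ∪ B2 F ∪ Gp k F ∪ M1 k F ∪ M2 k F ∪ M3 k F ∪ M4 k F).card
        ≤ (B1 F).card + (B2 F).card + (Gp k F).card + (M1 k F).card
          + (M2 k F).card + (M3 k F).card + (M4 k F).card := by
          refine le_trans (Finset.card_union_le _ _) ?_
          have h1 := Finset.card_union_le (B1 F ∪ B2 F ∪ Gp k F ∪ M1 k F ∪ M2 k F) (M3 k F)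
          have h2 := Finset.card_union_le (B1 F ∪ B2 F ∪ Gp k F ∪ M1 k F) (M2 k F)
          have h3 := Finset.card_union_le (B1 F ∪ B2 F ∪ Gp k F) (M1 k F)
          have h4 := Finset.card_union_le (B1 F ∪ B2 F) (Gp k F)
          have h5 := Finset.card_union_le (B1 F) (B2 F)
          omega
      _ ≤ 4*n^3 + 15*n^2 + n * (100 * L k + 1) + 8*n := by omega
  have hfin : 4*n^3 + 15*n^2 + n * (100 * L k + 1) + 8*n < 750 * (L k)^3 := by
    have h3 : (3*n)^3 ≤ (8 * L k)^3 := Nat.pow_le_pow_left hbound 3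
    have h2 : (3*n)^2 ≤ (8 * L k)^2 := Nat.pow_le_pow_left hbound 2
    nlinarith [hL, sq_nonneg (L k), sq_nonneg n]
  simp only [DD]
  omega

lemma csSet_nonempty (s : ℕ) : (csSet (blk s) (SS s)).Nonempty := by
  have h1 := CBad_card s
  have h2 : (Finset.Ico (V (blk s)) (V (blk s) + DD (blk s))).card = DD (blk s) := by
    rw [Nat.card_Ico]; omega
  rw [← Finset.card_pos]
  have h3 := Finset.card_le_card_sdiff_add_card (s := Finset.Ico (V (blk s)) (V (blk s) + DD (blk s)))
    (t := CBad (blk s) (SS s))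
  simp only [csSet]
  omega

end S10
namespace S10
open Finset

def Good (s : ℕ) : Prop := (wsSet (blk s) (cc s) (SS s)).Nonempty

lemma cc_mem (s : ℕ) : cc s ∈ csSet (blk s) (SS s) := by
  have h := csSet_nonempty s
  have : cc s = (csSet (blk s) (SS s)).min' h := by
    simp [cc, cpick, dif_pos h]
  rw [this]
  exact Finset.min'_mem _ _

lemma cc_min (s : ℕ) {v : ℕ} (hv : v ∈ csSet (blk s) (SS s)) : cc s ≤ v := by
  have h := csSet_nonempty s
  have : cc s = (csSet (blk s) (SS s)).min' h := by
    simp [cc, cpick, dif_pos h]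
  rw [this]
  exact Finset.min'_le _ _ hv

lemma ww_mem {s : ℕ} (g : Good s) : ww s ∈ wsSet (blk s) (cc s) (SS s) := by
  have h := g
  have : ww s = (wsSet (blk s) (cc s) (SS s)).min' h := by
    simp only [ww, wpick, cc]
    rw [dif_pos]
  rw [this]
  exact Finset.min'_mem _ _

lemma cc_range (s : ℕ) :
    V (blk s) ≤ cc s ∧ cc s < V (blk s) + DD (blk s) := by
  have := cc_mem s
  simp only [csSet, Finset.mem_sdiff, Finset.mem_Ico] at this
  exact this.1

lemma cc_nb (s : ℕ) : cc s ∉ CBad (blk s) (SS s) := by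
  have := cc_mem s
  simp only [csSet, Finset.mem_sdiff] at this
  exact this.2

lemma ww_range {s : ℕ} (g : Good s) :
    NN (blk s) - cc s ≤ ww s ∧ ww s ≤ NN (blk s) - cc s + 20 * L (blk s) := by
  have := ww_mem g
  simp only [wsSet, Finset.mem_sdiff, Finset.mem_Icc] at this
  exact this.1

lemma ww_nb {s : ℕ} (g : Good s) : ww s ∉ WBad (blk s) (cc s) (SS s) := by
  have := ww_mem g
  simp only [wsSet, Finset.mem_sdiff] at this
  exact this.2

lemma LL (k : ℕ) : (L k)^3 = 64^k := by
  rw [L, ← pow_mul, mul_comm, pow_mul]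
  norm_num

lemma L_cube_le {j k : ℕ} (h : j < k) : 64 * (L j)^3 ≤ (L k)^3 := by
  rw [LL, LL]
  calc 64 * 64^j = 64^(j+1) := by ring
    _ ≤ 64^k := Nat.pow_le_pow_right (by norm_num) h

lemma L_le_cube (k : ℕ) : L k ≤ (L k)^3 :=
  Nat.le_self_pow (by norm_num) _

-- monotonicity of CBad in F
lemma B1_mono {F F' : Finset ℕ} (h : F ⊆ F') : B1 F ⊆ B1 F' :=
  Finset.image_subset_image (Finset.product_subset_product (Finset.product_subset_product h h) h)

lemma B2_mono {F F' : Finset ℕ} (h : F ⊆ F') : B2 F ⊆ B2 F' :=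
  Finset.image_subset_image (Finset.product_subset_product h h)

lemma CBad_mono {k : ℕ} {F F' : Finset ℕ} (h : F ⊆ F') : CBad k F ⊆ CBad k F' := by
  have hPP : (F ×ˢ F) ×ˢ F ⊆ (F' ×ˢ F') ×ˢ F' :=
    Finset.product_subset_product (Finset.product_subset_product h h) h
  have hP : F ×ˢ F ⊆ F' ×ˢ F' := Finset.product_subset_product h h
  simp only [CBad, M1, M2, M3, M4]
  gcongr ?_ ∪ ?_ ∪ ?_ ∪ ?_ ∪ ?_ ∪ ?_ ∪ ?_
  · exact B1_mono h
  · exact B2_mono h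
  · exact Finset.biUnion_subset_biUnion_of_subset_left _ h
  all_goals
    intro ξ hξ
    simp only [Finset.mem_filter] at hξ ⊢
    refine ⟨hξ.1, le_trans hξ.2 (Finset.card_le_card ?_)⟩
    first
      | exact Finset.filter_subset_filter _ hPP
      | exact Finset.filter_subset_filter _ hP
      | exact Finset.filter_subset_filter _ h

lemma mem_Gp_self {k x : ℕ} {F : Finset ℕ} (hx : x ∈ F) : x ∈ Gp k F := by
  simp only [Gp, Finset.mem_biUnion]
  exact ⟨x, hx, by simp only [Finset.mem_Icc]; omega⟩

lemma Gp_subset_CBad (k : ℕ) (F : Finset ℕ) : Gp k F ⊆ CBad k F := by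
  intro x hx; simp only [CBad, Finset.mem_union]; tauto

lemma B1_subset_CBad (k : ℕ) (F : Finset ℕ) : B1 F ⊆ CBad k F := by
  intro x hx; simp only [CBad, Finset.mem_union]; tauto

lemma B2_subset_CBad (k : ℕ) (F : Finset ℕ) : B2 F ⊆ CBad k F := by
  intro x hx; simp only [CBad, Finset.mem_union]; tauto

-- ordering / gaps between c's in the same block
lemma cc_gap {s1 s2 : ℕ} (h12 : s1 < s2) (hb : blk s1 = blk s2) :
    cc s1 + 50 * L (blk s2) < cc s2 := by
  have hmem : cc s1 ∈ SS s2 := mem_SS.mpr ⟨s1, h12, Or.inl rfl⟩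
  have hgp : cc s2 ∉ Gp (blk s2) (SS s2) :=
    fun h => cc_nb s2 (Gp_subset_CBad _ _ h)
  have hball : cc s2 ∉ Finset.Icc (cc s1 - 50 * L (blk s2)) (cc s1 + 50 * L (blk s2)) := by
    intro h
    exact hgp (Finset.mem_biUnion.mpr ⟨cc s1, hmem, h⟩)
  have hord : cc s1 ≤ cc s2 := by
    by_contra hlt
    push_neg at hlt
    -- cc s2 would have been a valid earlier choice
    have hnb2 : cc s2 ∉ CBad (blk s2) (SS s2) := cc_nb s2
    have hnb1 : cc s2 ∉ CBad (blk s1) (SS s1) := by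
      rw [hb]
      exact fun h => hnb2 (CBad_mono (SS_mono h12.le) h)
    have hmm : cc s2 ∈ csSet (blk s1) (SS s1) := by
      simp only [csSet, Finset.mem_sdiff, Finset.mem_Ico]
      have := cc_range s2
      rw [← hb] at this
      exact ⟨this, hnb1⟩
    exact absurd (cc_min s1 hmm) (by omega)
  simp only [Finset.mem_Icc] at hball
  push_neg at hball
  omega

-- classification of elements of SS s
lemma elem_classify {s x : ℕ} (H : ∀ s' < s, Good s') (hx : x ∈ SS s) :
    (∃ s', P (blk s) ≤ s' ∧ s' < s ∧ blk s' = blk s ∧ (x = cc s' ∨ x = ww s')) ∨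
    64 * x ≤ 7020 * (L (blk s))^3 := by
  rcases mem_SS.mp hx with ⟨s', hs', hcw⟩
  have g := H s' hs'
  have hble : blk s' ≤ blk s := blk_mono hs'.le
  rcases lt_or_eq_of_le hble with hlt | heq
  · right
    have hub : x ≤ 7020 * (L (blk s'))^3 := by
      have h20 : 20 * L (blk s') ≤ 20 * (L (blk s'))^3 :=
        Nat.mul_le_mul_left _ (L_le_cube _)
      rcases hcw with rfl | rfl
      · have := cc_range s'
        simp only [V, DD] at this
        omega
      · have := ww_range g
        have := cc_range s'
        simp only [V, DD, NN] at *
        omega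
    calc 64 * x ≤ 64 * (7020 * (L (blk s'))^3) := Nat.mul_le_mul_left _ hub
      _ = 7020 * (64 * (L (blk s'))^3) := by ring
      _ ≤ 7020 * (L (blk s))^3 := Nat.mul_le_mul_left _ (L_cube_le hlt)
  · left
    exact ⟨s', heq ▸ P_blk_le s', hs', heq, hcw⟩

lemma elem_le {s x : ℕ} (H : ∀ s' < s, Good s') (hx : x ∈ SS s) :
    x ≤ 7020 * (L (blk s))^3 := by
  rcases elem_classify H hx with ⟨s', _, hs', hbe, hcw⟩ | h
  · have g := H s' hs'
    have h20 : 20 * L (blk s') ≤ 20 * (L (blk s'))^3 :=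
      Nat.mul_le_mul_left _ (L_le_cube _)
    have hc := cc_range s'
    have hw := ww_range g
    rw [hbe] at hc hw h20
    rcases hcw with rfl | rfl
    · simp only [V, DD] at hc; omega
    · simp only [V, DD, NN] at *; omega
  · have := L_pos (blk s)
    have : 1 ≤ (L (blk s))^3 := Nat.one_le_iff_ne_zero.mpr (by positivity)
    omega

end S10
namespace S10
open Finset

lemma window_avoid {s : ℕ} (IH : ∀ s' < s, Good s') {x : ℕ} (hx : x ∈ SS s)
    (h1 : NN (blk s) - cc s ≤ x) (h2 : x ≤ NN (blk s) - cc s + 20 * L (blk s)) : False := by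
  have hL := L_pos (blk s)
  have hE : L (blk s) ≤ (L (blk s))^3 := L_le_cube (blk s)
  have hc := cc_range s
  rcases elem_classify IH hx with ⟨s', _, hs', hbe, hcw⟩ | hold
  · have hgap : cc s' + 50 * L (blk s) < cc s := cc_gap hs' hbe
    rcases hcw with rfl | rfl
    · have hcs' := cc_range s'
      rw [hbe] at hcs'
      simp only [NN, V, DD] at *
      omega
    · have hww := ww_range (IH s' hs')
      have hcc' := cc_range s'
      rw [hbe] at hww hcc'
      simp only [NN, V, DD] at *
      omega
  · simp only [NN, V, DD] at *
    omega

lemma diag_card {s : ℕ} (IH : ∀ s' < s, Good s') :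
    ((SS s ×ˢ SS s).filter
      (fun p => p.1 + p.2 ∈ Finset.Icc (NN (blk s)) (NN (blk s) + 20 * L (blk s)))).card
      ≤ 2 * L (blk s) - 2 := by
  have hL := L_pos (blk s)
  have hE : L (blk s) ≤ (L (blk s))^3 := L_le_cube (blk s)
  have hsub : ((SS s ×ˢ SS s).filter
      (fun p => p.1 + p.2 ∈ Finset.Icc (NN (blk s)) (NN (blk s) + 20 * L (blk s))))
      ⊆ (Finset.Ico (P (blk s)) s).biUnion
        (fun j => {(cc j, ww j), (ww j, cc j)}) := by
    rintro ⟨y, z⟩ hp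
    rw [Finset.mem_filter] at hp
    obtain ⟨hmem, hsum⟩ := hp
    rw [Finset.mem_product] at hmem
    obtain ⟨hy, hz⟩ := hmem
    simp only [Finset.mem_Icc] at hsum
    have hYle := elem_le IH hy
    have hZle := elem_le IH hz
    rcases elem_classify IH hy with ⟨s1, hP1, hs1, hb1, hcw1⟩ | hold1
    · rcases elem_classify IH hz with ⟨s2, hP2, hs2, hb2, hcw2⟩ | hold2
      · -- both in current block
        rcases hcw1 with rfl | rfl <;> rcases hcw2 with rfl | rfl
        · -- cc, cc : sum too small
          have r1 := cc_range s1; have r2 := cc_range s2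
          rw [hb1] at r1; rw [hb2] at r2
          simp only [NN, V, DD] at *
          omega
        · -- cc, ww : s1 = s2 forced
          have r1 := cc_range s1; have r2 := cc_range s2
          have w2 := ww_range (IH s2 hs2)
          rw [hb1] at r1; rw [hb2] at r2 w2
          rcases lt_trichotomy s1 s2 with h12 | h12 | h12
          · have hgap := cc_gap h12 (hb1.trans hb2.symm)
            rw [hb2] at hgap
            simp only [NN, V, DD] at *
            omega
          · subst h12
            simp only [Finset.mem_biUnion]
            refine ⟨s1, Finset.mem_Ico.mpr ⟨hP1, hs1⟩, ?_⟩
            simp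
          · have hgap := cc_gap h12 (hb2.trans hb1.symm)
            rw [hb1] at hgap
            simp only [NN, V, DD] at *
            omega
        · -- ww, cc : symmetric
          have r1 := cc_range s1; have r2 := cc_range s2
          have w1 := ww_range (IH s1 hs1)
          rw [hb1] at r1 w1; rw [hb2] at r2
          rcases lt_trichotomy s1 s2 with h12 | h12 | h12
          · have hgap := cc_gap h12 (hb1.trans hb2.symm)
            rw [hb2] at hgap
            simp only [NN, V, DD] at *
            omega
          · subst h12
            simp only [Finset.mem_biUnion]
            refine ⟨s1, Finset.mem_Ico.mpr ⟨hP1, hs1⟩, ?_⟩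
            simp
          · have hgap := cc_gap h12 (hb2.trans hb1.symm)
            rw [hb1] at hgap
            simp only [NN, V, DD] at *
            omega
        · -- ww, ww : sum too big
          have r1 := cc_range s1; have r2 := cc_range s2
          have w1 := ww_range (IH s1 hs1)
          have w2 := ww_range (IH s2 hs2)
          rw [hb1] at r1 w1; rw [hb2] at r2 w2
          simp only [NN, V, DD] at *
          omega
      · -- z old : sum too small
        simp only [NN, V, DD] at *
        omega
    · -- y old : sum too small
      simp only [NN, V, DD] at *
      omega
  refine le_trans (Finset.card_le_card hsub) ?_
  refine le_trans (Finset.card_biUnion_le) ?_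
  have hle : ∀ j ∈ Finset.Ico (P (blk s)) s,
      ({(cc j, ww j), (ww j, cc j)} : Finset (ℕ × ℕ)).card ≤ 2 := by
    intro j _
    refine le_trans (Finset.card_insert_le _ _) ?_
    simp
  refine le_trans (Finset.sum_le_sum hle) ?_
  rw [Finset.sum_const, smul_eq_mul, Nat.card_Ico]
  have hblt := blk_lt s
  have hP' : P (blk s + 1) = P (blk s) + L (blk s) := rfl
  omega

end S10
namespace S10
open Finset

lemma B1_insert (c : ℕ) (F : Finset ℕ) :
    B1 (insert c F) ⊆ B1 F ∪ ((F ×ˢ F).image (fun p => c + p.2 - p.1))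
      ∪ ((F ×ˢ F).image (fun p => p.1 + p.2 - c))
      ∪ (F.image (fun x => 2*c - x)) ∪ F ∪ {c} := by
  intro v hv
  simp only [B1, Finset.mem_image] at hv
  obtain ⟨⟨⟨y, z⟩, x⟩, hmem, hval⟩ := hv
  have hv2 : y + z - x = v := hval
  simp only [Finset.mem_product, Finset.mem_insert] at hmem
  obtain ⟨⟨hy, hz⟩, hx⟩ := hmem
  rcases hy with hyc | hyF <;> rcases hz with hzc | hzF <;> rcases hx with hxc | hxF
  · exact Finset.mem_union_right _ (Finset.mem_singleton.mpr (by omega))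
  · refine Finset.mem_union_left _ (Finset.mem_union_left _ (Finset.mem_union_right _ ?_))
    exact Finset.mem_image.mpr ⟨x, hxF, by omega⟩
  · refine Finset.mem_union_left _ (Finset.mem_union_right _ ?_)
    have : v = z := by omega
    exact this ▸ hzF
  · refine Finset.mem_union_left _ (Finset.mem_union_left _ (Finset.mem_union_left _
      (Finset.mem_union_left _ (Finset.mem_union_right _ ?_))))
    exact Finset.mem_image.mpr ⟨(x, z), Finset.mem_product.mpr ⟨hxF, hzF⟩, by simp; omega⟩
  · refine Finset.mem_union_left _ (Finset.mem_union_right _ ?_)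
    have : v = y := by omega
    exact this ▸ hyF
  · refine Finset.mem_union_left _ (Finset.mem_union_left _ (Finset.mem_union_left _
      (Finset.mem_union_left _ (Finset.mem_union_right _ ?_))))
    exact Finset.mem_image.mpr ⟨(x, y), Finset.mem_product.mpr ⟨hxF, hyF⟩, by simp; omega⟩
  · refine Finset.mem_union_left _ (Finset.mem_union_left _ (Finset.mem_union_left _
      (Finset.mem_union_right _ ?_)))
    exact Finset.mem_image.mpr ⟨(y, z), Finset.mem_product.mpr ⟨hyF, hzF⟩, by simp; omega⟩
  · refine Finset.mem_union_left _ (Finset.mem_union_left _ (Finset.mem_union_left _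
      (Finset.mem_union_left _ (Finset.mem_union_left _ ?_))))
    exact Finset.mem_image.mpr ⟨((y, z), x),
      Finset.mem_product.mpr ⟨Finset.mem_product.mpr ⟨hyF, hzF⟩, hxF⟩, hv2⟩

lemma B2_insert (c : ℕ) (F : Finset ℕ) :
    B2 (insert c F) ⊆ B2 F ∪ (F.image (fun y => (y + c)/2)) ∪ {c} := by
  intro v hv
  simp only [B2, Finset.mem_image] at hv
  obtain ⟨⟨y, z⟩, hmem, hval⟩ := hv
  have hv2 : (y + z) / 2 = v := hval
  simp only [Finset.mem_product, Finset.mem_insert] at hmem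
  obtain ⟨hy, hz⟩ := hmem
  rcases hy with hyc | hyF <;> rcases hz with hzc | hzF
  · exact Finset.mem_union_right _ (Finset.mem_singleton.mpr (by omega))
  · refine Finset.mem_union_left _ (Finset.mem_union_right _ ?_)
    exact Finset.mem_image.mpr ⟨z, hzF, by omega⟩
  · refine Finset.mem_union_left _ (Finset.mem_union_right _ ?_)
    exact Finset.mem_image.mpr ⟨y, hyF, by omega⟩
  · refine Finset.mem_union_left _ (Finset.mem_union_left _ ?_)
    exact Finset.mem_image.mpr ⟨(y, z), Finset.mem_product.mpr ⟨hyF, hzF⟩, hv2⟩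

end S10
namespace S10
open Finset

lemma good_all : ∀ s, Good s := by
  intro s
  induction s using Nat.strong_induction_on with
  | _ s IH =>
  have hL := L_pos (blk s)
  have hE : L (blk s) ≤ (L (blk s))^3 := L_le_cube (blk s)
  have hc := cc_range s
  have hcb := cc_nb s
  set k := blk s with hk
  set F := SS s with hFdef
  set c := cc s with hcdef
  have hE1 : 1 ≤ (L k)^3 := le_trans hL hE
  have hcNN : c < NN k := by simp only [NN, V, DD] at hc ⊢; omega
  set W := Finset.Icc (NN k - c) (NN k - c + 20 * L k) with hW
  have hWcard : W.card = 20 * L k + 1 := by rw [hW, Nat.card_Icc]; omega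
  set C1 := (((F ×ˢ F) ×ˢ F).filter (fun p => p.1.1 + p.1.2 + c ∈
    Finset.Icc (p.2 + NN k) (p.2 + NN k + 20 * L k))).image
    (fun p => p.1.1 + p.1.2 - p.2) with hC1
  set C2 := ((F ×ˢ F).filter (fun p => 2*c + p.2 ∈
    Finset.Icc (NN k + p.1) (NN k + p.1 + 20 * L k))).image
    (fun p => c + p.2 - p.1) with hC2
  set C3 := ((F ×ˢ F).filter (fun p => p.1 + p.2 ∈
    Finset.Icc (NN k) (NN k + 20 * L k))).image
    (fun p => p.1 + p.2 - c) with hC3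
  set C7 := ((F ×ˢ F).filter (fun p => p.1 + p.2 + 2*c ∈
    Finset.Icc (2 * NN k) (2 * NN k + 40 * L k + 1))).image
    (fun p => (p.1 + p.2)/2) with hC7
  set C8 := (F.filter (fun y => 3*c + y ∈
    Finset.Icc (2 * NN k) (2 * NN k + 40 * L k + 1))).image
    (fun y => (y + c)/2) with hC8
  have hcrange : c ∈ Finset.range (V k + DD k) := Finset.mem_range.mpr (by omega)
  have hnM1 : c ∉ M1 k F := fun h => hcb (Finset.mem_union_left _
    (Finset.mem_union_left _ (Finset.mem_union_left _ (Finset.mem_union_right _ h))))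
  have hnM2 : c ∉ M2 k F := fun h => hcb (Finset.mem_union_left _
    (Finset.mem_union_left _ (Finset.mem_union_right _ h)))
  have hnM3 : c ∉ M3 k F := fun h => hcb (Finset.mem_union_left _
    (Finset.mem_union_right _ h))
  have hnM4 : c ∉ M4 k F := fun h => hcb (Finset.mem_union_right _ h)
  have hcard1 : C1.card ≤ 10 * L k - 1 := by
    refine le_trans Finset.card_image_le ?_
    by_contra hcon
    push_neg at hcon
    exact hnM1 (Finset.mem_filter.mpr ⟨hcrange, by omega⟩)
  have hcard2 : C2.card ≤ 4 * L k - 1 := by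
    refine le_trans Finset.card_image_le ?_
    by_contra hcon
    push_neg at hcon
    exact hnM2 (Finset.mem_filter.mpr ⟨hcrange, by omega⟩)
  have hcard3 : C3.card ≤ 2 * L k - 2 :=
    le_trans Finset.card_image_le (diag_card IH)
  have hcard7 : C7.card ≤ 2 * L k - 1 := by
    refine le_trans Finset.card_image_le ?_
    by_contra hcon
    push_neg at hcon
    exact hnM3 (Finset.mem_filter.mpr ⟨hcrange, by omega⟩)
  have hcard8 : C8.card ≤ 2 * L k - 1 := by
    refine le_trans Finset.card_image_le ?_
    by_contra hcon
    push_neg at hcon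
    exact hnM4 (Finset.mem_filter.mpr ⟨hcrange, by omega⟩)
  have hsub : W ∩ WBad k c F ⊆ C1 ∪ C2 ∪ C3 ∪ C7 ∪ C8 := by
    intro v hv
    rw [Finset.mem_inter] at hv
    obtain ⟨hvW, hvB⟩ := hv
    rw [hW, Finset.mem_Icc] at hvW
    rw [WBad, Finset.mem_union] at hvB
    rcases hvB with hvB | hvB
    · have hcase := B1_insert c F hvB
      simp only [Finset.mem_union] at hcase
      rcases hcase with ((((h | h) | h) | h) | h) | h
      · -- B1 F → C1
        rw [B1, Finset.mem_image] at h
        obtain ⟨⟨⟨y, z⟩, x⟩, hm, hval⟩ := h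
        have hval' : y + z - x = v := hval
        rw [Finset.mem_product] at hm
        obtain ⟨hyz, hx⟩ := hm
        rw [Finset.mem_product] at hyz
        refine Finset.mem_union_left _ (Finset.mem_union_left _ (Finset.mem_union_left _
          (Finset.mem_union_left _ ?_)))
        rw [hC1]
        refine Finset.mem_image.mpr ⟨((y, z), x), Finset.mem_filter.mpr
          ⟨Finset.mem_product.mpr ⟨Finset.mem_product.mpr ⟨hyz.1, hyz.2⟩, hx⟩, ?_⟩, hval'⟩
        simp only [Finset.mem_Icc]
        omega
      · -- Im2 → C2
        rw [Finset.mem_image] at h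
        obtain ⟨⟨x, z⟩, hm, hval⟩ := h
        have hval' : c + z - x = v := hval
        rw [Finset.mem_product] at hm
        refine Finset.mem_union_left _ (Finset.mem_union_left _ (Finset.mem_union_left _
          (Finset.mem_union_right _ ?_)))
        rw [hC2]
        refine Finset.mem_image.mpr ⟨(x, z), Finset.mem_filter.mpr
          ⟨Finset.mem_product.mpr ⟨hm.1, hm.2⟩, ?_⟩, hval'⟩
        simp only [Finset.mem_Icc]
        omega
      · -- Im3 → C3
        rw [Finset.mem_image] at h
        obtain ⟨⟨y, z⟩, hm, hval⟩ := h
        have hval' : y + z - c = v := hval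
        rw [Finset.mem_product] at hm
        refine Finset.mem_union_left _ (Finset.mem_union_left _ (Finset.mem_union_right _ ?_))
        rw [hC3]
        refine Finset.mem_image.mpr ⟨(y, z), Finset.mem_filter.mpr
          ⟨Finset.mem_product.mpr ⟨hm.1, hm.2⟩, ?_⟩, hval'⟩
        simp only [Finset.mem_Icc]
        omega
      · -- Im4 : impossible
        rw [Finset.mem_image] at h
        obtain ⟨x, hm, hval⟩ := h
        have hval' : 2*c - x = v := hval
        exfalso
        simp only [NN, V, DD] at hc hvW
        omega
      · -- F : impossible
        exact absurd (window_avoid IH h hvW.1 hvW.2) (by simp)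
      · -- {c} : impossible
        rw [Finset.mem_singleton] at h
        exfalso
        simp only [NN, V, DD] at hc hvW
        omega
    · have hcase := B2_insert c F hvB
      simp only [Finset.mem_union] at hcase
      rcases hcase with (h | h) | h
      · -- B2 F → C7
        rw [B2, Finset.mem_image] at h
        obtain ⟨⟨y, z⟩, hm, hval⟩ := h
        have hval' : (y + z) / 2 = v := hval
        rw [Finset.mem_product] at hm
        refine Finset.mem_union_left _ (Finset.mem_union_right _ ?_)
        rw [hC7]
        refine Finset.mem_image.mpr ⟨(y, z), Finset.mem_filter.mpr
          ⟨Finset.mem_product.mpr ⟨hm.1, hm.2⟩, ?_⟩, hval'⟩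
        simp only [Finset.mem_Icc]
        omega
      · -- Im5 → C8
        rw [Finset.mem_image] at h
        obtain ⟨y, hm, hval⟩ := h
        have hval' : (y + c) / 2 = v := hval
        refine Finset.mem_union_right _ ?_
        rw [hC8]
        refine Finset.mem_image.mpr ⟨y, Finset.mem_filter.mpr ⟨hm, ?_⟩, hval'⟩
        simp only [Finset.mem_Icc]
        omega
      · -- {c} : impossible
        rw [Finset.mem_singleton] at h
        exfalso
        simp only [NN, V, DD] at hc hvW
        omega
  have hinter : (W ∩ WBad k c F).card ≤ 20 * L k - 6 := by
    refine le_trans (Finset.card_le_card hsub) ?_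
    have h1 := Finset.card_union_le (C1 ∪ C2 ∪ C3 ∪ C7) C8
    have h2 := Finset.card_union_le (C1 ∪ C2 ∪ C3) C7
    have h3 := Finset.card_union_le (C1 ∪ C2) C3
    have h4 := Finset.card_union_le C1 C2
    omega
  have hkey : W.card ≤ (W \ WBad k c F).card + (W ∩ WBad k c F).card := by
    have h1 : W \ (W ∩ WBad k c F) = W \ WBad k c F := Finset.sdiff_inter_self_left W _
    calc W.card ≤ (W \ (W ∩ WBad k c F)).card + (W ∩ WBad k c F).card :=
          Finset.card_le_card_sdiff_add_card
      _ = (W \ WBad k c F).card + (W ∩ WBad k c F).card := by rw [h1]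
  show (wsSet k c F).Nonempty
  rw [← Finset.card_pos]
  simp only [wsSet, ← hW]
  omega

end S10
namespace S10
open Finset

lemma sidon_SS (s : ℕ) : Sidon (SS s) := by
  induction s with
  | zero => intro w hw; simp [SS] at hw
  | succ n ih =>
      rw [SS_succ]
      have h1 : cc n ∉ B1 (SS n) := fun h => cc_nb n (B1_subset_CBad _ _ h)
      have h2 : cc n ∉ B2 (SS n) := fun h => cc_nb n (B2_subset_CBad _ _ h)
      have hmid : Sidon (insert (cc n) (SS n)) := sidon_insert ih h1 h2
      have hwb := ww_nb (good_all n)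
      rw [WBad] at hwb
      have h3 : ww n ∉ B1 (insert (cc n) (SS n)) :=
        fun h => hwb (Finset.mem_union_left _ h)
      have h4 : ww n ∉ B2 (insert (cc n) (SS n)) :=
        fun h => hwb (Finset.mem_union_right _ h)
      exact sidon_insert hmid h3 h4

lemma P_mono : Monotone P := by
  refine monotone_nat_of_le_succ ?_
  intro n
  have := L_pos n
  simp [P]

lemma blk_eq_of {k s : ℕ} (h1 : P k ≤ s) (h2 : s < P (k + 1)) : blk s = k := by
  have hle : blk s ≤ k := Nat.find_min' (exists_blk s) h2
  rcases lt_or_eq_of_le hle with hlt | heq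
  · exfalso
    have hPm : P (blk s + 1) ≤ P k := P_mono hlt
    have := blk_lt s
    omega
  · exact heq

def T (k : ℕ) : ℕ := 2 * P k

lemma T_succ (k : ℕ) : T (k + 1) = T k + 2 * L k := by simp [T, P]; ring

lemma exists_blkT (t : ℕ) : ∃ k, t < T (k + 1) := by
  refine ⟨t, ?_⟩
  have := lt_P t
  simp only [T]
  omega

def blkT (t : ℕ) : ℕ := Nat.find (exists_blkT t)

lemma blkT_lt (t : ℕ) : t < T (blkT t + 1) := Nat.find_spec (exists_blkT t)

lemma T_blkT_le (t : ℕ) : T (blkT t) ≤ t := by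
  rcases h : blkT t with _ | k
  · simp [T, P]
  · have hk : k < blkT t := by omega
    have h2 := Nat.find_min (exists_blkT t) hk
    push_neg at h2
    exact h2

lemma blkT_eq_of {k t : ℕ} (h1 : T k ≤ t) (h2 : t < T (k + 1)) : blkT t = k := by
  have hle : blkT t ≤ k := Nat.find_min' (exists_blkT t) h2
  rcases lt_or_eq_of_le hle with hlt | heq
  · exfalso
    have hPm : T (blkT t + 1) ≤ T k := by
      simp only [T]
      have := P_mono (show blkT t + 1 ≤ k from hlt)
      omega
    have := blkT_lt t
    omega
  · exact heq

def aa (t : ℕ) : ℕ :=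
  if t - T (blkT t) < L (blkT t) then cc (P (blkT t) + (t - T (blkT t)))
  else ww (P (blkT t) + (2 * L (blkT t) - 1 - (t - T (blkT t))))

def bb (t : ℕ) : ℕ :=
  if t - T (blkT t) < L (blkT t) then cc (P (blkT t) + (t - T (blkT t)))
  else NN (blkT t) - cc (P (blkT t) + (2 * L (blkT t) - 1 - (t - T (blkT t))))

lemma slot_lt (t : ℕ) : t - T (blkT t) < 2 * L (blkT t) := by
  have h1 := blkT_lt t
  have h2 := T_blkT_le t
  rw [T_succ] at h1
  omega

-- step of a c-slot / w-slot is in the same block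
lemma blk_step {k i : ℕ} (hi : i < L k) : blk (P k + i) = k :=
  blk_eq_of (Nat.le_add_right _ _) (by simp only [P]; omega)

lemma aa_c {k i : ℕ} (hi : i < L k) : aa (T k + i) = cc (P k + i) := by
  have hbt : blkT (T k + i) = k := blkT_eq_of (Nat.le_add_right _ _) (by rw [T_succ]; omega)
  rw [aa, hbt]
  have : T k + i - T k = i := by omega
  rw [this, if_pos hi]

lemma aa_w {k i : ℕ} (hi : i < L k) : aa (T k + (2 * L k - 1 - i)) = ww (P k + i) := by
  have hL := L_pos k
  have hbt : blkT (T k + (2 * L k - 1 - i)) = k :=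
    blkT_eq_of (Nat.le_add_right _ _) (by rw [T_succ]; omega)
  rw [aa, hbt]
  have h1 : T k + (2 * L k - 1 - i) - T k = 2 * L k - 1 - i := by omega
  rw [h1, if_neg (by omega)]
  congr 1
  omega

lemma bb_c {k i : ℕ} (hi : i < L k) : bb (T k + i) = cc (P k + i) := by
  have hbt : blkT (T k + i) = k := blkT_eq_of (Nat.le_add_right _ _) (by rw [T_succ]; omega)
  rw [bb, hbt]
  have : T k + i - T k = i := by omega
  rw [this, if_pos hi]

lemma bb_w {k i : ℕ} (hi : i < L k) :
    bb (T k + (2 * L k - 1 - i)) = NN k - cc (P k + i) := by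
  have hL := L_pos k
  have hbt : blkT (T k + (2 * L k - 1 - i)) = k :=
    blkT_eq_of (Nat.le_add_right _ _) (by rw [T_succ]; omega)
  rw [bb, hbt]
  have h1 : T k + (2 * L k - 1 - i) - T k = 2 * L k - 1 - i := by omega
  rw [h1, if_neg (by omega)]
  congr 2
  omega

end S10
namespace S10
open Finset

lemma Lsucc_cube (k : ℕ) : (L (k+1))^3 = 64 * (L k)^3 := by
  simp only [L, pow_succ]
  ring

lemma cc_blk_range {k i : ℕ} (hi : i < L k) :
    1000*(L k)^3 ≤ cc (P k + i) ∧ cc (P k + i) < 1750*(L k)^3 := by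
  have h := cc_range (P k + i)
  rw [blk_step hi] at h
  simp only [V, DD] at h
  omega

lemma ww_blk_range {k i : ℕ} (hi : i < L k) :
    NN k - cc (P k + i) ≤ ww (P k + i) ∧
    ww (P k + i) ≤ NN k - cc (P k + i) + 20 * L k := by
  have h := ww_range (good_all (P k + i))
  rw [blk_step hi] at h
  exact h

lemma cc_gap' {k i j : ℕ} (hi : i < L k) (hj : j < L k) (hij : i < j) :
    cc (P k + i) + 50 * L k < cc (P k + j) := by
  have h := cc_gap (show P k + i < P k + j by omega)
    (by rw [blk_step hi, blk_step hj])
  rwa [blk_step hj] at h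

lemma aa_lt_succ (t : ℕ) : aa t < aa (t + 1) := by
  set k := blkT t with hk
  set r := t - T k with hr
  have hL := L_pos k
  have hE : L k ≤ (L k)^3 := L_le_cube k
  have h0 := T_blkT_le t
  rw [← hk] at h0
  have ht : t = T k + r := by omega
  have hr2 := slot_lt t
  rw [← hk] at hr2
  rw [← hr] at hr2
  rcases lt_or_ge (r+1) (L k) with hA | hBCD
  · -- both c slots
    rw [ht]
    have e1 := aa_c (show r < L k by omega)
    have e2 : aa (T k + r + 1) = cc (P k + (r+1)) := by
      have := aa_c (k := k) (i := r+1) hA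
      rw [← Nat.add_assoc] at this
      exact this
    rw [e1, e2]
    have := cc_gap' (show r < L k by omega) hA (by omega)
    omega
  · rcases lt_or_ge r (L k) with hB | hCD
    · -- c slot to w slot, r = L k - 1
      have hreq : r = L k - 1 := by omega
      rw [ht]
      have e1 := aa_c (show r < L k by omega)
      have e2 : aa (T k + r + 1) = ww (P k + (L k - 1)) := by
        have := aa_w (k := k) (i := L k - 1) (by omega)
        have harg : T k + (2 * L k - 1 - (L k - 1)) = T k + r + 1 := by omega
        rw [harg] at this
        exact this
      rw [e1, e2, hreq]
      have hcr := cc_blk_range (show L k - 1 < L k by omega)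
      have hwr := ww_blk_range (show L k - 1 < L k by omega)
      simp only [NN] at hwr
      omega
    · rcases lt_or_ge (r+1) (2 * L k) with hC | hD
      · -- two w slots
        set i1 := 2 * L k - 1 - r with hi1
        have hi1L : i1 < L k := by omega
        have hi1pos : 1 ≤ i1 := by omega
        rw [ht]
        have e1 : aa (T k + r) = ww (P k + i1) := by
          have := aa_w (k := k) (i := i1) hi1L
          have harg : 2 * L k - 1 - i1 = r := by omega
          rw [harg] at this
          exact this
        have e2 : aa (T k + r + 1) = ww (P k + (i1 - 1)) := by
          have := aa_w (k := k) (i := i1 - 1) (by omega)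
          have harg : T k + (2 * L k - 1 - (i1 - 1)) = T k + r + 1 := by omega
          rw [harg] at this
          exact this
        rw [e1, e2]
        have hg := cc_gap' (show i1 - 1 < L k by omega) hi1L (by omega)
        have hw1 := ww_blk_range hi1L
        have hw2 := ww_blk_range (show i1 - 1 < L k by omega)
        have hc1 := cc_blk_range hi1L
        have hc2 := cc_blk_range (show i1 - 1 < L k by omega)
        simp only [NN] at hw1 hw2
        omega
      · -- last w slot to next block first c slot
        have hreq : r = 2 * L k - 1 := by omega
        rw [ht]
        have e1 : aa (T k + r) = ww (P k) := by
          have := aa_w (k := k) (i := 0) (by omega)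
          have harg : 2 * L k - 1 - 0 = r := by omega
          rw [harg, Nat.add_zero] at this
          exact this
        have e2 : aa (T k + r + 1) = cc (P (k+1)) := by
          have := aa_c (k := k+1) (i := 0) (L_pos (k+1))
          have harg : T (k+1) + 0 = T k + r + 1 := by
            rw [T_succ]
            omega
          rw [harg, Nat.add_zero] at this
          exact this
        rw [e1, e2]
        have hw := ww_blk_range (k := k) (i := 0) hL
        have hc0 := cc_blk_range (k := k) (i := 0) hL
        have hc1 := cc_blk_range (k := k+1) (i := 0) (L_pos (k+1))
        simp only [Nat.add_zero] at hw hc0 hc1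
        rw [Lsucc_cube] at hc1
        simp only [NN] at hw
        omega

lemma bb_lt_succ (t : ℕ) : bb t < bb (t + 1) := by
  set k := blkT t with hk
  set r := t - T k with hr
  have hL := L_pos k
  have hE : L k ≤ (L k)^3 := L_le_cube k
  have h0 := T_blkT_le t
  rw [← hk] at h0
  have ht : t = T k + r := by omega
  have hr2 := slot_lt t
  rw [← hk] at hr2
  rw [← hr] at hr2
  rcases lt_or_ge (r+1) (L k) with hA | hBCD
  · rw [ht]
    have e1 := bb_c (show r < L k by omega)
    have e2 : bb (T k + r + 1) = cc (P k + (r+1)) := by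
      have := bb_c (k := k) (i := r+1) hA
      rw [← Nat.add_assoc] at this
      exact this
    rw [e1, e2]
    have := cc_gap' (show r < L k by omega) hA (by omega)
    omega
  · rcases lt_or_ge r (L k) with hB | hCD
    · have hreq : r = L k - 1 := by omega
      rw [ht]
      have e1 := bb_c (show r < L k by omega)
      have e2 : bb (T k + r + 1) = NN k - cc (P k + (L k - 1)) := by
        have := bb_w (k := k) (i := L k - 1) (by omega)
        have harg : T k + (2 * L k - 1 - (L k - 1)) = T k + r + 1 := by omega
        rw [harg] at this
        exact this
      rw [e1, e2, hreq]
      have hcr := cc_blk_range (show L k - 1 < L k by omega)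
      simp only [NN]
      omega
    · rcases lt_or_ge (r+1) (2 * L k) with hC | hD
      · set i1 := 2 * L k - 1 - r with hi1
        have hi1L : i1 < L k := by omega
        have hi1pos : 1 ≤ i1 := by omega
        rw [ht]
        have e1 : bb (T k + r) = NN k - cc (P k + i1) := by
          have := bb_w (k := k) (i := i1) hi1L
          have harg : 2 * L k - 1 - i1 = r := by omega
          rw [harg] at this
          exact this
        have e2 : bb (T k + r + 1) = NN k - cc (P k + (i1 - 1)) := by
          have := bb_w (k := k) (i := i1 - 1) (by omega)
          have harg : T k + (2 * L k - 1 - (i1 - 1)) = T k + r + 1 := by omega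
          rw [harg] at this
          exact this
        rw [e1, e2]
        have hg := cc_gap' (show i1 - 1 < L k by omega) hi1L (by omega)
        have hc1 := cc_blk_range hi1L
        have hc2 := cc_blk_range (show i1 - 1 < L k by omega)
        simp only [NN]
        omega
      · have hreq : r = 2 * L k - 1 := by omega
        rw [ht]
        have e1 : bb (T k + r) = NN k - cc (P k) := by
          have := bb_w (k := k) (i := 0) (by omega)
          have harg : 2 * L k - 1 - 0 = r := by omega
          rw [harg, Nat.add_zero] at this
          exact this
        have e2 : bb (T k + r + 1) = cc (P (k+1)) := by
          have := bb_c (k := k+1) (i := 0) (L_pos (k+1))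
          have harg : T (k+1) + 0 = T k + r + 1 := by
            rw [T_succ]
            omega
          rw [harg, Nat.add_zero] at this
          exact this
        rw [e1, e2]
        have hc0 := cc_blk_range (k := k) (i := 0) hL
        have hc1 := cc_blk_range (k := k+1) (i := 0) (L_pos (k+1))
        simp only [Nat.add_zero] at hc0 hc1
        rw [Lsucc_cube] at hc1
        simp only [NN]
        omega

lemma aa_mono : StrictMono aa := strictMono_nat_of_lt_succ aa_lt_succ
lemma bb_mono : StrictMono bb := strictMono_nat_of_lt_succ bb_lt_succ

end S10
namespace S10
open Finset

lemma aa_in_SS (t : ℕ) : ∃ s, aa t = cc s ∨ aa t = ww s := by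
  rw [aa]
  split
  · exact ⟨_, Or.inl rfl⟩
  · exact ⟨_, Or.inr rfl⟩

lemma aa_mem_SS {t sM : ℕ} {s : ℕ} (h : aa t = cc s ∨ aa t = ww s) (hs : s < sM) :
    aa t ∈ SS sM := mem_SS.mpr ⟨s, hs, h⟩

lemma Rf_aa (n : ℕ) : Rf aa n ≤ 1 := by
  rw [Rf]
  refine Finset.card_le_one.mpr ?_
  rintro ⟨i1, j1⟩ hp ⟨i2, j2⟩ hq
  simp only [Finset.mem_filter, Finset.mem_product, Finset.mem_range] at hp hq
  obtain ⟨-, hle1, hsum1⟩ := hp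
  obtain ⟨-, hle2, hsum2⟩ := hq
  obtain ⟨s1, h1⟩ := aa_in_SS i1
  obtain ⟨s2, h2⟩ := aa_in_SS j1
  obtain ⟨s3, h3⟩ := aa_in_SS i2
  obtain ⟨s4, h4⟩ := aa_in_SS j2
  set sM := max (max s1 s2) (max s3 s4) + 1 with hsM
  have m1 : aa i1 ∈ SS sM := aa_mem_SS h1 (by omega)
  have m2 : aa j1 ∈ SS sM := aa_mem_SS h2 (by omega)
  have m3 : aa i2 ∈ SS sM := aa_mem_SS h3 (by omega)
  have m4 : aa j2 ∈ SS sM := aa_mem_SS h4 (by omega)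
  have hsd := sidon_SS sM _ m1 _ m2 _ m3 _ m4 (hsum1.trans hsum2.symm)
  have hinj := aa_mono.injective
  simp only [Prod.mk.injEq]
  rcases hsd with ⟨e1, e2⟩ | ⟨e1, e2⟩
  · exact ⟨hinj e1, hinj e2⟩
  · have ha : i1 = j2 := hinj e1
    have hb : j1 = i2 := hinj e2
    omega

lemma aa_slot (t : ℕ) :
    (t - T (blkT t) < L (blkT t) ∧
      aa t = cc (P (blkT t) + (t - T (blkT t))) ∧ bb t = aa t) ∨
    (∃ i < L (blkT t),
      aa t = ww (P (blkT t) + i) ∧ bb t = NN (blkT t) - cc (P (blkT t) + i)) := by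
  have hs := slot_lt t
  rcases lt_or_ge (t - T (blkT t)) (L (blkT t)) with h | h
  · left
    refine ⟨h, ?_, ?_⟩
    · rw [aa, if_pos h]
    · rw [aa, bb, if_pos h, if_pos h]
  · right
    refine ⟨2 * L (blkT t) - 1 - (t - T (blkT t)), by omega, ?_, ?_⟩
    · rw [aa, if_neg (by omega)]
    · rw [bb, if_neg (by omega)]

lemma aa_ge (t : ℕ) : 1000 * (L (blkT t))^3 ≤ aa t ∧ 1000 * (L (blkT t))^3 ≤ bb t := by
  rcases aa_slot t with ⟨h, ha, hb⟩ | ⟨i, hi, ha, hb⟩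
  · have := cc_blk_range h
    rw [← ha] at this
    rw [hb]
    omega
  · have hw := ww_blk_range hi
    have hcr := cc_blk_range hi
    rw [← ha] at hw
    rw [hb]
    simp only [NN] at *
    omega

lemma dist_ab (t : ℕ) : Nat.dist (aa t) (bb t) ≤ 20 * L (blkT t) := by
  rcases aa_slot t with ⟨h, ha, hb⟩ | ⟨i, hi, ha, hb⟩
  · rw [hb, Nat.dist_self]
    omega
  · have hw := ww_blk_range hi
    rw [← ha] at hw
    rw [hb]
    have : Nat.dist (aa t) (NN (blkT t) - cc (P (blkT t) + i)) =
        aa t - (NN (blkT t) - cc (P (blkT t) + i)) +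
        ((NN (blkT t) - cc (P (blkT t) + i)) - aa t) := rfl
    rw [this]
    omega

lemma cast_cube_rpow (m : ℕ) : ((m:ℝ)^(3:ℕ))^((1:ℝ)/3) = (m:ℝ) := by
  rw [← Real.rpow_natCast (m:ℝ) 3, ← Real.rpow_mul (Nat.cast_nonneg m)]
  norm_num

lemma cube_root_le {m x : ℕ} (h : m^3 ≤ x) : (m:ℝ) ≤ (x:ℝ)^((1:ℝ)/3) := by
  have h2 : ((m:ℝ)^(3:ℕ)) ≤ (x:ℝ) := by
    have : ((m^3 : ℕ) : ℝ) ≤ ((x : ℕ) : ℝ) := Nat.cast_le.mpr h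
    push_cast at this
    exact_mod_cast this
  calc (m:ℝ) = ((m:ℝ)^(3:ℕ))^((1:ℝ)/3) := (cast_cube_rpow m).symm
    _ ≤ (x:ℝ)^((1:ℝ)/3) :=
        Real.rpow_le_rpow (by positivity) h2 (by norm_num)

lemma cube_root_ge {m x : ℕ} (h : x ≤ m^3) : (x:ℝ)^((1:ℝ)/3) ≤ (m:ℝ) := by
  have h2 : (x:ℝ) ≤ ((m:ℝ)^(3:ℕ)) := by
    have : ((x : ℕ) : ℝ) ≤ ((m^3 : ℕ) : ℝ) := Nat.cast_le.mpr h
    push_cast at this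
    exact_mod_cast this
  calc (x:ℝ)^((1:ℝ)/3) ≤ ((m:ℝ)^(3:ℕ))^((1:ℝ)/3) :=
        Real.rpow_le_rpow (Nat.cast_nonneg x) h2 (by norm_num)
    _ = (m:ℝ) := cast_cube_rpow m

lemma df_bound (n : ℕ) : (df aa bb n : ℝ) ≤ 2 * (n:ℝ)^((1:ℝ)/3) := by
  have hnn : (0:ℝ) ≤ (n:ℝ)^((1:ℝ)/3) := Real.rpow_nonneg (Nat.cast_nonneg n) _
  rw [df]
  obtain ⟨t0, ht0, hts⟩ := Finset.exists_mem_eq_sup (Finset.range (n+1))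
    ⟨0, Finset.mem_range.mpr (by omega)⟩
    (fun t => if aa t ≤ n ∨ bb t ≤ n then Nat.dist (aa t) (bb t) else 0)
  rw [hts]
  by_cases hcond : aa t0 ≤ n ∨ bb t0 ≤ n
  · rw [if_pos hcond]
    have h1 := dist_ab t0
    have h2 := aa_ge t0
    have h3 : (10 * L (blkT t0))^3 ≤ n := by
      have hx : (10 * L (blkT t0))^3 = 1000 * (L (blkT t0))^3 := by ring
      rw [hx]
      rcases hcond with h | h
      · omega
      · omega
    have h4 := cube_root_le h3
    have h5 : (Nat.dist (aa t0) (bb t0) : ℝ) ≤ (20 * L (blkT t0) : ℕ) :=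
      Nat.cast_le.mpr h1
    calc (Nat.dist (aa t0) (bb t0) : ℝ) ≤ ((20 * L (blkT t0) : ℕ) : ℝ) := h5
      _ = 2 * ((10 * L (blkT t0) : ℕ) : ℝ) := by push_cast; ring
      _ ≤ 2 * (n:ℝ)^((1:ℝ)/3) := by linarith
  · rw [if_neg hcond]
    simp
    positivity

lemma exists_K (n : ℕ) : ∃ k, n < NN (k + 1) := by
  refine ⟨n, ?_⟩
  have h1 : n < 64^(n+1) := by
    calc n < 64^n := Nat.lt_pow_self (by norm_num)
      _ ≤ 64^(n+1) := Nat.pow_le_pow_right (by norm_num) (by omega)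
  have : (L (n+1))^3 = 64^(n+1) := LL (n+1)
  simp only [NN]
  nlinarith [this]

def KK (n : ℕ) : ℕ := Nat.find (exists_K n)

lemma KK_spec (n : ℕ) : n < NN (KK n + 1) := Nat.find_spec (exists_K n)

lemma KK_le {n : ℕ} (hn : 8000 ≤ n) : NN (KK n) ≤ n := by
  rcases h : KK n with _ | k
  · simp only [NN, L]
    norm_num
    omega
  · have hk : k < KK n := by omega
    have h2 := Nat.find_min (exists_K n) hk
    push_neg at h2
    exact h2

lemma Rf_bb (κ : ℕ) : L κ ≤ Rf bb (NN κ) := by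
  have hL := L_pos κ
  have hE : L κ ≤ (L κ)^3 := L_le_cube κ
  have h3P : 3 * P κ + 1 = L κ := by rw [L]; exact threeP κ
  rw [Rf]
  set I := (Finset.range (L κ)).image
    (fun i => (T κ + i, T κ + (2 * L κ - 1 - i))) with hI
  have hTb : T κ = 2 * P κ := rfl
  have hsub : I ⊆ (Finset.range (NN κ + 1) ×ˢ Finset.range (NN κ + 1)).filter
      (fun p => p.1 ≤ p.2 ∧ bb p.1 + bb p.2 = NN κ) := by
    intro p hp
    rw [hI, Finset.mem_image] at hp
    obtain ⟨i, hi, rfl⟩ := hp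
    rw [Finset.mem_range] at hi
    have hb1 : bb (T κ + i) = cc (P κ + i) := bb_c hi
    have hb2 : bb (T κ + (2 * L κ - 1 - i)) = NN κ - cc (P κ + i) := bb_w hi
    have hcr := cc_blk_range hi
    simp only [Finset.mem_filter, Finset.mem_product, Finset.mem_range]
    refine ⟨⟨?_, ?_⟩, ?_, ?_⟩
    · simp only [NN] at *; omega
    · simp only [NN] at *; omega
    · omega
    · rw [hb1, hb2]
      simp only [NN] at *
      omega
  have hinj : Set.InjOn (fun i => (T κ + i, T κ + (2 * L κ - 1 - i)))
      (Finset.range (L κ)) := by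
    intro a _ b _ hab
    have := congrArg Prod.fst hab
    simp only at this
    omega
  calc L κ = (Finset.range (L κ)).card := (Finset.card_range _).symm
    _ = I.card := (Finset.card_image_of_injOn hinj).symm
    _ ≤ _ := Finset.card_le_card hsub

lemma sf_bound {n : ℕ} (hn : 8000 ≤ n) :
    (1/80 : ℝ) * (n:ℝ)^((1:ℝ)/3) ≤ (sf bb n : ℝ) := by
  set κ := KK n with hκ
  have h1 : NN κ ≤ n := KK_le hn
  have h2 : n < NN (κ + 1) := KK_spec n
  have hsf : L κ ≤ sf bb n := by
    refine le_trans (Rf_bb κ) ?_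
    rw [sf]
    exact Finset.le_sup (Finset.mem_range.mpr (by omega))
  have hm : n ≤ (20 * L (κ+1))^3 := by
    have : (20 * L (κ+1))^3 = 8000 * (L (κ+1))^3 := by ring
    rw [this]
    simp only [NN] at h2
    omega
  have h4 := cube_root_ge hm
  have h5 : ((20 * L (κ+1) : ℕ) : ℝ) = 80 * ((L κ : ℕ) : ℝ) := by
    have : L (κ+1) = 4 * L κ := by rw [L, L, pow_succ]; ring
    rw [this]
    push_cast
    ring
  rw [h5] at h4
  have h6 : ((L κ : ℕ) : ℝ) ≤ (sf bb n : ℝ) := Nat.cast_le.mpr hsf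
  linarith

end S10


theorem stmt10 :
    ∃ a b : ℕ → ℕ, StrictMono a ∧ StrictMono b ∧
      (∀ n, Rf a n ≤ 1) ∧
      (∃ C : ℝ, ∀ᶠ n : ℕ in atTop, (df a b n : ℝ) ≤ C * (n : ℝ) ^ ((1 : ℝ) / 3)) ∧
      (∃ c : ℝ, 0 < c ∧ ∀ᶠ n : ℕ in atTop, c * (n : ℝ) ^ ((1 : ℝ) / 3) ≤ (sf b n : ℝ)) := by
  refine ⟨S10.aa, S10.bb, S10.aa_mono, S10.bb_mono, S10.Rf_aa, ⟨2, ?_⟩, ⟨1/80, by norm_num, ?_⟩⟩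
  · exact Filter.Eventually.of_forall S10.df_bound
  · rw [Filter.eventually_atTop]
    exact ⟨8000, fun n hn => S10.sf_bound hn⟩
end
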